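/- arXiv:1805.08491 — 11 statements merged into one kernel-verified Lean document; each statement's English description precedes it below -/
import Mathlib

section
/- Let 𝔤 be an n-dimensional real nilpotent Lie algebra with a nice basis, structure constants c_{ijk}, index set I_Δ and root matrix M_Δ. Then every derivation of 𝔤 has trace zero if and only if the all-ones vector (1,…,1) ∈ ℝⁿ lies in the real span of the rows of M_Δ (equivalently, of the columns of the transpose of M_Δ). -/
open scoped BigOperators

/-- The bilinear bracket on `Fin n → ℝ` determined by structure constants `c`. -/
def bracket {n : ℕ} (c : Fin n → Fin n → Fin n → ℝ) (x y : Fin n → ℝ) : Fin n → ℝ :=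
  fun k => ∑ i, ∑ j, x i * y j * c i j k

/-- `c` is the family of structure constants of a nilpotent Lie algebra for which
the standard basis of `Fin n → ℝ` is a nice basis. -/
structure IsNiceNilpotent {n : ℕ} (c : Fin n → Fin n → Fin n → ℝ) : Prop where
  skew : ∀ i j k, c i j k = - c j i k
  jacobi : ∀ x y z : Fin n → ℝ,
    bracket c (bracket c x y) z + bracket c (bracket c y z) x + bracket c (bracket c z x) y = 0
  nilpotent : ∃ N : ℕ, ∀ (v : Fin N → Fin n → ℝ) (w : Fin n → ℝ),
    (List.ofFn v).foldr (bracket c) w = 0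
  nice_k : ∀ i j k k', c i j k ≠ 0 → c i j k' ≠ 0 → k = k'
  nice_j : ∀ i j j' k, c i j k ≠ 0 → c i j' k ≠ 0 → j = j'

/-- Entry `h` of the row of the root matrix indexed by a bracket `[e i, e j] = c i j k • e k`:
the row vector `- eⁱ - eʲ + eᵏ`. -/
def rootRow {n : ℕ} (i j k h : Fin n) : ℤ :=
  (if k = h then 1 else 0) - (if i = h then 1 else 0) - (if j = h then 1 else 0)

/-- The mod 2 reduction of the root matrix entries. -/
def rootRow2 {n : ℕ} (i j k h : Fin n) : ZMod 2 := ((rootRow i j k h : ℤ) : ZMod 2)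

/-- The Ricci operator of the scalar product with matrix `g` in the nice basis,
`ric_h^k = ¼ g^{im} g^{lp} g_{hq} c_{ilk} c_{mpq} − ½ g^{km} g^{jp} g_{iq} c_{hji} c_{mpq}`. -/
noncomputable def Ric {n : ℕ} (c : Fin n → Fin n → Fin n → ℝ)
    (g : Matrix (Fin n) (Fin n) ℝ) : Matrix (Fin n) (Fin n) ℝ :=
  Matrix.of fun h k =>
    (1/4 : ℝ) * (∑ i, ∑ m, ∑ l, ∑ p, ∑ q,
        g⁻¹ i m * g⁻¹ l p * g h q * c i l k * c m p q)
    - (1/2 : ℝ) * (∑ m, ∑ j, ∑ p, ∑ i, ∑ q,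
        g⁻¹ k m * g⁻¹ j p * g i q * c h j i * c m p q)

/-- Condition (E): the Ricci operator equals `½ id`. -/
def EinsteinE {n : ℕ} (c : Fin n → Fin n → Fin n → ℝ)
    (g : Matrix (Fin n) (Fin n) ℝ) : Prop :=
  Ric c g = (1/2 : ℝ) • (1 : Matrix (Fin n) (Fin n) ℝ)

/-- The matrix of the `σ`-diagonal bilinear form `∑ᵢ gᵢ eⁱ ⊗ e^{σ i}`. -/
def sigmaDiag {n : ℕ} (σ : Equiv.Perm (Fin n)) (gv : Fin n → ℝ) :
    Matrix (Fin n) (Fin n) ℝ :=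
  Matrix.of fun i j => if σ i = j then gv i else 0

/-- `σ` is a diagram involution: it squares to the identity and preserves the
set of nonzero structure constants. -/
def IsDiagramInvolution {n : ℕ} (c : Fin n → Fin n → Fin n → ℝ)
    (σ : Equiv.Perm (Fin n)) : Prop :=
  (∀ i, σ (σ i) = i) ∧ ∀ i j k, c i j k ≠ 0 → c (σ i) (σ j) (σ k) ≠ 0

/-- The mod 2 root matrix `M_{Δ,2}` is surjective: every vector indexed by the brackets
`I_Δ` is of the form `M_{Δ,2} s`. -/
def SurjectiveType {n : ℕ} (c : Fin n → Fin n → Fin n → ℝ) : Prop :=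
  ∀ y : Fin n → Fin n → Fin n → ZMod 2, ∃ s : Fin n → ZMod 2,
    ∀ i j k, i < j → c i j k ≠ 0 → y i j k = ∑ h, rootRow2 i j k h * s h

namespace NiceAux

variable {n : ℕ} {c : Fin n → Fin n → Fin n → ℝ}

def ee (i : Fin n) : Fin n → ℝ := fun a => if i = a then 1 else 0

lemma bracket_ee (i j : Fin n) : bracket c (ee i) (ee j) = fun k => c i j k := by
  funext k
  unfold bracket ee
  rw [Finset.sum_eq_single i]
  · rw [Finset.sum_eq_single j]
    · simp
    · intro b _ hb; simp [Ne.symm hb]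
    · simp
  · intro a _ ha
    apply Finset.sum_eq_zero; intro b _; simp [Ne.symm ha]
  · simp

lemma mulVec_ee (D : Matrix (Fin n) (Fin n) ℝ) (i : Fin n) :
    D.mulVec (ee i) = fun a => D a i := by
  funext a
  simp [Matrix.mulVec, dotProduct, ee, mul_ite, Finset.sum_ite_eq]

lemma diag_rel (hc : IsNiceNilpotent c) (D : Matrix (Fin n) (Fin n) ℝ)
    (hD : ∀ x y : Fin n → ℝ,
      D.mulVec (bracket c x y) = bracket c (D.mulVec x) y + bracket c x (D.mulVec y))
    {i j k : Fin n} (h : c i j k ≠ 0) : D k k = D i i + D j j := by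
  have heq := hD (ee i) (ee j)
  rw [bracket_ee, mulVec_ee, mulVec_ee] at heq
  have heqk := congrFun heq k
  have hL : D.mulVec (fun m => c i j m) k = D k k * c i j k := by
    show ∑ m, D k m * c i j m = _
    rw [Finset.sum_eq_single k]
    · intro m _ hm
      have : c i j m = 0 := by
        by_contra hcm; exact hm (hc.nice_k i j m k hcm h)
      simp [this]
    · simp
  have hR1 : bracket c (fun a => D a i) (ee j) k = D i i * c i j k := by
    unfold bracket ee
    have inner : ∀ a : Fin n, (∑ b, D a i * (if j = b then (1:ℝ) else 0) * c a b k)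
        = D a i * c a j k := by
      intro a
      rw [Finset.sum_eq_single j]
      · simp
      · intro b _ hb; simp [Ne.symm hb]
      · simp
    simp only [inner]
    rw [Finset.sum_eq_single i]
    · intro a _ ha
      have : c a j k = 0 := by
        by_contra hca
        have h1 : c j a k ≠ 0 := by rw [hc.skew j a k]; simpa using hca
        have h2 : c j i k ≠ 0 := by rw [hc.skew j i k]; simpa using h
        exact ha (hc.nice_j j a i k h1 h2)
      simp [this]
    · simp
  have hR2 : bracket c (ee i) (fun a => D a j) k = D j j * c i j k := by
    unfold bracket ee
    have inner : ∀ a : Fin n, (∑ b, (if i = a then (1:ℝ) else 0) * D b j * c a b k)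
        = if i = a then ∑ b, D b j * c a b k else 0 := by
      intro a
      by_cases hia : i = a <;> simp [hia]
    simp only [inner]
    rw [Finset.sum_ite_eq]
    simp only [Finset.mem_univ, if_true]
    rw [Finset.sum_eq_single j]
    · intro b _ hb
      have : c i b k = 0 := by
        by_contra hcb
        exact hb (hc.nice_j i b j k hcb h)
      simp [this]
    · simp
  rw [hL, Pi.add_apply, hR1, hR2] at heqk
  have := mul_right_cancel₀ h (by rw [heqk]; ring : D k k * c i j k = (D i i + D j j) * c i j k)
  exact this

lemma diag_deriv (hc : IsNiceNilpotent c) (s : Fin n → ℝ)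
    (hs : ∀ i j k : Fin n, i < j → c i j k ≠ 0 → s k = s i + s j) :
    ∀ x y : Fin n → ℝ,
      (Matrix.diagonal s).mulVec (bracket c x y)
        = bracket c ((Matrix.diagonal s).mulVec x) y
          + bracket c x ((Matrix.diagonal s).mulVec y) := by
  have hs' : ∀ i j k : Fin n, c i j k ≠ 0 → s k = s i + s j := by
    intro i j k h
    rcases lt_trichotomy i j with hij | rfl | hij
    · exact hs i j k hij h
    · exfalso; apply h
      have := hc.skew i i k
      linarith
    · have h' : c j i k ≠ 0 := by rw [hc.skew j i k]; simpa using h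
      rw [hs j i k hij h']; ring
  intro x y
  funext k
  show (Matrix.diagonal s).mulVec (bracket c x y) k
      = bracket c _ y k + bracket c x _ k
  rw [Matrix.mulVec_diagonal]
  unfold bracket
  rw [Finset.mul_sum, ← Finset.sum_add_distrib]
  refine Finset.sum_congr rfl fun i _ => ?_
  rw [Finset.mul_sum, ← Finset.sum_add_distrib]
  refine Finset.sum_congr rfl fun j _ => ?_
  rw [Matrix.mulVec_diagonal, Matrix.mulVec_diagonal]
  by_cases h : c i j k = 0
  · simp [h]
  · rw [hs' i j k h] ; ring


lemma rootRow_dot (s : Fin n → ℝ) (i j k : Fin n) :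
    ∑ h, ((rootRow i j k h : ℤ) : ℝ) * s h = s k - s i - s j := by
  simp [rootRow, sub_mul, ite_mul, Finset.sum_sub_distrib, Finset.sum_ite_eq]

lemma f_apply (f : (Fin n → ℝ) →ₗ[ℝ] ℝ) (v : Fin n → ℝ) :
    f v = ∑ h, v h * f (ee h) := by
  rw [LinearMap.pi_apply_eq_sum_univ]
  simp only [smul_eq_mul]
  rfl

end NiceAux

/-- Every derivation of a nice nilpotent Lie algebra is traceless if and only if the
all-ones vector lies in the real span of the rows of the root matrix. -/
theorem derivations_traceless_iff_ones_in_rowSpan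
    (n : ℕ) (c : Fin n → Fin n → Fin n → ℝ) (hc : IsNiceNilpotent c) :
    (∀ D : Matrix (Fin n) (Fin n) ℝ,
        (∀ x y : Fin n → ℝ,
          D.mulVec (bracket c x y) = bracket c (D.mulVec x) y + bracket c x (D.mulVec y)) →
        D.trace = 0) ↔
      (fun _ : Fin n => (1 : ℝ)) ∈
        Submodule.span ℝ {r : Fin n → ℝ |
          ∃ i j k : Fin n, i < j ∧ c i j k ≠ 0 ∧ r = fun h => ((rootRow i j k h : ℤ) : ℝ)} := by
  constructor
  · intro hall
    by_contra hmem
    obtain ⟨f, hf1, hf2⟩ := Submodule.exists_dual_map_eq_bot_of_notMem hmem inferInstance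
    set s : Fin n → ℝ := fun h => f (NiceAux.ee h) with hsdef
    have hker : ∀ r ∈ Submodule.span ℝ {r : Fin n → ℝ |
        ∃ i j k : Fin n, i < j ∧ c i j k ≠ 0 ∧ r = fun h => ((rootRow i j k h : ℤ) : ℝ)},
        f r = 0 := by
      intro r hr
      have hm : f r ∈ Submodule.map f _ := Submodule.mem_map_of_mem hr
      rw [hf2] at hm
      simpa using hm
    have hrow : ∀ i j k : Fin n, i < j → c i j k ≠ 0 → s k = s i + s j := by
      intro i j k hij hcc
      have hr := hker _ (Submodule.subset_span ⟨i, j, k, hij, hcc, rfl⟩)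
      rw [NiceAux.f_apply, NiceAux.rootRow_dot] at hr
      have : s k - s i - s j = 0 := hr
      linarith
    have htr := hall (Matrix.diagonal s) (NiceAux.diag_deriv hc s hrow)
    rw [Matrix.trace_diagonal] at htr
    apply hf1
    rw [NiceAux.f_apply]
    simpa using htr
  · intro hmem D hD
    set f : (Fin n → ℝ) →ₗ[ℝ] ℝ := ∑ h, D h h • LinearMap.proj h with hfdef
    have hfv : ∀ v : Fin n → ℝ, f v = ∑ h, v h * D h h := by
      intro v
      simp [hfdef, LinearMap.sum_apply, mul_comm]
    have hle : Submodule.span ℝ {r : Fin n → ℝ |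
        ∃ i j k : Fin n, i < j ∧ c i j k ≠ 0 ∧ r = fun h => ((rootRow i j k h : ℤ) : ℝ)}
          ≤ LinearMap.ker f := by
      rw [Submodule.span_le]
      rintro r ⟨i, j, k, _, hcc, rfl⟩
      have h3 := NiceAux.diag_rel hc D hD hcc
      simp only [SetLike.mem_coe, LinearMap.mem_ker]
      rw [hfv, NiceAux.rootRow_dot]
      linarith
    have hone : f (fun _ => (1 : ℝ)) = 0 := hle hmem
    rw [hfv] at hone
    simpa [Matrix.trace, Matrix.diag] using hone
end

section
/- Let 𝔤 be an n-dimensional real nilpotent Lie algebra with a nice basis, structure constants c_I (I ∈ I_Δ), root matrix M_Δ, and let σ be a diagram involution. Then 𝔤 admits a σ-diagonal metric satisfying condition (E) (ric = ½ id) if and only if there exist a vector X = (x_I) ∈ ℝ^{I_Δ} and nonzero reals g₁,…,gₙ such that: (i) M_Δᵀ X = (1,…,1) ∈ ℝⁿ; (ii) x_I/(c_I c̃_I) = g_k/(g_i g_j) for every I = {{i,j},k} ∈ I_Δ; (iii) g_{σ(i)} = g_i for all i. Moreover, when (i)–(iii) hold, the metric g = ∑ᵢ gᵢ eⁱ⊗e^{σ(i)}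 itself satisfies ric = ½ id. -/
open scoped BigOperators

lemma sigmaDiag_mul' {n : ℕ} (σ : Equiv.Perm (Fin n)) (gv : Fin n → ℝ)
    (hgv : ∀ i, gv i ≠ 0) (hsym : ∀ i, gv (σ i) = gv i) (hinv : ∀ i, σ (σ i) = i) :
    sigmaDiag σ gv * sigmaDiag σ (fun i => (gv i)⁻¹) = 1 := by
  ext i k
  simp only [Matrix.mul_apply, sigmaDiag, Matrix.of_apply, ite_mul, zero_mul,
    Finset.sum_ite_eq, Finset.mem_univ, if_true, hinv, hsym, Matrix.one_apply]
  by_cases h : i = k <;> simp [h, mul_inv_cancel₀ (hgv k)]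

lemma sigmaDiag_inv {n : ℕ} (σ : Equiv.Perm (Fin n)) (gv : Fin n → ℝ)
    (hgv : ∀ i, gv i ≠ 0) (hsym : ∀ i, gv (σ i) = gv i) (hinv : ∀ i, σ (σ i) = i) :
    (sigmaDiag σ gv)⁻¹ = sigmaDiag σ (fun i => (gv i)⁻¹) :=
  Matrix.inv_eq_right_inv (sigmaDiag_mul' σ gv hgv hsym hinv)

lemma ric_entry {n : ℕ} (c : Fin n → Fin n → Fin n → ℝ) (σ : Equiv.Perm (Fin n))
    (gv : Fin n → ℝ)
    (hgv : ∀ i, gv i ≠ 0) (hsym : ∀ i, gv (σ i) = gv i) (hinv : ∀ i, σ (σ i) = i)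
    (h k : Fin n) :
    Ric c (sigmaDiag σ gv) h k =
      (1/4 : ℝ) * (∑ i, ∑ l, (gv i)⁻¹ * (gv l)⁻¹ * gv h * c i l k * c (σ i) (σ l) (σ h))
      - (1/2 : ℝ) * (∑ j, ∑ i, (gv k)⁻¹ * (gv j)⁻¹ * gv i * c h j i * c (σ k) (σ j) (σ i)) := by
  rw [Ric, sigmaDiag_inv σ gv hgv hsym hinv]
  simp only [Matrix.of_apply, sigmaDiag, ite_mul, zero_mul, mul_ite, mul_zero,
    Finset.sum_ite_irrel, Finset.sum_const_zero, Finset.sum_ite_eq,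
    Finset.mem_univ, if_true]

/-- The symmetrized coefficient `Y_{ijk} = c_{ijk} c̃_{ijk} g_k / (g_i g_j)`. -/
noncomputable def Yc {n : ℕ} (c : Fin n → Fin n → Fin n → ℝ) (σ : Equiv.Perm (Fin n))
    (gv : Fin n → ℝ) (i j k : Fin n) : ℝ :=
  c i j k * c (σ i) (σ j) (σ k) * (gv k * ((gv i)⁻¹ * (gv j)⁻¹))

lemma ric_eq {n : ℕ} (c : Fin n → Fin n → Fin n → ℝ) (hc : IsNiceNilpotent c)
    (σ : Equiv.Perm (Fin n)) (hσ : IsDiagramInvolution c σ) (gv : Fin n → ℝ)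
    (hgv : ∀ i, gv i ≠ 0) (hsym : ∀ i, gv (σ i) = gv i) (h k : Fin n) :
    Ric c (sigmaDiag σ gv) h k =
      if h = k then
        (1/4 : ℝ) * (∑ i, ∑ l, Yc c σ gv i l k)
          - (1/2 : ℝ) * (∑ j, ∑ i, Yc c σ gv k j i)
      else 0 := by
  rw [ric_entry c σ gv hgv hsym hσ.1 h k]
  by_cases hhk : h = k
  · subst hhk
    simp only [if_true]
    congr 1
    · congr 1
      refine Finset.sum_congr rfl fun i _ => Finset.sum_congr rfl fun l _ => ?_
      rw [Yc]; ring
    · congr 1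
      refine Finset.sum_congr rfl fun j _ => Finset.sum_congr rfl fun i _ => ?_
      rw [Yc]; ring
  · rw [if_neg hhk]
    have hA : ∀ i l : Fin n,
        (gv i)⁻¹ * (gv l)⁻¹ * gv h * c i l k * c (σ i) (σ l) (σ h) = 0 := by
      intro i l
      by_cases h1 : c i l k = 0
      · simp [h1]
      by_cases h2 : c (σ i) (σ l) (σ h) = 0
      · simp [h2]
      exfalso
      have h3 := hσ.2 _ _ _ h2
      rw [hσ.1, hσ.1, hσ.1] at h3
      exact hhk (hc.nice_k i l h k h3 h1)
    have hB : ∀ j i : Fin n,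
        (gv k)⁻¹ * (gv j)⁻¹ * gv i * c h j i * c (σ k) (σ j) (σ i) = 0 := by
      intro j i
      by_cases h1 : c h j i = 0
      · simp [h1]
      by_cases h2 : c (σ k) (σ j) (σ i) = 0
      · simp [h2]
      exfalso
      have h3 := hσ.2 _ _ _ h2
      rw [hσ.1, hσ.1, hσ.1] at h3
      have h1' : c j h i ≠ 0 := by rw [hc.skew j h i]; simpa using h1
      have h3' : c j k i ≠ 0 := by rw [hc.skew j k i]; simpa using h3
      exact hhk (hc.nice_j j h k i h1' h3')
    simp only [hA, hB, Finset.sum_const_zero, mul_zero, sub_zero]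

lemma Yc_eq_X {n : ℕ} (c : Fin n → Fin n → Fin n → ℝ) (hc : IsNiceNilpotent c)
    (σ : Equiv.Perm (Fin n)) (gv : Fin n → ℝ) (hgv : ∀ i, gv i ≠ 0)
    (X : Fin n → Fin n → Fin n → ℝ)
    (hX0 : ∀ i j k : Fin n, ¬(i < j ∧ c i j k ≠ 0) → X i j k = 0)
    (hX2 : ∀ i j k : Fin n, i < j → c i j k ≠ 0 →
      X i j k * (gv i * gv j) = c i j k * c (σ i) (σ j) (σ k) * gv k) :
    ∀ i j k, Yc c σ gv i j k = X i j k + X j i k := by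
  have key : ∀ i j k : Fin n, i < j → Yc c σ gv i j k = X i j k := by
    intro i j k hij
    by_cases hcz : c i j k = 0
    · rw [hX0 i j k (by tauto), Yc, hcz]; ring
    · have h2 := hX2 i j k hij hcz
      rw [Yc]
      have hi := hgv i; have hj := hgv j
      field_simp at h2 ⊢
      linarith [h2]
  have Ysymm : ∀ i j k : Fin n, Yc c σ gv i j k = Yc c σ gv j i k := by
    intro i j k
    rw [Yc, Yc, hc.skew i j k, hc.skew (σ i) (σ j) (σ k)]
    ring
  intro i j k
  rcases lt_trichotomy i j with hij | hij | hij
  · rw [key i j k hij, hX0 j i k (by simp [not_lt_of_gt hij]), add_zero]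
  · subst hij
    have hz : c i i k = 0 := by have := hc.skew i i k; linarith
    rw [hX0 i i k (by simp [hz]), Yc, hz]
    ring
  · rw [Ysymm, key j i k hij, hX0 i j k (by simp [not_lt_of_gt hij]), zero_add]

lemma rootRow_sum {n : ℕ} (X : Fin n → Fin n → Fin n → ℝ) (k : Fin n) :
    (∑ i, ∑ j, ∑ l, X i j l * ((rootRow i j l k : ℤ) : ℝ))
    = (∑ i, ∑ j, X i j k) - (∑ j, ∑ l, X k j l) - (∑ i, ∑ l, X i k l) := by
  simp only [rootRow, Int.cast_sub, Int.cast_ite, Int.cast_one, Int.cast_zero,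
    mul_sub, mul_ite, mul_one, mul_zero, Finset.sum_sub_distrib,
    Finset.sum_ite_irrel, Finset.sum_const_zero, Finset.sum_ite_eq',
    Finset.mem_univ, if_true]

lemma einstein_iff_sum {n : ℕ} (c : Fin n → Fin n → Fin n → ℝ) (hc : IsNiceNilpotent c)
    (σ : Equiv.Perm (Fin n)) (hσ : IsDiagramInvolution c σ) (gv : Fin n → ℝ)
    (hgv : ∀ i, gv i ≠ 0) (hsym : ∀ i, gv (σ i) = gv i)
    (X : Fin n → Fin n → Fin n → ℝ)
    (hX0 : ∀ i j k : Fin n, ¬(i < j ∧ c i j k ≠ 0) → X i j k = 0)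
    (hX2 : ∀ i j k : Fin n, i < j → c i j k ≠ 0 →
      X i j k * (gv i * gv j) = c i j k * c (σ i) (σ j) (σ k) * gv k) :
    EinsteinE c (sigmaDiag σ gv) ↔
      ∀ h : Fin n, (∑ i, ∑ j, ∑ k, X i j k * ((rootRow i j k h : ℤ) : ℝ)) = 1 := by
  have hY := Yc_eq_X c hc σ gv hgv X hX0 hX2
  have hric : ∀ h k : Fin n, Ric c (sigmaDiag σ gv) h k =
      if h = k then (1/2 : ℝ) * (∑ i, ∑ j, ∑ l, X i j l * ((rootRow i j l k : ℤ) : ℝ))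
      else 0 := by
    intro h k
    rw [ric_eq c hc σ hσ gv hgv hsym h k]
    by_cases hhk : h = k
    · rw [if_pos hhk, if_pos hhk, rootRow_sum]
      have e1 : (∑ i, ∑ l, Yc c σ gv i l k)
          = (∑ i, ∑ l, X i l k) + (∑ i, ∑ l, X l i k) := by
        simp only [hY, Finset.sum_add_distrib]
      have e2 : (∑ i : Fin n, ∑ l : Fin n, X l i k) = ∑ i : Fin n, ∑ l : Fin n, X i l k :=
        Finset.sum_comm
      have e3 : (∑ j, ∑ i, Yc c σ gv k j i)
          = (∑ j, ∑ i, X k j i) + (∑ j, ∑ i, X j k i) := by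
        simp only [hY, Finset.sum_add_distrib]
      rw [e1, e2, e3]
      ring
    · rw [if_neg hhk, if_neg hhk]
  constructor
  · intro hE h
    have := congrFun (congrFun hE h) h
    rw [hric h h, if_pos rfl] at this
    have h2 : ((1/2 : ℝ) • (1 : Matrix (Fin n) (Fin n) ℝ)) h h = (1/2 : ℝ) := by
      simp [Matrix.one_apply]
    rw [h2] at this
    linarith
  · intro hs
    ext h k
    rw [Matrix.smul_apply, Matrix.one_apply, hric h k]
    by_cases hhk : h = k
    · rw [if_pos hhk, if_pos hhk, hs, mul_one]; simp
    · rw [if_neg hhk, if_neg hhk, smul_zero]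

/-- Theorem (σ-diagonal Einstein metrics): a nice nilpotent Lie algebra admits a
σ-diagonal metric satisfying (E) `ric = ½ id` iff there are `X = (x_I)` and nonzero
`g₁,…,gₙ` with (i) `M_Δᵀ X = (1,…,1)`, (ii) `x_I/(c_I * c̃_I) = g_k/(g_i * g_j)` for all
`I = {{i,j},k} ∈ I_Δ`, and (iii) `g ∘ σ = g`.  Moreover, whenever (i)–(iii) hold,
the metric `∑ᵢ gᵢ eⁱ ⊗ e^(σ i)` itself satisfies (E). -/
theorem sigmaDiagonal_einstein_iff
    (n : ℕ) (c : Fin n → Fin n → Fin n → ℝ) (hc : IsNiceNilpotent c)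
    (σ : Equiv.Perm (Fin n)) (hσ : IsDiagramInvolution c σ) :
    ((∃ gv : Fin n → ℝ, (∀ i, gv i ≠ 0) ∧ (∀ i, gv (σ i) = gv i) ∧
        EinsteinE c (sigmaDiag σ gv)) ↔
      (∃ (X : Fin n → Fin n → Fin n → ℝ) (gv : Fin n → ℝ),
        (∀ i j k : Fin n, ¬(i < j ∧ c i j k ≠ 0) → X i j k = 0) ∧
        (∀ h : Fin n, (∑ i, ∑ j, ∑ k, X i j k * ((rootRow i j k h : ℤ) : ℝ)) = 1) ∧
        (∀ i, gv i ≠ 0) ∧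
        (∀ i j k : Fin n, i < j → c i j k ≠ 0 →
          X i j k * (gv i * gv j) = c i j k * c (σ i) (σ j) (σ k) * gv k) ∧
        (∀ i, gv (σ i) = gv i))) ∧
    (∀ (X : Fin n → Fin n → Fin n → ℝ) (gv : Fin n → ℝ),
        (∀ i j k : Fin n, ¬(i < j ∧ c i j k ≠ 0) → X i j k = 0) →
        (∀ h : Fin n, (∑ i, ∑ j, ∑ k, X i j k * ((rootRow i j k h : ℤ) : ℝ)) = 1) →
        (∀ i, gv i ≠ 0) →
        (∀ i j k : Fin n, i < j → c i j k ≠ 0 →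
          X i j k * (gv i * gv j) = c i j k * c (σ i) (σ j) (σ k) * gv k) →
        (∀ i, gv (σ i) = gv i) →
        EinsteinE c (sigmaDiag σ gv)) := by
  constructor
  · constructor
    · rintro ⟨gv, hgv, hsym, hE⟩
      classical
      set X : Fin n → Fin n → Fin n → ℝ := fun i j k =>
        if i < j ∧ c i j k ≠ 0 then
          c i j k * c (σ i) (σ j) (σ k) * gv k / (gv i * gv j) else 0 with hXdef
      have hX0 : ∀ i j k : Fin n, ¬(i < j ∧ c i j k ≠ 0) → X i j k = 0 := by
        intro i j k h
        simp only [hXdef, if_neg h]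
      have hX2 : ∀ i j k : Fin n, i < j → c i j k ≠ 0 →
          X i j k * (gv i * gv j) = c i j k * c (σ i) (σ j) (σ k) * gv k := by
        intro i j k hij hcz
        simp only [hXdef, if_pos (And.intro hij hcz)]
        rw [div_mul_cancel₀]
        exact mul_ne_zero (hgv i) (hgv j)
      refine ⟨X, gv, hX0, ?_, hgv, hX2, hsym⟩
      exact (einstein_iff_sum c hc σ hσ gv hgv hsym X hX0 hX2).mp hE
    · rintro ⟨X, gv, hX0, h1, hgv, hX2, hsym⟩
      exact ⟨gv, hgv, hsym, (einstein_iff_sum c hc σ hσ gv hgv hsym X hX0 hX2).mpr h1⟩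
  · intro X gv hX0 h1 hgv hX2 hsym
    exact (einstein_iff_sum c hc σ hσ gv hgv hsym X hX0 hX2).mpr h1
end

section
/- Let 𝔤 be an n-dimensional real nilpotent Lie algebra with a nice basis, structure constants c_I, and let σ be a diagram involution. For any σ-diagonal metric g = ∑ᵢ gᵢ eⁱ⊗e^{σ(i)}, the Ricci operator is diagonal in the nice basis, and for each h one has 2·ric_h^h = ∑_{I={{i,j},k} ∈ I_Δ} x_I (δ_{hk} − δ_{hi} − δ_{hj}), where x_I = c_I c̃_I g_k/(g_i g_j); equivalently, the vector (2·ric_1^1, …, 2·ric_n^n) equals M_Δᵀ X. -/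
open scoped BigOperators

/-- For a σ-diagonal metric on a nice nilpotent Lie algebra, the Ricci operator is
diagonal in the nice basis and `2 ric_h^h = ∑_(I = {{i,j},k} ∈ I_Δ) x_I (δ_hk − δ_hi − δ_hj)`
with `x_I = c_I * c̃_I * g_k / (g_i * g_j)`; i.e. `(2 ric_1^1, …, 2 ric_n^n) = M_Δᵀ X`. -/
theorem sigmaDiagonal_ricci_diagonal
    (n : ℕ) (c : Fin n → Fin n → Fin n → ℝ) (hc : IsNiceNilpotent c)
    (σ : Equiv.Perm (Fin n)) (hσ : IsDiagramInvolution c σ)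
    (gv : Fin n → ℝ) (hgv : ∀ i, gv i ≠ 0) (hsym : ∀ i, gv (σ i) = gv i) :
    (∀ h k : Fin n, h ≠ k → Ric c (sigmaDiag σ gv) h k = 0) ∧
    (∀ h : Fin n, 2 * Ric c (sigmaDiag σ gv) h h =
      ∑ i, ∑ j, ∑ k,
        if i < j then
          c i j k * c (σ i) (σ j) (σ k) * gv k / (gv i * gv j) * ((rootRow i j k h : ℤ) : ℝ)
        else 0) := by

  obtain ⟨hσ1, hσ2⟩ := hσ
  -- inverse of the metric
  have hinv : (sigmaDiag σ gv)⁻¹ = sigmaDiag σ (fun i => (gv i)⁻¹) := by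
    apply Matrix.inv_eq_right_inv
    ext i k
    simp only [Matrix.mul_apply, sigmaDiag, Matrix.of_apply, Matrix.one_apply,
      ite_mul, zero_mul, mul_ite, mul_zero]
    rw [Finset.sum_eq_single (σ i)]
    · simp only [hσ1, hsym]
      by_cases h : i = k
      · simp [h, mul_inv_cancel₀ (hgv k)]
      · simp [h, Ne.symm h]
    · intro b _ hb
      simp [Ne.symm hb]
    · simp
  -- collapsed Ricci
  have hRic : ∀ h k : Fin n, Ric c (sigmaDiag σ gv) h k =
      (1/4 : ℝ) * (∑ i, ∑ l, (gv i)⁻¹ * (gv l)⁻¹ * gv h * (c i l k * c (σ i) (σ l) (σ h)))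
      - (1/2 : ℝ) * (∑ j, ∑ i, (gv k)⁻¹ * (gv j)⁻¹ * gv i * (c h j i * c (σ k) (σ j) (σ i))) := by
    intro h k
    rw [Ric]
    simp only [Matrix.of_apply, hinv]
    simp only [sigmaDiag, Matrix.of_apply, ite_mul, zero_mul, mul_ite, mul_zero,
      Finset.sum_ite_irrel, Finset.sum_const_zero, Finset.sum_ite_eq, Finset.mem_univ, if_true]
    ring_nf
    rw [add_comm]; congr 2; apply Finset.sum_congr rfl; intro i _; apply Finset.sum_congr rfl; intro l _; ring
  have hczz : ∀ i k, c i i k = 0 := by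
    intro i k
    have := hc.skew i i k
    linarith
  -- preservation both ways
  have hpres : ∀ i j k, c (σ i) (σ j) (σ k) ≠ 0 → c i j k ≠ 0 := by
    intro i j k hne
    have := hσ2 _ _ _ hne
    simpa [hσ1] using this
  constructor
  · -- off-diagonal vanishing
    intro h k hne
    rw [hRic]
    have e1 : (∑ i, ∑ l, (gv i)⁻¹ * (gv l)⁻¹ * gv h * (c i l k * c (σ i) (σ l) (σ h))) = 0 := by
      apply Finset.sum_eq_zero; intro i _
      apply Finset.sum_eq_zero; intro l _
      by_cases h1 : c i l k = 0
      · simp [h1]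
      by_cases h2 : c (σ i) (σ l) (σ h) = 0
      · simp [h2]
      exact absurd ((hc.nice_k i l k h h1 (hpres _ _ _ h2)).symm) hne
    have e2 : (∑ j, ∑ i, (gv k)⁻¹ * (gv j)⁻¹ * gv i * (c h j i * c (σ k) (σ j) (σ i))) = 0 := by
      apply Finset.sum_eq_zero; intro j _
      apply Finset.sum_eq_zero; intro i _
      by_cases h1 : c h j i = 0
      · simp [h1]
      by_cases h2 : c (σ k) (σ j) (σ i) = 0
      · simp [h2]
      have hk : c k j i ≠ 0 := hpres _ _ _ h2
      have h1' : c j h i ≠ 0 := by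
        rw [hc.skew j h i]; simpa using h1
      have hk' : c j k i ≠ 0 := by
        rw [hc.skew j k i]; simpa using hk
      exact absurd (hc.nice_j j h k i h1' hk') hne
    rw [e1, e2]
    ring
  · -- diagonal formula
    intro h
    set T : Fin n → Fin n → Fin n → ℝ :=
      fun i j k => c i j k * c (σ i) (σ j) (σ k) * gv k / (gv i * gv j) with hT
    have hTswap : ∀ i j k, T j i k = T i j k := by
      intro i j k
      simp only [hT]
      rw [hc.skew j i k, hc.skew (σ j) (σ i) (σ k)]
      ring
    have hTzero : ∀ i k, T i i k = 0 := by
      intro i k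
      simp [hT, hczz]
    -- rewrite the collapsed Ricci summands as T
    have hRic2 : Ric c (sigmaDiag σ gv) h h =
        (1/4 : ℝ) * (∑ i, ∑ l, T i l h) - (1/2 : ℝ) * (∑ j, ∑ i, T h j i) := by
      rw [hRic h h]
      congr 2
      · apply Finset.sum_congr rfl; intro i _
        apply Finset.sum_congr rfl; intro l _
        simp only [hT]
        field_simp
      · apply Finset.sum_congr rfl; intro j _
        apply Finset.sum_congr rfl; intro i _
        simp only [hT]
        field_simp
    -- symmetric sum is twice the ordered sum
    have hA : (∑ i, ∑ l, T i l h) = 2 * ∑ i, ∑ l, (if i < l then T i l h else 0) := by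
      have split : ∀ i l : Fin n,
          T i l h = (if i < l then T i l h else 0) + (if l < i then T i l h else 0) := by
        intro i l
        rcases lt_trichotomy i l with h1 | h1 | h1
        · simp [h1, not_lt.2 h1.le]
        · simp [h1, hTzero]
        · simp [h1, not_lt.2 h1.le]
      calc (∑ i, ∑ l, T i l h)
          = ∑ i, ∑ l, ((if i < l then T i l h else 0) + (if l < i then T i l h else 0)) := by
            exact Finset.sum_congr rfl fun i _ => Finset.sum_congr rfl fun l _ => split i l
        _ = (∑ i, ∑ l, (if i < l then T i l h else 0))
            + (∑ i, ∑ l, (if l < i then T i l h else 0)) := by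
            simp [Finset.sum_add_distrib]
        _ = 2 * ∑ i, ∑ l, (if i < l then T i l h else 0) := by
            rw [Finset.sum_comm (f := fun i l => (if l < i then T i l h else 0))]
            have : (∑ l, ∑ i, (if l < i then T i l h else 0))
                = ∑ l, ∑ i, (if l < i then T l i h else 0) := by
              apply Finset.sum_congr rfl; intro l _
              apply Finset.sum_congr rfl; intro i _
              by_cases hli : l < i
              · simp [hli, hTswap]
              · simp [hli]
            rw [this]; ring
    have hB : (∑ j, ∑ i, T h j i)
        = (∑ j, ∑ i, (if h < j then T h j i else 0))
          + (∑ j, ∑ i, (if j < h then T h j i else 0)) := by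
      rw [← Finset.sum_add_distrib]
      apply Finset.sum_congr rfl; intro j _
      rw [← Finset.sum_add_distrib]
      apply Finset.sum_congr rfl; intro i _
      rcases lt_trichotomy h j with h1 | h1 | h1
      · simp [h1, not_lt.2 h1.le]
      · simp [← h1, hTzero, lt_irrefl]
      · simp [h1, not_lt.2 h1.le]
    -- now compute the RHS
    have hRHS : (∑ i, ∑ j, ∑ k,
        if i < j then
          c i j k * c (σ i) (σ j) (σ k) * gv k / (gv i * gv j) * ((rootRow i j k h : ℤ) : ℝ)
        else 0)
        = (∑ i, ∑ j, (if i < j then T i j h else 0))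
          - (∑ j, ∑ i, (if h < j then T h j i else 0))
          - (∑ j, ∑ i, (if j < h then T h j i else 0)) := by
      have step1 : ∀ i j k : Fin n,
          (if i < j then
            c i j k * c (σ i) (σ j) (σ k) * gv k / (gv i * gv j) * ((rootRow i j k h : ℤ) : ℝ)
          else 0)
          = (if i < j then (if k = h then T i j k else 0) else 0)
            - (if i < j then (if i = h then T i j k else 0) else 0)
            - (if i < j then (if j = h then T i j k else 0) else 0) := by
        intro i j k
        by_cases hij : i < j
        · simp only [hij, if_true, rootRow, hT]
          push_cast
          split_ifs <;> ring
        · simp [hij]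
      calc (∑ i, ∑ j, ∑ k,
          if i < j then
            c i j k * c (σ i) (σ j) (σ k) * gv k / (gv i * gv j) * ((rootRow i j k h : ℤ) : ℝ)
          else 0)
          = (∑ i, ∑ j, ∑ k, (if i < j then (if k = h then T i j k else 0) else 0))
            - (∑ i, ∑ j, ∑ k, (if i < j then (if i = h then T i j k else 0) else 0))
            - (∑ i, ∑ j, ∑ k, (if i < j then (if j = h then T i j k else 0) else 0)) := by
            simp only [step1, Finset.sum_sub_distrib]
        _ = (∑ i, ∑ j, (if i < j then T i j h else 0))
            - (∑ j, ∑ i, (if h < j then T h j i else 0))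
            - (∑ j, ∑ i, (if j < h then T h j i else 0)) := by
            congr 1
            congr 1
            · -- first sum: collapse k = h
              apply Finset.sum_congr rfl; intro i _
              apply Finset.sum_congr rfl; intro j _
              rw [Finset.sum_ite_irrel]
              simp [Finset.sum_ite_eq']
            · -- second sum: collapse i = h
              have swap : ∀ i j k : Fin n,
                  (if i < j then (if i = h then T i j k else 0) else 0)
                  = (if i = h then (if i < j then T i j k else 0) else 0) := by
                intro i j k; split_ifs <;> rfl
              simp only [swap, Finset.sum_ite_irrel, Finset.sum_const_zero,
                Finset.sum_ite_eq', Finset.mem_univ, if_true]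
            · -- third sum: collapse j = h, then swap names
              have swap : ∀ i j k : Fin n,
                  (if i < j then (if j = h then T i j k else 0) else 0)
                  = (if j = h then (if i < j then T i j k else 0) else 0) := by
                intro i j k; split_ifs <;> rfl
              simp only [swap, Finset.sum_ite_irrel, Finset.sum_const_zero,
                Finset.sum_ite_eq', Finset.mem_univ, if_true]
              apply Finset.sum_congr rfl; intro i _
              by_cases hih : i < h
              · simp only [hih, if_true]
                apply Finset.sum_congr rfl; intro k _
                rw [hTswap]
              · simp [hih]
    rw [hRHS, hRic2, hA, hB]
    ring
end

section
/- Let 𝔤 be an n-dimensional real nilpotent Lie algebra with a nice basis, structure constants c_I, and root matrix M_Δ. If 𝔤 admits a diagonal metric satisfying condition (E) (ric = ½ id), then there exists a vector X = (x_I) ∈ ℝ^{I_Δ} such that: (K) M_Δᵀ X = (1,…,1) ∈ ℝⁿ; (H) x_I ≠ 0 for every I ∈ I_Δ; (L) the vector (logsign x_I) ∈ (ℤ/2)^{I_Δ} lies in the image of M_{Δ,2} acting on (ℤ/2)ⁿ. -/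
open scoped BigOperators

/-- `logsign x` is `0` for positive and `1` for negative reals. -/
noncomputable def logsign (x : ℝ) : ZMod 2 := if 0 < x then 0 else 1

lemma logsign_mul {a b : ℝ} (ha : a ≠ 0) (hb : b ≠ 0) :
    logsign (a * b) = logsign a + logsign b := by
  unfold logsign
  rcases ha.lt_or_gt with h | h <;> rcases hb.lt_or_gt with h' | h'
  · rw [if_pos (mul_pos_of_neg_of_neg h h'), if_neg (not_lt.2 h.le), if_neg (not_lt.2 h'.le)]
    decide
  · rw [if_neg (mul_neg_of_neg_of_pos h h').not_gt, if_neg (not_lt.2 h.le), if_pos h']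
    decide
  · rw [if_neg (mul_neg_of_pos_of_neg h h').not_gt, if_pos h, if_neg (not_lt.2 h'.le)]
    decide
  · rw [if_pos (mul_pos h h'), if_pos h, if_pos h']
    decide

lemma logsign_inv (a : ℝ) : logsign a⁻¹ = logsign a := by
  simp [logsign, inv_pos]

lemma ric_diag (n : ℕ) (c : Fin n → Fin n → Fin n → ℝ) (gv : Fin n → ℝ)
    (hgv : ∀ i, gv i ≠ 0) (h : Fin n) :
    Ric c (Matrix.diagonal gv) h h =
      (1/4 : ℝ) * (∑ i, ∑ l, (gv i)⁻¹ * (gv l)⁻¹ * gv h * c i l h * c i l h)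
      - (1/2 : ℝ) * (∑ j, ∑ i, (gv h)⁻¹ * (gv j)⁻¹ * gv i * c h j i * c h j i) := by
  have hinv : (Matrix.diagonal gv)⁻¹ = Matrix.diagonal (fun i => (gv i)⁻¹) := by
    apply Matrix.inv_eq_right_inv
    rw [Matrix.diagonal_mul_diagonal]
    convert Matrix.diagonal_one with i
    exact mul_inv_cancel₀ (hgv i)
  simp only [Ric, Matrix.of_apply, hinv, Matrix.diagonal_apply, ite_mul, mul_ite,
    zero_mul, mul_zero, Finset.sum_ite_irrel, Finset.sum_const_zero,
    Finset.sum_ite_eq, Finset.sum_ite_eq', Finset.mem_univ, if_true]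

/-- Necessary conditions: if a nice nilpotent Lie algebra admits a diagonal metric with
`ric = ½ id`, then some `X = (x_I)` satisfies (K) `M_Δᵀ X = (1,…,1)`, (H) `x_I ≠ 0` for
all `I ∈ I_Δ`, and (L) `(logsign x_I)` lies in the image of the mod 2 root matrix. -/
theorem diagonal_einstein_necessary_conditions
    (n : ℕ) (c : Fin n → Fin n → Fin n → ℝ) (hc : IsNiceNilpotent c)
    (gv : Fin n → ℝ) (hgv : ∀ i, gv i ≠ 0)
    (hE : EinsteinE c (Matrix.diagonal gv)) :
    ∃ X : Fin n → Fin n → Fin n → ℝ,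
      (∀ i j k : Fin n, ¬(i < j ∧ c i j k ≠ 0) → X i j k = 0) ∧
      (∀ h : Fin n, (∑ i, ∑ j, ∑ k, X i j k * ((rootRow i j k h : ℤ) : ℝ)) = 1) ∧
      (∀ i j k : Fin n, i < j → c i j k ≠ 0 → X i j k ≠ 0) ∧
      (∃ s : Fin n → ZMod 2, ∀ i j k : Fin n, i < j → c i j k ≠ 0 →
        logsign (X i j k) = ∑ h, rootRow2 i j k h * s h) := by

  classical
  set Y : Fin n → Fin n → Fin n → ℝ :=
    fun i j k => (c i j k)^2 * gv k * (gv i)⁻¹ * (gv j)⁻¹ with hY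
  set X : Fin n → Fin n → Fin n → ℝ :=
    fun i j k => if i < j then Y i j k else 0 with hXdef
  have hYswap : ∀ i j k, Y j i k = Y i j k := by
    intro i j k
    have : c j i k = - c i j k := by rw [hc.skew i j k]; ring
    simp only [hY, this]; ring
  have hYdiag : ∀ i k, Y i i k = 0 := by
    intro i k
    have h0 : c i i k = 0 := by have := hc.skew i i k; linarith
    simp [hY, h0]
  have hXY : ∀ i j k, X i j k + X j i k = Y i j k := by
    intro i j k
    rcases lt_trichotomy i j with hij | hij | hij
    · simp [hXdef, hij, not_lt.2 hij.le]
    · subst hij; simp [hXdef, hYdiag]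
    · simp [hXdef, hij, not_lt.2 hij.le, hYswap]
  have key : ∀ h : Fin n,
      (∑ i, ∑ j, X i j h) - (∑ j, ∑ k, X h j k) - (∑ i, ∑ k, X i h k) = 1 := by
    intro h
    have hE' : Ric c (Matrix.diagonal gv) h h = 1/2 := by
      rw [hE]; simp [Matrix.one_apply]
    rw [ric_diag n c gv hgv h] at hE'
    have hA : (∑ i, ∑ l, (gv i)⁻¹ * (gv l)⁻¹ * gv h * c i l h * c i l h)
        = 2 * ∑ i, ∑ j, X i j h := by
      have e1 : (∑ i, ∑ l, (gv i)⁻¹ * (gv l)⁻¹ * gv h * c i l h * c i l h)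
          = ∑ i, ∑ l, Y i l h := by
        apply Finset.sum_congr rfl; intro i _
        apply Finset.sum_congr rfl; intro l _
        simp only [hY]; ring
      have e2 : (∑ i : Fin n, ∑ l : Fin n, Y i l h)
          = (∑ i, ∑ l, X i l h) + ∑ i, ∑ l, X l i h := by
        rw [← Finset.sum_add_distrib]
        apply Finset.sum_congr rfl; intro i _
        rw [← Finset.sum_add_distrib]
        exact Finset.sum_congr rfl fun l _ => (hXY i l h).symm
      have e3 : (∑ i : Fin n, ∑ l : Fin n, X l i h) = ∑ i, ∑ l, X i l h :=
        Finset.sum_comm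
      rw [e1, e2, e3]; ring
    have hB : (∑ j, ∑ i, (gv h)⁻¹ * (gv j)⁻¹ * gv i * c h j i * c h j i)
        = (∑ j, ∑ k, X h j k) + (∑ i, ∑ k, X i h k) := by
      have e1 : (∑ j, ∑ i, (gv h)⁻¹ * (gv j)⁻¹ * gv i * c h j i * c h j i)
          = ∑ j, ∑ i, Y h j i := by
        apply Finset.sum_congr rfl; intro j _
        apply Finset.sum_congr rfl; intro i _
        simp only [hY]; ring
      have e2 : (∑ j : Fin n, ∑ i : Fin n, Y h j i)
          = (∑ j, ∑ i, X h j i) + ∑ j, ∑ i, X j h i := by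
        rw [← Finset.sum_add_distrib]
        apply Finset.sum_congr rfl; intro j _
        rw [← Finset.sum_add_distrib]
        exact Finset.sum_congr rfl fun i _ => (hXY h j i).symm
      rw [e1, e2]
    rw [hA, hB] at hE'
    linarith
  refine ⟨X, ?_, ?_, ?_, ?_⟩
  · intro i j k hnot
    by_cases hij : i < j
    · have hcz : c i j k = 0 := by
        by_contra hcc; exact hnot ⟨hij, hcc⟩
      simp [hXdef, hij, hY, hcz]
    · simp [hXdef, hij]
  · intro h
    have expand : (∑ i, ∑ j, ∑ k, X i j k * ((rootRow i j k h : ℤ) : ℝ))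
        = (∑ i, ∑ j, X i j h) - (∑ j, ∑ k, X h j k) - (∑ i, ∑ k, X i h k) := by
      have step : ∀ i j k : Fin n, X i j k * ((rootRow i j k h : ℤ) : ℝ)
          = (if k = h then X i j k else 0) - (if i = h then X i j k else 0)
            - (if j = h then X i j k else 0) := by
        intro i j k
        simp only [rootRow]
        push_cast
        by_cases h1 : k = h <;> by_cases h2 : i = h <;> by_cases h3 : j = h <;>
          simp [h1, h2, h3] <;> ring
      simp only [step, Finset.sum_sub_distrib, Finset.sum_ite_irrel,
        Finset.sum_const_zero, Finset.sum_ite_eq', Finset.mem_univ, if_true]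
    rw [expand, key h]
  · intro i j k hij hcc
    have hne : Y i j k ≠ 0 := by
      simp only [hY]
      exact mul_ne_zero (mul_ne_zero (mul_ne_zero (pow_ne_zero 2 hcc) (hgv k))
        (inv_ne_zero (hgv i))) (inv_ne_zero (hgv j))
    simp [hXdef, hij, hne]
  · refine ⟨fun h => logsign (gv h), ?_⟩
    intro i j k hij hcc
    have hx : X i j k = (c i j k)^2 * gv k * (gv i)⁻¹ * (gv j)⁻¹ := by
      simp [hXdef, hij, hY]
    have hc2 : (c i j k)^2 ≠ 0 := pow_ne_zero 2 hcc
    have hls : logsign (X i j k) = logsign (gv k) + logsign (gv i) + logsign (gv j) := by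
      rw [hx, logsign_mul (mul_ne_zero (mul_ne_zero hc2 (hgv k)) (inv_ne_zero (hgv i)))
          (inv_ne_zero (hgv j)),
        logsign_mul (mul_ne_zero hc2 (hgv k)) (inv_ne_zero (hgv i)),
        logsign_mul hc2 (hgv k), logsign_inv, logsign_inv]
      have h2 : logsign ((c i j k)^2) = 0 := by
        have : (0:ℝ) < (c i j k)^2 := by
          rcases hcc.lt_or_gt with h | h
          · positivity
          · positivity
        simp [logsign, this]
      rw [h2]; ring
    have hrow : ∀ h : Fin n, rootRow2 i j k h
        = (if k = h then 1 else 0) + (if i = h then 1 else 0)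
          + (if j = h then 1 else 0) := by
      intro h
      by_cases h1 : k = h <;> by_cases h2 : i = h <;> by_cases h3 : j = h <;>
        simp [rootRow2, rootRow, h1, h2, h3] <;> decide
    rw [hls]
    simp only [hrow, add_mul, ite_mul, one_mul, zero_mul, Finset.sum_add_distrib,
      Finset.sum_ite_eq, Finset.mem_univ, if_true]
end

section
/- Let 𝔤 be an n-dimensional real nilpotent Lie algebra with a nice basis, structure constants c_I, and root matrix M_Δ. If the mod-2 root matrix M_{Δ,2} is surjective as a linear map (ℤ/2)ⁿ → (ℤ/2)^{I_Δ}, and there exists a vector X = (x_I) ∈ ℝ^{I_Δ} with M_Δᵀ X = (1,…,1) and x_I ≠ 0 for every I ∈ I_Δ, then 𝔤 admits a diagonal metric satisfying condition (E) (ric = ½ id). -/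
open scoped BigOperators

/-! ### Auxiliary lemmas -/

lemma sum_rootRow_real {n : ℕ} (u : Fin n → ℝ) (i j k : Fin n) :
    ∑ h, ((rootRow i j k h : ℤ) : ℝ) * u h = u k - u i - u j := by
  simp only [rootRow]
  push_cast
  simp [sub_mul, ite_mul, one_mul, zero_mul, Finset.sum_sub_distrib,
    Finset.sum_ite_eq', Finset.mem_univ]

lemma sum_rootRow2 {n : ℕ} (s : Fin n → ZMod 2) (i j k : Fin n) :
    ∑ h, rootRow2 i j k h * s h = s i + s j + s k := by
  simp only [rootRow2, rootRow]
  push_cast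
  simp only [sub_mul, ite_mul, one_mul, zero_mul, Finset.sum_sub_distrib,
    Finset.sum_ite_eq, Finset.sum_ite_eq', Finset.mem_univ, if_true]
  rw [CharTwo.sub_eq_add, CharTwo.sub_eq_add]
  ring

lemma exists_real_solution {n : ℕ} (c : Fin n → Fin n → Fin n → ℝ)
    (hsurj : SurjectiveType c) (b : Fin n → Fin n → Fin n → ℝ) :
    ∃ u : Fin n → ℝ, ∀ i j k : Fin n, i < j → c i j k ≠ 0 →
      ∑ h, ((rootRow i j k h : ℤ) : ℝ) * u h = b i j k := by
  classical
  set S : Finset (Fin n × Fin n × Fin n) :=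
    Finset.univ.filter (fun p => p.1 < p.2.1 ∧ c p.1 p.2.1 p.2.2 ≠ 0) with hS
  let T := {p : Fin n × Fin n × Fin n // p ∈ S}
  have hpick : ∀ I : T, ∃ s : Fin n → ZMod 2,
      ∀ i j k, i < j → c i j k ≠ 0 →
        (if (i,j,k) = I.1 then (1 : ZMod 2) else 0) = ∑ h, rootRow2 i j k h * s h :=
    fun I => hsurj (fun i j k => if (i,j,k) = I.1 then 1 else 0)
  choose s hs using hpick
  let A : Matrix T (Fin n) ℤ := fun I h => rootRow I.1.1 I.1.2.1 I.1.2.2 h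
  let B : Matrix (Fin n) T ℤ := fun h I => ((s I h).val : ℤ)
  have hmat : (A * B).map (Int.cast : ℤ → ZMod 2) = 1 := by
    ext I I'
    have hmem := Finset.mem_filter.mp I.2
    have := hs I' I.1.1 I.1.2.1 I.1.2.2 hmem.2.1 hmem.2.2
    simp only [Matrix.map_apply, Matrix.mul_apply, Matrix.one_apply]
    have key : ((∑ h, A I h * B h I' : ℤ) : ZMod 2)
        = ∑ h, rootRow2 I.1.1 I.1.2.1 I.1.2.2 h * s I' h := by
      push_cast
      refine Finset.sum_congr rfl fun h _ => ?_
      congr 1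
      show (((s I' h).val : ℕ) : ZMod 2) = s I' h
      simp [ZMod.natCast_val, ZMod.cast_id]
    have heta : (I.1.1, I.1.2.1, I.1.2.2) = I.1 := rfl
    rw [key, ← this, heta]
    rcases eq_or_ne I I' with hII | hII
    · simp [hII]
    · rw [if_neg (fun hh => hII (Subtype.ext hh)), if_neg hII]
  have hdet2 : (((A * B).det : ℤ) : ZMod 2) = 1 := by
    calc (((A * B).det : ℤ) : ZMod 2)
        = ((A * B).map (Int.castRingHom (ZMod 2) : ℤ →+* ZMod 2)).det :=
          RingHom.map_det (Int.castRingHom (ZMod 2)) (A * B)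
      _ = 1 := by
          rw [show (A * B).map (Int.castRingHom (ZMod 2) : ℤ →+* ZMod 2) = 1 from hmat]
          exact Matrix.det_one
  have hdet : (A * B).det ≠ 0 := by
    intro h0
    rw [h0] at hdet2
    simp at hdet2
  let AR : Matrix T (Fin n) ℝ := A.map (Int.cast : ℤ → ℝ)
  let BR : Matrix (Fin n) T ℝ := B.map (Int.cast : ℤ → ℝ)
  have hMR : AR * BR = (A * B).map (Int.cast : ℤ → ℝ) :=
    (Matrix.map_mul (f := (Int.castRingHom ℝ))).symm
  have hdetR : (AR * BR).det ≠ 0 := by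
    rw [hMR]
    rw [show ((A * B).map (Int.cast : ℤ → ℝ)).det = (((A * B).det : ℤ) : ℝ) from
      (RingHom.map_det (Int.castRingHom ℝ) (A * B)).symm]
    exact_mod_cast hdet
  have hunit : IsUnit (AR * BR).det := isUnit_iff_ne_zero.mpr hdetR
  let bv : T → ℝ := fun I => b I.1.1 I.1.2.1 I.1.2.2
  refine ⟨BR.mulVec ((AR * BR)⁻¹.mulVec bv), ?_⟩
  intro i j k hij hcne
  have hmem : (i, j, k) ∈ S := by
    rw [hS, Finset.mem_filter]
    exact ⟨Finset.mem_univ _, hij, hcne⟩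
  have hAu : AR.mulVec (BR.mulVec ((AR * BR)⁻¹.mulVec bv)) = bv := by
    rw [Matrix.mulVec_mulVec, Matrix.mulVec_mulVec, Matrix.mul_nonsing_inv _ hunit,
      Matrix.one_mulVec]
  have := congrFun hAu ⟨(i, j, k), hmem⟩
  exact this

lemma Ric_diag_entry {n : ℕ} (c : Fin n → Fin n → Fin n → ℝ) (gv : Fin n → ℝ)
    (hgv : ∀ i, gv i ≠ 0) (h k : Fin n) :
    Ric c (Matrix.diagonal gv) h k =
    (1/4 : ℝ) * (∑ i, ∑ l, (gv i)⁻¹ * (gv l)⁻¹ * gv h * c i l k * c i l h)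
    - (1/2 : ℝ) * (∑ j, ∑ i, (gv k)⁻¹ * (gv j)⁻¹ * gv i * c h j i * c k j i) := by
  have hinv : (Matrix.diagonal gv)⁻¹ = Matrix.diagonal (fun i => (gv i)⁻¹) := by
    apply Matrix.inv_eq_right_inv
    rw [Matrix.diagonal_mul_diagonal]
    have : (fun i => gv i * (gv i)⁻¹) = fun _ => (1:ℝ) :=
      funext fun i => mul_inv_cancel₀ (hgv i)
    rw [this, Matrix.diagonal_one]
  simp only [Ric, Matrix.of_apply, hinv, Matrix.diagonal_apply, ite_mul, mul_ite,
    zero_mul, mul_zero, Finset.sum_ite_irrel, Finset.sum_ite_eq, Finset.sum_ite_eq',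
    Finset.sum_const_zero, Finset.mem_univ, if_true]

/-- Sufficient condition: if the mod 2 root matrix is surjective and `X` satisfies
(K) `M_Δᵀ X = (1,…,1)` with all `x_I ≠ 0` (`I ∈ I_Δ`), then the nice nilpotent Lie
algebra admits a diagonal metric satisfying (E) `ric = ½ id`. -/
theorem diagonal_einstein_of_surjective_type
    (n : ℕ) (c : Fin n → Fin n → Fin n → ℝ) (hc : IsNiceNilpotent c)
    (hsurj : SurjectiveType c)
    (X : Fin n → Fin n → Fin n → ℝ)
    (hsupp : ∀ i j k : Fin n, ¬(i < j ∧ c i j k ≠ 0) → X i j k = 0)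
    (hK : ∀ h : Fin n, (∑ i, ∑ j, ∑ k, X i j k * ((rootRow i j k h : ℤ) : ℝ)) = 1)
    (hH : ∀ i j k : Fin n, i < j → c i j k ≠ 0 → X i j k ≠ 0) :
    ∃ gv : Fin n → ℝ, (∀ i, gv i ≠ 0) ∧ EinsteinE c (Matrix.diagonal gv) := by
  classical
  have hskew0 : ∀ i k, c i i k = 0 := by
    intro i k
    have := hc.skew i i k
    linarith
  -- Step 1: solve for the signs
  obtain ⟨s, hs⟩ := hsurj (fun i j k => if 0 < X i j k then 0 else 1)
  set ε : Fin n → ℝ := fun h => if s h = 0 then 1 else -1 with hεdef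
  have hε1 : ∀ h, ε h = 1 ∨ ε h = -1 := by
    intro h
    rw [hεdef]
    by_cases hsh : s h = 0
    · left; simp [hsh]
    · right; simp [hsh]
  have hεne : ∀ h, ε h ≠ 0 := by
    intro h
    rcases hε1 h with h' | h' <;> rw [h'] <;> norm_num
  have hεsq : ∀ h, ε h * ε h = 1 := by
    intro h
    rcases hε1 h with h' | h' <;> rw [h'] <;> norm_num
  have hsign : ∀ i j k : Fin n, i < j → c i j k ≠ 0 → 0 < ε i * ε j * ε k * X i j k := by
    intro i j k hij hcne
    have hX := hH i j k hij hcne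
    have hrr : (if 0 < X i j k then (0:ZMod 2) else 1) = s i + s j + s k :=
      (hs i j k hij hcne).trans (sum_rootRow2 s i j k)
    have hc2 : ∀ a : ZMod 2, a = 0 ∨ a = 1 := by decide
    by_cases hpos : 0 < X i j k
    · rw [if_pos hpos] at hrr
      have hε : ε i * ε j * ε k = 1 := by
        rw [hεdef]
        rcases hc2 (s i) with h1 | h1 <;> rcases hc2 (s j) with h2 | h2 <;>
          rcases hc2 (s k) with h3 | h3 <;> rw [h1, h2, h3] at hrr <;>
          simp only [h1, h2, h3] <;>
          first
            | (exfalso; revert hrr; decide)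
            | norm_num
      rw [hε]
      linarith
    · have hneg : X i j k < 0 := lt_of_le_of_ne (not_lt.mp hpos) hX
      rw [if_neg hpos] at hrr
      have hε : ε i * ε j * ε k = -1 := by
        rw [hεdef]
        rcases hc2 (s i) with h1 | h1 <;> rcases hc2 (s j) with h2 | h2 <;>
          rcases hc2 (s k) with h3 | h3 <;> rw [h1, h2, h3] at hrr <;>
          simp only [h1, h2, h3] <;>
          first
            | (exfalso; revert hrr; decide)
            | norm_num
      rw [hε]
      nlinarith
  -- Step 2: solve for the magnitudes
  obtain ⟨u, hu⟩ := exists_real_solution c hsurj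
    (fun i j k => Real.log ((ε i * ε j * ε k * X i j k) / (c i j k * c i j k)))
  set t : Fin n → ℝ := fun h => Real.exp (u h) with htdef
  have ht : ∀ h, 0 < t h := fun h => Real.exp_pos _
  set gv : Fin n → ℝ := fun h => ε h * t h with hgvdef
  have hgv : ∀ h, gv h ≠ 0 := fun h => mul_ne_zero (hεne h) (ne_of_gt (ht h))
  have keyS : ∀ i j k : Fin n, i < j → c i j k ≠ 0 →
      c i j k * c i j k * gv k = X i j k * (gv i * gv j) := by
    intro i j k hij hcne
    have hc2pos : 0 < c i j k * c i j k := mul_self_pos.mpr hcne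
    have hPpos : 0 < (ε i * ε j * ε k * X i j k) / (c i j k * c i j k) :=
      div_pos (hsign i j k hij hcne) hc2pos
    have hexp : t k / (t i * t j) = (ε i * ε j * ε k * X i j k) / (c i j k * c i j k) := by
      have h1 := hu i j k hij hcne
      rw [sum_rootRow_real] at h1
      have h2 : Real.exp (u k - u i - u j)
          = Real.exp (Real.log ((ε i * ε j * ε k * X i j k) / (c i j k * c i j k))) := by
        rw [h1]
      rw [Real.exp_log hPpos] at h2
      rw [← h2, htdef]
      simp [Real.exp_sub, div_div]
    rw [div_eq_div_iff (ne_of_gt (mul_pos (ht i) (ht j))) (ne_of_gt hc2pos)] at hexp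
    calc c i j k * c i j k * gv k = ε k * (t k * (c i j k * c i j k)) := by
          rw [hgvdef]; ring
      _ = ε k * (ε i * ε j * ε k * X i j k * (t i * t j)) := by rw [hexp]
      _ = (ε k * ε k) * (X i j k * ((ε i * t i) * (ε j * t j))) := by ring
      _ = X i j k * (gv i * gv j) := by rw [hεsq k, one_mul]
  have P : ∀ i j k : Fin n, c i j k * c i j k * gv k
      = (X i j k + X j i k) * (gv i * gv j) := by
    intro i j k
    rcases lt_trichotomy i j with hij | hij | hij
    · have hX0 : X j i k = 0 :=
        hsupp j i k (fun hcon => absurd hcon.1 (not_lt_of_gt hij))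
      by_cases hcne : c i j k = 0
      · rw [hcne, hsupp i j k (fun hcon => hcon.2 hcne), hX0]; ring
      · rw [keyS i j k hij hcne, hX0]; ring
    · subst hij
      rw [hskew0, hsupp i i k (fun hcon => absurd hcon.1 (lt_irrefl i))]
      ring
    · have hsym : c i j k * c i j k = c j i k * c j i k := by
        rw [hc.skew i j k]; ring
      have hX0 : X i j k = 0 :=
        hsupp i j k (fun hcon => absurd hcon.1 (not_lt_of_gt hij))
      by_cases hcne : c j i k = 0
      · have hz : c i j k = 0 := by rw [hc.skew i j k, hcne]; ring
        rw [hz, hX0, hsupp j i k (fun hcon => hcon.2 hcne)]; ring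
      · rw [hsym, keyS j i k hij hcne, hX0]; ring
  refine ⟨gv, hgv, ?_⟩
  show Ric c (Matrix.diagonal gv) = (1/2 : ℝ) • (1 : Matrix (Fin n) (Fin n) ℝ)
  ext h k
  rw [Ric_diag_entry c gv hgv h k]
  rcases eq_or_ne h k with rfl | hhk
  · have e1 : ∀ i l : Fin n, (gv i)⁻¹ * (gv l)⁻¹ * gv h * c i l h * c i l h
        = X i l h + X l i h := by
      intro i l
      calc (gv i)⁻¹ * (gv l)⁻¹ * gv h * c i l h * c i l h
          = (gv i)⁻¹ * (gv l)⁻¹ * (c i l h * c i l h * gv h) := by ring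
        _ = (gv i)⁻¹ * (gv l)⁻¹ * ((X i l h + X l i h) * (gv i * gv l)) := by rw [P i l h]
        _ = (X i l h + X l i h) * (((gv i)⁻¹ * gv i) * ((gv l)⁻¹ * gv l)) := by ring
        _ = X i l h + X l i h := by
            rw [inv_mul_cancel₀ (hgv i), inv_mul_cancel₀ (hgv l)]; ring
    have e2 : ∀ j i : Fin n, (gv h)⁻¹ * (gv j)⁻¹ * gv i * c h j i * c h j i
        = X h j i + X j h i := by
      intro j i
      calc (gv h)⁻¹ * (gv j)⁻¹ * gv i * c h j i * c h j i
          = (gv h)⁻¹ * (gv j)⁻¹ * (c h j i * c h j i * gv i) := by ring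
        _ = (gv h)⁻¹ * (gv j)⁻¹ * ((X h j i + X j h i) * (gv h * gv j)) := by rw [P h j i]
        _ = (X h j i + X j h i) * (((gv h)⁻¹ * gv h) * ((gv j)⁻¹ * gv j)) := by ring
        _ = X h j i + X j h i := by
            rw [inv_mul_cancel₀ (hgv h), inv_mul_cancel₀ (hgv j)]; ring
    simp only [e1, e2]
    have hK' : (∑ i, ∑ j, X i j h) - (∑ j, ∑ k, X h j k) - (∑ i, ∑ k, X i h k) = 1 := by
      have hKh := hK h
      simp only [rootRow] at hKh
      push_cast at hKh
      simp only [mul_sub, mul_ite, mul_one, mul_zero, Finset.sum_sub_distrib,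
        Finset.sum_ite_irrel, Finset.sum_ite_eq', Finset.mem_univ, if_true,
        Finset.sum_const_zero] at hKh
      exact hKh
    rw [Matrix.smul_apply, Matrix.one_apply_eq, smul_eq_mul, mul_one]
    simp only [Finset.sum_add_distrib]
    rw [show (∑ i, ∑ l, X l i h) = ∑ i, ∑ l, X i l h from Finset.sum_comm]
    linarith [hK']
  · have z1 : ∀ i l : Fin n, (gv i)⁻¹ * (gv l)⁻¹ * gv h * c i l k * c i l h = 0 := by
      intro i l
      by_cases h1 : c i l k = 0
      · rw [h1]; ring
      by_cases h2 : c i l h = 0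
      · rw [h2]; ring
      exact absurd (hc.nice_k i l k h h1 h2) (Ne.symm hhk)
    have z2 : ∀ j i : Fin n, (gv k)⁻¹ * (gv j)⁻¹ * gv i * c h j i * c k j i = 0 := by
      intro j i
      by_cases h1 : c h j i = 0
      · rw [h1]; ring
      by_cases h2 : c k j i = 0
      · rw [h2]; ring
      have h1' : c j h i ≠ 0 := by
        rw [hc.skew j h i]; exact neg_ne_zero.mpr h1
      have h2' : c j k i ≠ 0 := by
        rw [hc.skew j k i]; exact neg_ne_zero.mpr h2
      exact absurd (hc.nice_j j h k i h1' h2') hhk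
    simp only [z1, z2]
    rw [Matrix.smul_apply, Matrix.one_apply_ne hhk]
    simp
end

section
/- Let 𝔤 be an n-dimensional real nilpotent Lie algebra with a nice basis, structure constants c = (c_I), and root matrix M_Δ whose mod-2 reduction M_{Δ,2} is surjective. Suppose the linear system M_Δᵀ X = (1,…,1) admits a solution X (which is then unique, since surjectivity of M_Δ makes M_Δᵀ injective). Define c' by c'_I = c_I when x_I ≠ 0 and c'_I = 0 when x_I = 0. Then c' satisfies the Jacobi identity and defines a nilpotent Lie algebra 𝔤' (equal to 𝔤 when all x_I ≠ 0) for which the given basis is nice, c' lies in the closure of the orbit of c under the diagonal rescalings e^{M_Δ}(D_n) (i.e., 𝔤' is a contraction limit of 𝔤), and 𝔤' admits a diagonal metric satisfying condition (E) (ric = ½ id). Moreover 𝔤' is the unique such contraction limit: any contraction limit of 𝔤 (obtained by setting some structure constants to zero) admitting a diagonal metric satisfying (E) keeps exactly the brackets I with x_I ≠ 0. -/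
open scoped BigOperators
set_option maxHeartbeats 1000000

namespace Aux

lemma row_dot {n : ℕ} (i j k : Fin n) (a : Fin n → ℝ) :
    ∑ h, ((rootRow i j k h : ℤ) : ℝ) * a h = a k - a i - a j := by
  unfold rootRow
  push_cast
  simp [sub_mul, Finset.sum_sub_distrib, ite_mul]

/-- The index type of the brackets `I_Δ`. -/
abbrev TT (n : ℕ) (c : Fin n → Fin n → Fin n → ℝ) : Type :=
  {p : Fin n × Fin n × Fin n // p.1 < p.2.1 ∧ c p.1 p.2.1 p.2.2 ≠ 0}

noncomputable instance {n : ℕ} (c : Fin n → Fin n → Fin n → ℝ) : Fintype (TT n c) :=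
  @Subtype.fintype _ _ (Classical.decPred _) _

lemma det_cast_ne {m : Type} [Fintype m] [DecidableEq m] (M : Matrix m m ℤ)
    (h : (M.map (Int.cast : ℤ → ZMod 2)).det ≠ 0) :
    (M.map (Int.cast : ℤ → ℝ)).det ≠ 0 := by
  intro h0
  apply h
  have hz : M.det = 0 := by
    have h1 : ((Int.castRingHom ℝ)) M.det = 0 := by
      rw [RingHom.map_det, RingHom.mapMatrix_apply]; exact h0
    have h1' : ((M.det : ℤ) : ℝ) = 0 := h1
    exact_mod_cast h1'
  have h2 := (Int.castRingHom (ZMod 2)).map_det M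
  rw [hz, RingHom.mapMatrix_apply] at h2
  exact (h2.symm.trans (map_zero _) : (M.map ⇑(Int.castRingHom (ZMod 2))).det = 0)

lemma exists_phi {n : ℕ} (c : Fin n → Fin n → Fin n → ℝ) (hsurj : SurjectiveType c) :
    ∃ φ : TT n c → Fin n,
      (Matrix.det (Matrix.of fun I J : TT n c =>
        ((rootRow I.1.1 I.1.2.1 I.1.2.2 (φ J) : ℤ) : ℝ))) ≠ 0 := by
  classical
  let col : Fin n → (TT n c → ZMod 2) := fun h I => rootRow2 I.1.1 I.1.2.1 I.1.2.2 h
  have hspan : ⊤ ≤ Submodule.span (ZMod 2) (Set.range col) := by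
    intro y _
    obtain ⟨s, hs⟩ := hsurj (fun i j k =>
      if h' : i < j ∧ c i j k ≠ 0 then y ⟨(i, j, k), h'⟩ else 0)
    have hy : y = ∑ h, s h • col h := by
      funext I
      have := hs I.1.1 I.1.2.1 I.1.2.2 I.2.1 I.2.2
      rw [dif_pos I.2] at this
      simp only [Finset.sum_apply, Pi.smul_apply, smul_eq_mul]
      rw [show y I = y ⟨(I.1.1, I.1.2.1, I.1.2.2), I.2⟩ from by rfl, this]
      exact Finset.sum_congr rfl fun h _ => mul_comm _ _
    rw [hy]
    exact Submodule.sum_mem _ fun h _ =>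
      Submodule.smul_mem _ _ (Submodule.subset_span ⟨h, rfl⟩)
  obtain ⟨b, hbsub, hbspan, hbind⟩ := exists_linearIndependent (ZMod 2) (Set.range col)
  have hbtop : Submodule.span (ZMod 2) b = ⊤ :=
    le_antisymm le_top (le_trans hspan (by rw [hbspan]))
  letI : Fintype ↑b := (Set.toFinite b).fintype
  let bB : Module.Basis ↑b (ZMod 2) (TT n c → ZMod 2) :=
    Module.Basis.mk hbind (by rw [Subtype.range_coe]; exact hbtop.ge)
  let e : ↑b ≃ TT n c := bB.indexEquiv (Pi.basisFun (ZMod 2) (TT n c))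
  let bT : Module.Basis (TT n c) (ZMod 2) (TT n c → ZMod 2) := bB.reindex e
  have hdet2 : ((Pi.basisFun (ZMod 2) (TT n c)).toMatrix bT).det ≠ 0 := by
    haveI := (Pi.basisFun (ZMod 2) (TT n c)).invertibleToMatrix bT
    exact (Matrix.isUnit_det_of_invertible _).ne_zero
  have hmem : ∀ J : TT n c, bT J ∈ Set.range col := by
    intro J
    have h1 : bT J = bB (e.symm J) := by simp [bT]
    have h2 : bB (e.symm J) = ((e.symm J : ↑b) : TT n c → ZMod 2) := by
      simp [bB, Module.Basis.mk_apply]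
    rw [h1, h2]
    exact hbsub (e.symm J).2
  choose φ hφ using hmem
  refine ⟨φ, ?_⟩
  have hM2 : (Matrix.of fun I J : TT n c =>
          rootRow I.1.1 I.1.2.1 I.1.2.2 (φ J)).map (Int.cast : ℤ → ZMod 2)
      = (Pi.basisFun (ZMod 2) (TT n c)).toMatrix bT := by
    funext I J
    rw [Module.Basis.toMatrix_apply, Pi.basisFun_repr, ← hφ J]
    rfl
  refine det_cast_ne (Matrix.of fun I J : TT n c => rootRow I.1.1 I.1.2.1 I.1.2.2 (φ J)) ?_
  rw [hM2]
  exact hdet2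

end Aux

namespace Aux2
open Aux

lemma sum_triple_eq {n : ℕ} (c : Fin n → Fin n → Fin n → ℝ) (f : Fin n → Fin n → Fin n → ℝ)
    (hf : ∀ i j k, ¬(i < j ∧ c i j k ≠ 0) → f i j k = 0) :
    ∑ i, ∑ j, ∑ k, f i j k = ∑ I : TT n c, f I.1.1 I.1.2.1 I.1.2.2 := by
  classical
  have e1 : ∑ p : Fin n × Fin n × Fin n, f p.1 p.2.1 p.2.2 = ∑ i, ∑ j, ∑ k, f i j k := by
    rw [Fintype.sum_prod_type]
    exact Finset.sum_congr rfl fun i _ => by rw [Fintype.sum_prod_type]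
  rw [← e1]
  rw [← Finset.sum_subtype (Finset.univ.filter
      (fun p : Fin n × Fin n × Fin n => p.1 < p.2.1 ∧ c p.1 p.2.1 p.2.2 ≠ 0))
      (by intro x; simp) (fun p => f p.1 p.2.1 p.2.2)]
  symm
  apply Finset.sum_subset (Finset.filter_subset _ _)
  intro p _ hp
  apply hf
  intro hP
  exact hp (by simpa using hP)

lemma inj_X {n : ℕ} (c : Fin n → Fin n → Fin n → ℝ) (hsurj : SurjectiveType c)
    (Y : Fin n → Fin n → Fin n → ℝ)
    (hY0 : ∀ i j k, ¬(i < j ∧ c i j k ≠ 0) → Y i j k = 0)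
    (hY : ∀ h, ∑ i, ∑ j, ∑ k, Y i j k * ((rootRow i j k h : ℤ) : ℝ) = 0) :
    ∀ i j k, Y i j k = 0 := by
  classical
  obtain ⟨φ, hdet⟩ := exists_phi c hsurj
  set Mr : Matrix (TT n c) (TT n c) ℝ :=
    Matrix.of fun I J => ((rootRow I.1.1 I.1.2.1 I.1.2.2 (φ J) : ℤ) : ℝ) with hMr
  set YT : TT n c → ℝ := fun I => Y I.1.1 I.1.2.1 I.1.2.2 with hYT
  have hrow : ∀ hh : Fin n, ∑ I : TT n c, YT I * ((rootRow I.1.1 I.1.2.1 I.1.2.2 hh : ℤ) : ℝ) = 0 := by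
    intro hh
    rw [← sum_triple_eq c (fun i j k => Y i j k * ((rootRow i j k hh : ℤ) : ℝ))
      (fun i j k hn => by show Y i j k * _ = 0; rw [hY0 i j k hn, zero_mul])]
    exact hY hh
  have hvm : Matrix.vecMul YT Mr = 0 := by
    funext J
    show ∑ I, YT I * Mr I J = 0
    exact hrow (φ J)
  have hYT0 : YT = 0 := by
    have h1 : Matrix.vecMul YT (Mr * Mr⁻¹) = YT := by
      rw [Matrix.mul_nonsing_inv _ (isUnit_iff_ne_zero.mpr hdet), Matrix.vecMul_one]
    rw [← Matrix.vecMul_vecMul, hvm, Matrix.zero_vecMul] at h1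
    exact h1.symm
  intro i j k
  by_cases hP : i < j ∧ c i j k ≠ 0
  · exact congrFun hYT0 ⟨(i, j, k), hP⟩
  · exact hY0 i j k hP

lemma surj_a {n : ℕ} (c : Fin n → Fin n → Fin n → ℝ) (hsurj : SurjectiveType c)
    (t : Fin n → Fin n → Fin n → ℝ) :
    ∃ a : Fin n → ℝ, ∀ i j k, i < j → c i j k ≠ 0 → a k - a i - a j = t i j k := by
  classical
  obtain ⟨φ, hdet⟩ := exists_phi c hsurj
  set Mr : Matrix (TT n c) (TT n c) ℝ :=
    Matrix.of fun I J => ((rootRow I.1.1 I.1.2.1 I.1.2.2 (φ J) : ℤ) : ℝ) with hMr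
  set tT : TT n c → ℝ := fun I => t I.1.1 I.1.2.1 I.1.2.2 with htT
  set z : TT n c → ℝ := Mr⁻¹.mulVec tT with hz
  refine ⟨fun hh => ∑ J : TT n c, if φ J = hh then z J else 0, ?_⟩
  intro i j k hij hc
  set a : Fin n → ℝ := fun hh => ∑ J : TT n c, if φ J = hh then z J else 0 with ha
  have key : ∀ I : TT n c, ∑ h, ((rootRow I.1.1 I.1.2.1 I.1.2.2 h : ℤ) : ℝ) * a h = tT I := by
    intro I
    have h1 : ∀ h : Fin n, ((rootRow I.1.1 I.1.2.1 I.1.2.2 h : ℤ) : ℝ) * a h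
        = ∑ J : TT n c, if φ J = h then ((rootRow I.1.1 I.1.2.1 I.1.2.2 h : ℤ) : ℝ) * z J else 0 := by
      intro h
      rw [ha, Finset.mul_sum]
      exact Finset.sum_congr rfl fun J _ => by split <;> simp
    calc ∑ h, ((rootRow I.1.1 I.1.2.1 I.1.2.2 h : ℤ) : ℝ) * a h
        = ∑ h, ∑ J : TT n c, if φ J = h then ((rootRow I.1.1 I.1.2.1 I.1.2.2 h : ℤ) : ℝ) * z J else 0 :=
          Finset.sum_congr rfl fun h _ => h1 h
      _ = ∑ J : TT n c, ∑ h, if φ J = h then ((rootRow I.1.1 I.1.2.1 I.1.2.2 h : ℤ) : ℝ) * z J else 0 :=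
          Finset.sum_comm
      _ = ∑ J : TT n c, ((rootRow I.1.1 I.1.2.1 I.1.2.2 (φ J) : ℤ) : ℝ) * z J := by
          refine Finset.sum_congr rfl fun J _ => ?_
          rw [Finset.sum_ite_eq]
          simp
      _ = (Mr.mulVec z) I := rfl
      _ = tT I := by
          rw [hz, Matrix.mulVec_mulVec, Matrix.mul_nonsing_inv _ (isUnit_iff_ne_zero.mpr hdet),
            Matrix.one_mulVec]
  have := key ⟨(i, j, k), hij, hc⟩
  rw [row_dot] at this
  exact this
end Aux2

namespace AuxB

lemma sum_ite_const {α β : Type*} [Fintype α] [AddCommMonoid β] (P : Prop) [Decidable P]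
    (f : α → β) : (∑ x : α, if P then f x else 0) = if P then ∑ x, f x else 0 := by
  split <;> simp

section
variable {n : ℕ} (c cc : Fin n → Fin n → Fin n → ℝ) (gv : Fin n → ℝ)

/-- abbreviation for the alpha-coefficients -/
noncomputable def bet (cc : Fin n → Fin n → Fin n → ℝ) (gv : Fin n → ℝ) (i j l : Fin n) : ℝ :=
  cc i j l ^ 2 * gv l * (gv i)⁻¹ * (gv j)⁻¹

lemma ric_step1 (hgv : ∀ i, gv i ≠ 0) (h k : Fin n) :
    Ric cc (Matrix.diagonal gv) h k
      = (1/4 : ℝ) * (∑ i, ∑ l, (gv i)⁻¹ * (gv l)⁻¹ * gv h * cc i l k * cc i l h)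
      - (1/2 : ℝ) * (∑ j, ∑ i, (gv k)⁻¹ * (gv j)⁻¹ * gv i * cc h j i * cc k j i) := by
  have hinv : (Matrix.diagonal gv)⁻¹ = Matrix.diagonal (fun i => (gv i)⁻¹) := by
    apply Matrix.inv_eq_right_inv
    rw [Matrix.diagonal_mul_diagonal]
    have : (fun i => gv i * (gv i)⁻¹) = fun _ => (1 : ℝ) :=
      funext fun i => mul_inv_cancel₀ (hgv i)
    rw [this, Matrix.diagonal_one]
  unfold Ric
  rw [Matrix.of_apply, hinv]
  simp only [Matrix.diagonal_apply, mul_ite, ite_mul, mul_zero, zero_mul,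
    sum_ite_const, Finset.sum_ite_eq, Finset.sum_ite_eq', Finset.mem_univ, if_true]

variable (hnk : ∀ i j k k', c i j k ≠ 0 → c i j k' ≠ 0 → k = k')
  (hnj : ∀ i j j' k, c i j k ≠ 0 → c i j' k ≠ 0 → j = j')
  (hskewc : ∀ i j k, c i j k = - c j i k)
  (hskew : ∀ i j k, cc i j k = - cc j i k)
  (hsub : ∀ i j k, cc i j k ≠ 0 → c i j k ≠ 0)
  (hgv : ∀ i, gv i ≠ 0)

include hnk hnj hskewc hskew hsub hgv in
lemma ric_diag (h k : Fin n) :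
    Ric cc (Matrix.diagonal gv) h k
      = if h = k then
          (1/4 : ℝ) * ∑ i, ∑ j, ∑ l, bet cc gv i j l * ((rootRow i j l h : ℤ) : ℝ)
        else 0 := by
  rw [ric_step1 cc gv hgv]
  by_cases hhk : h = k
  · subst hhk
    rw [if_pos rfl]
    -- convert the two sums to bet-form
    have hA : (∑ i, ∑ l, (gv i)⁻¹ * (gv l)⁻¹ * gv h * cc i l h * cc i l h)
        = ∑ i, ∑ l, bet cc gv i l h :=
      Finset.sum_congr rfl fun i _ => Finset.sum_congr rfl fun l _ => by unfold bet; ring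
    have hB : (∑ j, ∑ i, (gv h)⁻¹ * (gv j)⁻¹ * gv i * cc h j i * cc h j i)
        = ∑ j, ∑ i, bet cc gv h j i :=
      Finset.sum_congr rfl fun j _ => Finset.sum_congr rfl fun i _ => by unfold bet; ring
    rw [hA, hB]
    have hS : (∑ i, ∑ j, ∑ l, bet cc gv i j l * ((rootRow i j l h : ℤ) : ℝ))
        = (∑ i, ∑ j, bet cc gv i j h) - (∑ j, ∑ l, bet cc gv h j l)
          - (∑ i, ∑ l, bet cc gv i h l) := by
      unfold rootRow
      push_cast
      simp only [mul_sub, mul_ite, mul_one, mul_zero, Finset.sum_sub_distrib,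
        sum_ite_const, Finset.sum_ite_eq, Finset.sum_ite_eq', Finset.mem_univ, if_true]
    have hsym : (∑ i, ∑ l, bet cc gv i h l) = ∑ j, ∑ l, bet cc gv h j l :=
      Finset.sum_congr rfl fun i _ => Finset.sum_congr rfl fun l _ => by
        unfold bet; rw [hskew i h l]; ring
    have hren : (∑ i, ∑ l, bet cc gv i l h) = ∑ i, ∑ j, bet cc gv i j h := rfl
    rw [hS, hsym, hren]
    ring
  · rw [if_neg hhk]
    have hT1 : ∀ i l : Fin n, (gv i)⁻¹ * (gv l)⁻¹ * gv h * cc i l k * cc i l h = 0 := by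
      intro i l
      rcases eq_or_ne (cc i l k) 0 with h0 | h0
      · rw [h0]; ring
      rcases eq_or_ne (cc i l h) 0 with h1 | h1
      · rw [h1]; ring
      exact absurd (hnk i l k h (hsub _ _ _ h0) (hsub _ _ _ h1)) (fun e => hhk e.symm)
    have hT2 : ∀ j i : Fin n, (gv k)⁻¹ * (gv j)⁻¹ * gv i * cc h j i * cc k j i = 0 := by
      intro j i
      rcases eq_or_ne (cc h j i) 0 with h0 | h0
      · rw [h0]; ring
      rcases eq_or_ne (cc k j i) 0 with h1 | h1
      · rw [h1]; ring
      have hc0 : c j h i ≠ 0 := by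
        rw [hskewc j h i]
        simpa using hsub _ _ _ h0
      have hc1 : c j k i ≠ 0 := by
        rw [hskewc j k i]
        simpa using hsub _ _ _ h1
      exact absurd (hnj j h k i hc0 hc1) hhk
    rw [Finset.sum_congr rfl fun i _ => Finset.sum_congr rfl fun l _ => hT1 i l,
      Finset.sum_congr rfl fun j _ => Finset.sum_congr rfl fun i _ => hT2 j i]
    simp

include hnk hnj hskewc hskew hsub hgv in
lemma einstein_iff :
    EinsteinE cc (Matrix.diagonal gv) ↔
      ∀ h : Fin n, (∑ i, ∑ j, ∑ l,
        (if i < j ∧ c i j l ≠ 0 then cc i j l ^ 2 * gv l * (gv i)⁻¹ * (gv j)⁻¹ else 0)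
          * ((rootRow i j l h : ℤ) : ℝ)) = 1 := by
  classical
  -- the unrestricted sum doubles the restricted one
  have hdouble : ∀ h : Fin n,
      (∑ i, ∑ j, ∑ l, bet cc gv i j l * ((rootRow i j l h : ℤ) : ℝ))
        = 2 * ∑ i, ∑ j, ∑ l,
            (if i < j ∧ c i j l ≠ 0 then cc i j l ^ 2 * gv l * (gv i)⁻¹ * (gv j)⁻¹ else 0)
              * ((rootRow i j l h : ℤ) : ℝ) := by
    intro h
    set F : Fin n → Fin n → ℝ := fun i j => ∑ l, bet cc gv i j l * ((rootRow i j l h : ℤ) : ℝ)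
      with hF
    have hFsymm : ∀ i j, F j i = F i j := by
      intro i j
      refine Finset.sum_congr rfl fun l _ => ?_
      unfold bet rootRow
      rw [hskew j i l]
      push_cast
      ring
    have hFdiag : ∀ i, F i i = 0 := by
      intro i
      refine Finset.sum_eq_zero fun l _ => ?_
      have : cc i i l = 0 := by
        have := hskew i i l
        linarith
      unfold bet
      rw [this]
      ring
    have htri : ∀ i j : Fin n, F i j
        = (if i < j then F i j else 0) + (if j < i then F i j else 0)
          + (if i = j then F i j else 0) := by
      intro i j
      rcases lt_trichotomy i j with hlt | heq | hgt
      · rw [if_pos hlt, if_neg (by omega), if_neg (by omega)]; ring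
      · rw [if_neg (by omega), if_neg (by omega), if_pos heq]; ring
      · rw [if_neg (by omega), if_pos hgt, if_neg (by omega)]; ring
    have hsum : (∑ i, ∑ j, F i j)
        = (∑ i, ∑ j, if i < j then F i j else 0) + (∑ i, ∑ j, if j < i then F i j else 0)
          + (∑ i, ∑ j, if i = j then F i j else 0) := by
      rw [← Finset.sum_add_distrib, ← Finset.sum_add_distrib]
      refine Finset.sum_congr rfl fun i _ => ?_
      rw [← Finset.sum_add_distrib, ← Finset.sum_add_distrib]
      exact Finset.sum_congr rfl fun j _ => htri i j
    have hdiag0 : (∑ i, ∑ j, if i = j then F i j else 0) = 0 := by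
      refine Finset.sum_eq_zero fun i _ => ?_
      calc (∑ j, if i = j then F i j else 0) = F i i := by
            rw [Finset.sum_ite_eq]; simp
        _ = 0 := hFdiag i
    have hswap : (∑ i, ∑ j, if j < i then F i j else 0)
        = ∑ i, ∑ j, if i < j then F i j else 0 := by
      rw [Finset.sum_comm]
      exact Finset.sum_congr rfl fun j _ => Finset.sum_congr rfl fun i _ => by
        rcases lt_or_ge j i with hlt | hle
        · rw [if_pos hlt, if_pos hlt, hFsymm]
        · rw [if_neg (by omega), if_neg (by omega)]
    have hrestrict : (∑ i, ∑ j, if i < j then F i j else 0)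
        = ∑ i, ∑ j, ∑ l,
            (if i < j ∧ c i j l ≠ 0 then cc i j l ^ 2 * gv l * (gv i)⁻¹ * (gv j)⁻¹ else 0)
              * ((rootRow i j l h : ℤ) : ℝ) := by
      refine Finset.sum_congr rfl fun i _ => Finset.sum_congr rfl fun j _ => ?_
      by_cases hij : i < j
      · rw [if_pos hij, hF]
        refine Finset.sum_congr rfl fun l _ => ?_
        by_cases hc : c i j l ≠ 0
        · rw [if_pos ⟨hij, hc⟩]; rfl
        · have hcc : cc i j l = 0 := by
            by_contra hne
            exact hc (hsub _ _ _ hne)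
          rw [if_neg (by tauto)]
          unfold bet
          rw [hcc]
          ring
      · rw [if_neg hij]
        symm
        refine Finset.sum_eq_zero fun l _ => ?_
        rw [if_neg (by tauto)]
        ring
    calc (∑ i, ∑ j, F i j) = _ := hsum
      _ = 2 * ∑ i, ∑ j, ∑ l,
            (if i < j ∧ c i j l ≠ 0 then cc i j l ^ 2 * gv l * (gv i)⁻¹ * (gv j)⁻¹ else 0)
              * ((rootRow i j l h : ℤ) : ℝ) := by
          rw [hdiag0, hswap, hrestrict]; ring
  constructor
  · intro hE h
    have h1 : Ric cc (Matrix.diagonal gv) h h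
        = ((1/2 : ℝ) • (1 : Matrix (Fin n) (Fin n) ℝ)) h h := by rw [hE]
    rw [ric_diag c cc gv hnk hnj hskewc hskew hsub hgv h h, if_pos rfl, hdouble h] at h1
    have h2 : ((1/2 : ℝ) • (1 : Matrix (Fin n) (Fin n) ℝ)) h h = 1/2 := by
      simp [Matrix.smul_apply, Matrix.one_apply_eq]
    rw [h2] at h1
    linarith
  · intro hR
    unfold EinsteinE
    ext h k
    rw [ric_diag c cc gv hnk hnj hskewc hskew hsub hgv h k]
    by_cases hhk : h = k
    · subst hhk
      rw [if_pos rfl, hdouble h, hR h]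
      simp [Matrix.smul_apply, Matrix.one_apply_eq]
      norm_num
    · rw [if_neg hhk]
      simp [Matrix.smul_apply, Matrix.one_apply_ne hhk]

end
end AuxB

namespace AuxC
variable {n : ℕ}

lemma cont_eval (i j k : Fin n) :
    Continuous fun cc : Fin n → Fin n → Fin n → ℝ => cc i j k :=
  (continuous_apply k).comp ((continuous_apply j).comp (continuous_apply i))

lemma cont_bracket_comp {f g : (Fin n → Fin n → Fin n → ℝ) → (Fin n → ℝ)}
    (hf : ∀ i, Continuous fun cc => f cc i) (hg : ∀ i, Continuous fun cc => g cc i)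
    (k : Fin n) : Continuous fun cc => bracket cc (f cc) (g cc) k := by
  unfold bracket
  refine continuous_finset_sum _ fun i _ => continuous_finset_sum _ fun j _ => ?_
  exact ((hf i).mul (hg j)).mul (cont_eval i j k)

lemma cont_foldr (l : List (Fin n → ℝ)) (w : Fin n → ℝ) (k : Fin n) :
    Continuous fun cc : Fin n → Fin n → Fin n → ℝ => (l.foldr (bracket cc) w) k := by
  induction l generalizing k with
  | nil => exact continuous_const
  | cons a l ih =>
    show Continuous fun cc => bracket cc a (l.foldr (bracket cc) w) k
    exact cont_bracket_comp (f := fun _ => a) (g := fun cc => l.foldr (bracket cc) w)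
      (fun _ => continuous_const) (fun i => ih i) k

section
variable (c : Fin n → Fin n → Fin n → ℝ)

/-- the orbit set -/
def orbitSet : Set (Fin n → Fin n → Fin n → ℝ) :=
  {cc | ∃ d : Fin n → ℝ, (∀ i, d i ≠ 0) ∧
    ∀ i j k : Fin n, cc i j k = d k / (d i * d j) * c i j k}

lemma rescale_bracket (cc : Fin n → Fin n → Fin n → ℝ) (d : Fin n → ℝ) (hd : ∀ i, d i ≠ 0)
    (hcc : ∀ i j k, cc i j k = d k / (d i * d j) * c i j k) (x y : Fin n → ℝ) :
    bracket cc x y = fun k => d k *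
      bracket c (fun i => x i / d i) (fun i => y i / d i) k := by
  funext k
  unfold bracket
  rw [Finset.mul_sum]
  refine Finset.sum_congr rfl fun i _ => ?_
  rw [Finset.mul_sum]
  refine Finset.sum_congr rfl fun j _ => ?_
  rw [hcc i j k]
  field_simp

lemma closure_skew (hcskew : ∀ i j k, c i j k = - c j i k)
    {cc : Fin n → Fin n → Fin n → ℝ} (hcc : cc ∈ closure (orbitSet c)) :
    ∀ i j k, cc i j k = - cc j i k := by
  intro i j k
  have hcl : IsClosed {cd : Fin n → Fin n → Fin n → ℝ | cd i j k = - cd j i k} :=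
    isClosed_eq (cont_eval i j k) (cont_eval j i k).neg
  have hsub : orbitSet c ⊆ {cd | cd i j k = - cd j i k} := by
    rintro cd ⟨d, hd, hcd⟩
    show cd i j k = - cd j i k
    rw [hcd i j k, hcd j i k, hcskew i j k]
    ring
  exact closure_minimal hsub hcl hcc

lemma closure_jacobi
    (hjac : ∀ x y z : Fin n → ℝ,
      bracket c (bracket c x y) z + bracket c (bracket c y z) x + bracket c (bracket c z x) y = 0)
    {cc : Fin n → Fin n → Fin n → ℝ} (hcc : cc ∈ closure (orbitSet c)) :
    ∀ x y z : Fin n → ℝ,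
      bracket cc (bracket cc x y) z + bracket cc (bracket cc y z) x
        + bracket cc (bracket cc z x) y = 0 := by
  intro x y z
  funext k
  have hcl : IsClosed {cd : Fin n → Fin n → Fin n → ℝ |
      bracket cd (bracket cd x y) z k + bracket cd (bracket cd y z) x k
        + bracket cd (bracket cd z x) y k = 0} := by
    apply isClosed_eq _ continuous_const
    have h1 := cont_bracket_comp (f := fun cd => bracket cd x y) (g := fun _ => z)
      (fun i => cont_bracket_comp (f := fun _ => x) (g := fun _ => y)
        (fun _ => continuous_const) (fun _ => continuous_const) i)
      (fun _ => continuous_const) k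
    have h2 := cont_bracket_comp (f := fun cd => bracket cd y z) (g := fun _ => x)
      (fun i => cont_bracket_comp (f := fun _ => y) (g := fun _ => z)
        (fun _ => continuous_const) (fun _ => continuous_const) i)
      (fun _ => continuous_const) k
    have h3 := cont_bracket_comp (f := fun cd => bracket cd z x) (g := fun _ => y)
      (fun i => cont_bracket_comp (f := fun _ => z) (g := fun _ => x)
        (fun _ => continuous_const) (fun _ => continuous_const) i)
      (fun _ => continuous_const) k
    exact (h1.add h2).add h3
  have hsub : orbitSet c ⊆ {cd | bracket cd (bracket cd x y) z k
      + bracket cd (bracket cd y z) x k + bracket cd (bracket cd z x) y k = 0} := by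
    rintro cd ⟨d, hd, hcd⟩
    show _ = (0:ℝ)
    have hb := rescale_bracket c cd d hd hcd
    have hdiv : ∀ u v : Fin n → ℝ,
        (fun i => bracket cd u v i / d i) = bracket c (fun i => u i / d i) (fun i => v i / d i) := by
      intro u v
      funext i
      rw [hb u v]
      exact mul_div_cancel_left₀ _ (hd i)
    have e1 : bracket cd (bracket cd x y) z k
        = d k * bracket c (bracket c (fun i => x i / d i) (fun i => y i / d i))
            (fun i => z i / d i) k := by
      rw [hb (bracket cd x y) z, ← hdiv x y]
    have e2 : bracket cd (bracket cd y z) x k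
        = d k * bracket c (bracket c (fun i => y i / d i) (fun i => z i / d i))
            (fun i => x i / d i) k := by
      rw [hb (bracket cd y z) x, ← hdiv y z]
    have e3 : bracket cd (bracket cd z x) y k
        = d k * bracket c (bracket c (fun i => z i / d i) (fun i => x i / d i))
            (fun i => y i / d i) k := by
      rw [hb (bracket cd z x) y, ← hdiv z x]
    rw [e1, e2, e3]
    have hj := congrFun (hjac (fun i => x i / d i) (fun i => y i / d i) (fun i => z i / d i)) k
    simp only [Pi.add_apply, Pi.zero_apply] at hj
    linear_combination d k * hj
  have := closure_minimal hsub hcl hcc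
  simpa [Pi.add_apply] using this

lemma rescale_foldr (cc : Fin n → Fin n → Fin n → ℝ) (d : Fin n → ℝ) (hd : ∀ i, d i ≠ 0)
    (hcc : ∀ i j k, cc i j k = d k / (d i * d j) * c i j k)
    (l : List (Fin n → ℝ)) (w : Fin n → ℝ) :
    l.foldr (bracket cc) w = fun k => d k *
      (l.map (fun u i => u i / d i)).foldr (bracket c) (fun i => w i / d i) k := by
  induction l with
  | nil =>
    funext k
    show w k = d k * (w k / d k)
    rw [mul_div_cancel₀ _ (hd k)]
  | cons a l ih =>
    show bracket cc a (l.foldr (bracket cc) w) = _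
    rw [rescale_bracket c cc d hd hcc a, ih]
    funext k
    congr 2
    funext i
    exact mul_div_cancel_left₀ _ (hd i)

lemma closure_nilp (N : ℕ)
    (hnil : ∀ (v : Fin N → Fin n → ℝ) (w : Fin n → ℝ), (List.ofFn v).foldr (bracket c) w = 0)
    {cc : Fin n → Fin n → Fin n → ℝ} (hcc : cc ∈ closure (orbitSet c)) :
    ∀ (v : Fin N → Fin n → ℝ) (w : Fin n → ℝ), (List.ofFn v).foldr (bracket cc) w = 0 := by
  intro v w
  funext k
  have hcl : IsClosed {cd : Fin n → Fin n → Fin n → ℝ |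
      ((List.ofFn v).foldr (bracket cd) w) k = 0} :=
    isClosed_eq (cont_foldr _ _ _) continuous_const
  have hsub : orbitSet c ⊆ {cd | ((List.ofFn v).foldr (bracket cd) w) k = 0} := by
    rintro cd ⟨d, hd, hcd⟩
    show ((List.ofFn v).foldr (bracket cd) w) k = 0
    rw [rescale_foldr c cd d hd hcd]
    have : (List.ofFn v).map (fun u i => u i / d i)
        = List.ofFn (fun m i => v m i / d i) := by
      rw [List.map_ofFn]
      rfl
    rw [this, hnil (fun m i => v m i / d i) (fun i => w i / d i)]
    simp
  have := closure_minimal hsub hcl hcc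
  simpa using this

end
end AuxC


namespace AuxD

lemma row_dot2 {n : ℕ} (i j k : Fin n) (s : Fin n → ZMod 2) :
    ∑ h, rootRow2 i j k h * s h = s k - s i - s j := by
  unfold rootRow2 rootRow
  push_cast
  simp [sub_mul, Finset.sum_sub_distrib, ite_mul]

lemma sign_aux (x y z : ZMod 2) :
    (if z = 1 then (-1:ℝ) else 1) * (if x = 1 then (-1:ℝ) else 1) * (if y = 1 then (-1:ℝ) else 1)
      = if z - x - y = 1 then -1 else 1 := by
  have hc : ∀ u : ZMod 2, u = 0 ∨ u = 1 := by decide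
  rcases hc x with h | h <;> rcases hc y with h' | h' <;> rcases hc z with h'' | h'' <;>
    subst h <;> subst h' <;> subst h'' <;>
    simp (config := { decide := true })

end AuxD

/-- Contraction limit: for a nice nilpotent Lie algebra of surjective type whose linear
system `M_Δᵀ X = (1,…,1)` has a (then unique) solution `X`, the structure constants `c'`
obtained by keeping exactly the brackets with `x_I ≠ 0` satisfy the Jacobi identity and
define a nice nilpotent Lie algebra (equal to the original one when all `x_I ≠ 0`),
lying in the closure of the orbit of `c` under diagonal rescalings, which admits a
diagonal metric satisfying (E); moreover it is the unique such contraction limit. -/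
theorem surjective_type_contraction_limit
    (n : ℕ) (c : Fin n → Fin n → Fin n → ℝ) (hc : IsNiceNilpotent c)
    (hsurj : SurjectiveType c)
    (X : Fin n → Fin n → Fin n → ℝ)
    (hsupp : ∀ i j k : Fin n, ¬(i < j ∧ c i j k ≠ 0) → X i j k = 0)
    (hK : ∀ h : Fin n, (∑ i, ∑ j, ∑ k, X i j k * ((rootRow i j k h : ℤ) : ℝ)) = 1)
    (c' : Fin n → Fin n → Fin n → ℝ)
    (hc'def : ∀ i j k : Fin n,
      (X i j k ≠ 0 ∨ X j i k ≠ 0 → c' i j k = c i j k) ∧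
      (X i j k = 0 ∧ X j i k = 0 → c' i j k = 0)) :
    (∀ X' : Fin n → Fin n → Fin n → ℝ,
        (∀ i j k : Fin n, ¬(i < j ∧ c i j k ≠ 0) → X' i j k = 0) →
        (∀ h : Fin n, (∑ i, ∑ j, ∑ k, X' i j k * ((rootRow i j k h : ℤ) : ℝ)) = 1) →
        X' = X) ∧
    IsNiceNilpotent c' ∧
    c' ∈ closure {cc : Fin n → Fin n → Fin n → ℝ |
        ∃ d : Fin n → ℝ, (∀ i, d i ≠ 0) ∧
          ∀ i j k : Fin n, cc i j k = d k / (d i * d j) * c i j k} ∧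
    ((∀ i j k : Fin n, i < j → c i j k ≠ 0 → X i j k ≠ 0) → c' = c) ∧
    (∃ gv : Fin n → ℝ, (∀ i, gv i ≠ 0) ∧ EinsteinE c' (Matrix.diagonal gv)) ∧
    (∀ cc : Fin n → Fin n → Fin n → ℝ,
        (∀ i j k : Fin n, cc i j k = c i j k ∨ cc i j k = 0) →
        cc ∈ closure {cd : Fin n → Fin n → Fin n → ℝ |
          ∃ d : Fin n → ℝ, (∀ i, d i ≠ 0) ∧
            ∀ i j k : Fin n, cd i j k = d k / (d i * d j) * c i j k} →
        (∃ gv : Fin n → ℝ, (∀ i, gv i ≠ 0) ∧ EinsteinE cc (Matrix.diagonal gv)) →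
        ∀ i j k : Fin n, i < j → c i j k ≠ 0 → (cc i j k ≠ 0 ↔ X i j k ≠ 0)) := by
  classical
  -- support of c' is contained in support of c
  have hc'sub : ∀ i j k, c' i j k ≠ 0 → c i j k ≠ 0 := by
    intro i j k hne
    by_cases hX : X i j k ≠ 0 ∨ X j i k ≠ 0
    · intro h0
      exact hne (by rw [(hc'def i j k).1 hX, h0])
    · push_neg at hX
      exact absurd ((hc'def i j k).2 ⟨hX.1, hX.2⟩) hne
  -- skew-symmetry of c'
  have hskew' : ∀ i j k, c' i j k = - c' j i k := by
    intro i j k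
    by_cases hX : X i j k ≠ 0 ∨ X j i k ≠ 0
    · rw [(hc'def i j k).1 hX, (hc'def j i k).1 hX.symm, hc.skew i j k]
    · push_neg at hX
      rw [(hc'def i j k).2 ⟨hX.1, hX.2⟩, (hc'def j i k).2 ⟨hX.2, hX.1⟩]
      norm_num
  -- Part 1 : uniqueness of X
  have hXuniq : ∀ X' : Fin n → Fin n → Fin n → ℝ,
      (∀ i j k : Fin n, ¬(i < j ∧ c i j k ≠ 0) → X' i j k = 0) →
      (∀ h : Fin n, (∑ i, ∑ j, ∑ k, X' i j k * ((rootRow i j k h : ℤ) : ℝ)) = 1) →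
      X' = X := by
    intro X' hsupp' hK'
    have hzero := Aux2.inj_X c hsurj (fun i j k => X' i j k - X i j k)
      (fun i j k hn => by
        show X' i j k - X i j k = 0
        rw [hsupp' i j k hn, hsupp i j k hn, sub_zero])
      (by
        intro h
        have e1 : (∑ i, ∑ j, ∑ k, (X' i j k - X i j k) * ((rootRow i j k h : ℤ) : ℝ))
            = (∑ i, ∑ j, ∑ k, (X' i j k * ((rootRow i j k h : ℤ) : ℝ)
                - X i j k * ((rootRow i j k h : ℤ) : ℝ))) :=
          Finset.sum_congr rfl fun i _ => Finset.sum_congr rfl fun j _ =>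
            Finset.sum_congr rfl fun k _ => sub_mul _ _ _
        rw [e1]
        simp only [Finset.sum_sub_distrib]
        rw [hK' h, hK h, sub_self])
    funext i j k
    exact sub_eq_zero.mp (hzero i j k)
  -- Part 3 : closure membership
  have hclos : c' ∈ closure {cc : Fin n → Fin n → Fin n → ℝ |
      ∃ d : Fin n → ℝ, (∀ i, d i ≠ 0) ∧
        ∀ i j k : Fin n, cc i j k = d k / (d i * d j) * c i j k} := by
    obtain ⟨a, ha⟩ := Aux2.surj_a c hsurj (fun i j k => if X i j k ≠ 0 then 0 else -1)
    set f : ℕ → (Fin n → Fin n → Fin n → ℝ) :=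
      fun m i j k => Real.exp (m * (a k - a i - a j)) * c i j k with hf
    have hmem : ∀ m : ℕ, f m ∈ {cc : Fin n → Fin n → Fin n → ℝ |
        ∃ d : Fin n → ℝ, (∀ i, d i ≠ 0) ∧
          ∀ i j k : Fin n, cc i j k = d k / (d i * d j) * c i j k} := by
      intro m
      refine ⟨fun i => Real.exp (m * a i), fun i => Real.exp_ne_zero _, ?_⟩
      intro i j k
      show Real.exp (m * (a k - a i - a j)) * c i j k
        = Real.exp (m * a k) / (Real.exp (m * a i) * Real.exp (m * a j)) * c i j k
      rw [← Real.exp_add, ← Real.exp_sub]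
      congr 2
      ring
    have hexp_neg_lim : Filter.Tendsto (fun m : ℕ => Real.exp (m * (-1 : ℝ)))
        Filter.atTop (nhds 0) := by
      have h1 : Filter.Tendsto (fun m : ℕ => -(m : ℝ)) Filter.atTop Filter.atBot :=
        Filter.tendsto_neg_atTop_atBot.comp tendsto_natCast_atTop_atTop
      have h2 : Filter.Tendsto (fun m : ℕ => Real.exp (-(m : ℝ))) Filter.atTop (nhds 0) :=
        Real.tendsto_exp_atBot.comp h1
      have : (fun m : ℕ => Real.exp ((m : ℝ) * (-1 : ℝ))) = fun m : ℕ => Real.exp (-(m : ℝ)) := by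
        funext m
        rw [mul_neg_one]
      rw [this]
      exact h2
    have htend : Filter.Tendsto f Filter.atTop (nhds c') := by
      rw [tendsto_pi_nhds]
      intro i
      rw [tendsto_pi_nhds]
      intro j
      rw [tendsto_pi_nhds]
      intro k
      show Filter.Tendsto (fun m : ℕ => Real.exp (m * (a k - a i - a j)) * c i j k)
        Filter.atTop (nhds (c' i j k))
      by_cases hc0 : c i j k = 0
      · have hcz : c' i j k = 0 := by
          by_cases hX : X i j k ≠ 0 ∨ X j i k ≠ 0
          · rw [(hc'def i j k).1 hX, hc0]
          · push_neg at hX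
            exact (hc'def i j k).2 ⟨hX.1, hX.2⟩
        rw [hcz]
        have : (fun m : ℕ => Real.exp (m * (a k - a i - a j)) * c i j k)
            = fun _ : ℕ => (0 : ℝ) := by
          funext m
          rw [hc0, mul_zero]
        rw [this]
        exact tendsto_const_nhds
      · rcases lt_trichotomy i j with hij | hij | hij
        · by_cases hX : X i j k ≠ 0
          · have hr : a k - a i - a j = 0 := by
              have := ha i j k hij hc0
              rwa [if_pos hX] at this
            have hc'e : c' i j k = c i j k := (hc'def i j k).1 (Or.inl hX)
            rw [hc'e, hr]
            have : (fun m : ℕ => Real.exp (m * (0:ℝ)) * c i j k)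
                = fun _ : ℕ => c i j k := by
              funext m
              simp
            rw [this]
            exact tendsto_const_nhds
          · push_neg at hX
            have hX2 : X j i k = 0 := hsupp j i k (fun hcon => lt_asymm hij hcon.1)
            have hc'0 : c' i j k = 0 := (hc'def i j k).2 ⟨hX, hX2⟩
            have hr : a k - a i - a j = -1 := by
              have := ha i j k hij hc0
              rwa [if_neg (by simpa using hX)] at this
            rw [hc'0, hr]
            have := hexp_neg_lim.mul_const (c i j k)
            simpa using this
        · exfalso
          apply hc0
          subst hij
          have := hc.skew i i k
          linarith
        · have hcji : c j i k ≠ 0 := by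
            rw [hc.skew j i k]
            simpa using hc0
          by_cases hX : X j i k ≠ 0
          · have hr : a k - a j - a i = 0 := by
              have := ha j i k hij hcji
              rwa [if_pos hX] at this
            have hr' : a k - a i - a j = 0 := by linarith
            have hc'e : c' i j k = c i j k := (hc'def i j k).1 (Or.inr hX)
            rw [hc'e, hr']
            have : (fun m : ℕ => Real.exp (m * (0:ℝ)) * c i j k)
                = fun _ : ℕ => c i j k := by
              funext m
              simp
            rw [this]
            exact tendsto_const_nhds
          · push_neg at hX
            have hX2 : X i j k = 0 := hsupp i j k (fun hcon => lt_asymm hij hcon.1)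
            have hc'0 : c' i j k = 0 := (hc'def i j k).2 ⟨hX2, hX⟩
            have hr : a k - a j - a i = -1 := by
              have := ha j i k hij hcji
              rwa [if_neg (by simpa using hX)] at this
            have hr' : a k - a i - a j = -1 := by linarith
            rw [hc'0, hr']
            have := hexp_neg_lim.mul_const (c i j k)
            simpa using this
    exact mem_closure_of_tendsto htend (Filter.Eventually.of_forall hmem)
  -- Part 2 : IsNiceNilpotent c'
  have hnice : IsNiceNilpotent c' := by
    refine ⟨hskew', ?_, ?_, ?_, ?_⟩
    · exact AuxC.closure_jacobi c hc.jacobi hclos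
    · obtain ⟨N, hN⟩ := hc.nilpotent
      exact ⟨N, AuxC.closure_nilp c N hN hclos⟩
    · exact fun i j k k' h h' => hc.nice_k i j k k' (hc'sub _ _ _ h) (hc'sub _ _ _ h')
    · exact fun i j j' k h h' => hc.nice_j i j j' k (hc'sub _ _ _ h) (hc'sub _ _ _ h')
  -- Part 4 : c' = c when all X nonzero
  have heq : (∀ i j k : Fin n, i < j → c i j k ≠ 0 → X i j k ≠ 0) → c' = c := by
    intro hall
    funext i j k
    by_cases hc0 : c i j k = 0
    · by_cases hX : X i j k ≠ 0 ∨ X j i k ≠ 0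
      · rw [(hc'def i j k).1 hX]
      · push_neg at hX
        rw [(hc'def i j k).2 ⟨hX.1, hX.2⟩, hc0]
    · rcases lt_trichotomy i j with hij | hij | hij
      · exact (hc'def i j k).1 (Or.inl (hall i j k hij hc0))
      · exfalso
        apply hc0
        subst hij
        have := hc.skew i i k
        linarith
      · have hcji : c j i k ≠ 0 := by
          rw [hc.skew j i k]
          simpa using hc0
        exact (hc'def i j k).1 (Or.inr (hall j i k hij hcji))
  -- Part 5 : existence of the diagonal Einstein metric
  have hEexists : ∃ gv : Fin n → ℝ, (∀ i, gv i ≠ 0) ∧ EinsteinE c' (Matrix.diagonal gv) := by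
    obtain ⟨s, hs⟩ := hsurj (fun i j k => if X i j k < 0 then 1 else 0)
    obtain ⟨b, hb⟩ := Aux2.surj_a c hsurj
      (fun i j k => if X i j k = 0 then 0 else Real.log (|X i j k| / c i j k ^ 2))
    set ε : Fin n → ℝ := fun i => if s i = 1 then -1 else 1 with hε
    have hεne : ∀ i, ε i ≠ 0 := by
      intro i
      dsimp [ε]
      split <;> norm_num
    have hεinv : ∀ i, (ε i)⁻¹ = ε i := by
      intro i
      dsimp [ε]
      split <;> norm_num
    set gv : Fin n → ℝ := fun i => ε i * Real.exp (b i) with hgv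
    have hgvne : ∀ i, gv i ≠ 0 := fun i => mul_ne_zero (hεne i) (Real.exp_ne_zero _)
    refine ⟨gv, hgvne, ?_⟩
    rw [AuxB.einstein_iff c c' gv hc.nice_k hc.nice_j hc.skew hskew' hc'sub hgvne]
    intro h
    have hbet : ∀ i j l : Fin n,
        (if i < j ∧ c i j l ≠ 0 then c' i j l ^ 2 * gv l * (gv i)⁻¹ * (gv j)⁻¹ else 0)
          = X i j l := by
      intro i j l
      by_cases hP : i < j ∧ c i j l ≠ 0
      · rw [if_pos hP]
        by_cases hX : X i j l = 0
        · have hX2 : X j i l = 0 := hsupp j i l (fun hcon => lt_asymm hP.1 hcon.1)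
          rw [(hc'def i j l).2 ⟨hX, hX2⟩, hX]
          ring
        · rw [(hc'def i j l).1 (Or.inl hX)]
          have hsgn := hs i j l hP.1 hP.2
          rw [AuxD.row_dot2] at hsgn
          have hblog := hb i j l hP.1 hP.2
          rw [if_neg hX] at hblog
          have hcsq : (0:ℝ) < c i j l ^ 2 := pow_two_pos_of_ne_zero hP.2
          have habs : (0:ℝ) < |X i j l| := abs_pos.mpr hX
          have hexp : Real.exp (b l) * (Real.exp (b i))⁻¹ * (Real.exp (b j))⁻¹
              = |X i j l| / c i j l ^ 2 := by
            rw [← Real.exp_neg, ← Real.exp_neg, ← Real.exp_add, ← Real.exp_add]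
            rw [show b l + -b i + -b j = b l - b i - b j by ring, hblog]
            exact Real.exp_log (div_pos habs hcsq)
          have hsign : ε l * ε i * ε j = if X i j l < 0 then -1 else 1 := by
            dsimp [ε]
            rw [AuxD.sign_aux (s i) (s j) (s l)]
            by_cases hXneg : X i j l < 0
            · rw [if_pos hXneg] at hsgn
              rw [if_pos hXneg, if_pos hsgn.symm]
            · rw [if_neg hXneg] at hsgn
              rw [if_neg hXneg, if_neg (fun hcon =>
                (by decide : (0 : ZMod 2) ≠ 1) (hsgn.trans hcon))]
          calc c i j l ^ 2 * gv l * (gv i)⁻¹ * (gv j)⁻¹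
              = (ε l * ε i * ε j)
                * (Real.exp (b l) * (Real.exp (b i))⁻¹ * (Real.exp (b j))⁻¹)
                * c i j l ^ 2 := by
                dsimp [gv]
                rw [mul_inv, mul_inv, hεinv i, hεinv j]
                ring
            _ = (if X i j l < 0 then -1 else 1) * (|X i j l| / c i j l ^ 2)
                * c i j l ^ 2 := by rw [hsign, hexp]
            _ = (if X i j l < 0 then -1 else 1) * |X i j l| := by
                field_simp
                exact div_self hP.2
            _ = X i j l := by
                split_ifs with hXn
                · rw [abs_of_neg hXn]; ring
                · rw [abs_of_nonneg (le_of_not_gt hXn)]; ring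
      · rw [if_neg hP]
        exact (hsupp i j l hP).symm
    rw [Finset.sum_congr rfl fun i _ => Finset.sum_congr rfl fun j _ =>
      Finset.sum_congr rfl fun l _ => by rw [hbet i j l]]
    exact hK h
  refine ⟨hXuniq, hnice, hclos, heq, hEexists, ?_⟩
  -- Part 6 : uniqueness of the contraction
  intro cc hcc01 hccclos hccE i j k hij hcijk
  obtain ⟨gv2, hgv2, hE2⟩ := hccE
  have hccskew : ∀ i j k, cc i j k = - cc j i k := AuxC.closure_skew c hc.skew hccclos
  have hccsub : ∀ i j k, cc i j k ≠ 0 → c i j k ≠ 0 := by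
    intro i j k hne
    rcases hcc01 i j k with h1 | h1
    · rw [← h1]; exact hne
    · exact absurd h1 hne
  have hEsum := (AuxB.einstein_iff c cc gv2 hc.nice_k hc.nice_j hc.skew hccskew
    hccsub hgv2).mp hE2
  have hX''eq := hXuniq
    (fun i j l => if i < j ∧ c i j l ≠ 0 then cc i j l ^ 2 * gv2 l * (gv2 i)⁻¹ * (gv2 j)⁻¹ else 0)
    (fun i j k hn => if_neg hn) hEsum
  have hkey := congrFun (congrFun (congrFun hX''eq i) j) k
  rw [if_pos ⟨hij, hcijk⟩] at hkey
  constructor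
  · intro hccnz
    rw [← hkey]
    exact mul_ne_zero (mul_ne_zero (mul_ne_zero (pow_ne_zero 2 hccnz) (hgv2 k))
      (inv_ne_zero (hgv2 i))) (inv_ne_zero (hgv2 j))
  · intro hXnz hcc0
    apply hXnz
    rw [← hkey, hcc0]
    ring
end

section
/- For every integer n ≥ 8 there exists an n-dimensional real nilpotent Lie algebra 𝔤 admitting a nice basis and a diagonal metric (with respect to that basis) satisfying condition (E) (ric = ½ id); in particular, in every dimension n ≥ 8 there exists a nilpotent Lie group with a left-invariant pseudo-Riemannian Einstein metric of nonzero scalar curvature. -/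
set_option maxRecDepth 40000


open scoped BigOperators

namespace Constr

variable {n : ℕ}

/-- structure constants from a rational table supported on `i<j`. -/
noncomputable def cOf (q : Fin n → Fin n → Fin n → ℤ) : Fin n → Fin n → Fin n → ℝ :=
  fun i j k =>
    if i < j then Real.sqrt (q i j k) else if j < i then -Real.sqrt (q j i k) else 0

variable {q : Fin n → Fin n → Fin n → ℤ}

lemma cOf_skew (i j k : Fin n) : cOf q i j k = - cOf q j i k := by
  unfold cOf
  rcases lt_trichotomy i j with h | h | h
  · simp [h, not_lt.2 h.le]
  · subst h; simp
  · simp [h, not_lt.2 h.le]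

lemma cOf_ne_iff (hsupp : ∀ i j k, q i j k ≠ 0 → i < j) (hpos : ∀ i j k, 0 ≤ q i j k)
    (i j k : Fin n) : cOf q i j k ≠ 0 ↔ (q i j k ≠ 0 ∨ q j i k ≠ 0) := by
  unfold cOf
  rcases lt_trichotomy i j with h | h | h
  · rw [if_pos h]
    have hji : q j i k = 0 := by
      by_contra hc; exact absurd (hsupp _ _ _ hc) (not_lt.2 h.le)
    have : (0:ℝ) ≤ (q i j k : ℝ) := by exact_mod_cast hpos i j k
    constructor
    · intro hne; left; intro h0; rw [h0] at hne; simp at hne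
    · rintro (hne | hne)
      · intro h0
        have := Real.sqrt_eq_zero'.1 h0
        have : (q i j k : ℝ) = 0 := le_antisymm this ‹(0:ℝ) ≤ _›
        exact hne (by exact_mod_cast this)
      · exact absurd hne (by simp [hji])
  · subst h
    have h1 : q i i k = 0 := by
      by_contra hc; exact absurd (hsupp _ _ _ hc) (lt_irrefl i)
    simp [h1]
  · rw [if_neg (not_lt.2 h.le), if_pos h]
    have hij : q i j k = 0 := by
      by_contra hc; exact absurd (hsupp _ _ _ hc) (not_lt.2 h.le)
    have hp : (0:ℝ) ≤ (q j i k : ℝ) := by exact_mod_cast hpos j i k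
    constructor
    · intro hne; right; intro h0; rw [h0] at hne; simp at hne
    · rintro (hne | hne)
      · exact absurd hne (by simp [hij])
      · intro h0
        have h0' : Real.sqrt (q j i k) = 0 := by
          have := neg_eq_zero.1 h0; exact this
        have := Real.sqrt_eq_zero'.1 h0'
        have : (q j i k : ℝ) = 0 := le_antisymm this hp
        exact hne (by exact_mod_cast this)

lemma cOf_sq (hsupp : ∀ i j k, q i j k ≠ 0 → i < j) (hpos : ∀ i j k, 0 ≤ q i j k)
    (i j k : Fin n) : cOf q i j k * cOf q i j k = ((q i j k + q j i k : ℤ) : ℝ) := by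
  unfold cOf
  rcases lt_trichotomy i j with h | h | h
  · rw [if_pos h]
    have hji : q j i k = 0 := by
      by_contra hc; exact absurd (hsupp _ _ _ hc) (not_lt.2 h.le)
    have hp : (0:ℝ) ≤ (q i j k : ℝ) := by exact_mod_cast hpos i j k
    rw [Real.mul_self_sqrt hp]
    push_cast [hji]; ring
  · subst h
    have h1 : q i i k = 0 := by
      by_contra hc; exact absurd (hsupp _ _ _ hc) (lt_irrefl i)
    simp [h1]
  · rw [if_neg (not_lt.2 h.le), if_pos h]
    have hij : q i j k = 0 := by
      by_contra hc; exact absurd (hsupp _ _ _ hc) (not_lt.2 h.le)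
    have hp : (0:ℝ) ≤ (q j i k : ℝ) := by exact_mod_cast hpos j i k
    rw [neg_mul_neg, Real.mul_self_sqrt hp]
    push_cast [hij]; ring


variable {n : ℕ}

lemma bracket_bracket (c : Fin n → Fin n → Fin n → ℝ) (x y z : Fin n → ℝ) (l : Fin n) :
    bracket c (bracket c x y) z l
      = ∑ i, ∑ j, ∑ k, ∑ m, x i * y j * z k * (c i j m * c m k l) := by
  unfold bracket
  simp only [Finset.sum_mul, Finset.mul_sum]
  rw [Finset.sum_comm]
  conv_lhs => enter [2, k]; rw [Finset.sum_comm]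
  conv_lhs => enter [2, k, 2, i]; rw [Finset.sum_comm]
  rw [Finset.sum_comm]
  conv_lhs => enter [2, i]; rw [Finset.sum_comm]
  refine Finset.sum_congr rfl fun i _ => Finset.sum_congr rfl fun j _ =>
    Finset.sum_congr rfl fun k _ => Finset.sum_congr rfl fun m _ => by ring

/-- Jacobi identity from pointwise vanishing of the cyclic sum. -/
lemma jacobi_of_pointwise (c : Fin n → Fin n → Fin n → ℝ)
    (hpt : ∀ i j k m l, c i j m * c m k l + c j k m * c m i l + c k i m * c m j l = 0)
    (x y z : Fin n → ℝ) :
    bracket c (bracket c x y) z + bracket c (bracket c y z) x + bracket c (bracket c z x) y = 0 := by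
  funext l
  have e1 := bracket_bracket c x y z l
  have e2 := bracket_bracket c y z x l
  have e3 := bracket_bracket c z x y l
  have e2' : bracket c (bracket c y z) x l
      = ∑ i, ∑ j, ∑ k, ∑ m, x i * y j * z k * (c j k m * c m i l) := by
    rw [e2]
    conv_lhs => enter [2, a]; rw [Finset.sum_comm]
    rw [Finset.sum_comm]
    refine Finset.sum_congr rfl fun i _ => Finset.sum_congr rfl fun j _ =>
      Finset.sum_congr rfl fun k _ => Finset.sum_congr rfl fun m _ => by ring
  have e3' : bracket c (bracket c z x) y l
      = ∑ i, ∑ j, ∑ k, ∑ m, x i * y j * z k * (c k i m * c m j l) := by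
    rw [e3]
    rw [Finset.sum_comm]
    conv_lhs => enter [2, a]; rw [Finset.sum_comm]
    refine Finset.sum_congr rfl fun i _ => Finset.sum_congr rfl fun j _ =>
      Finset.sum_congr rfl fun k _ => Finset.sum_congr rfl fun m _ => by ring
  have hsum : (bracket c (bracket c x y) z + bracket c (bracket c y z) x + bracket c (bracket c z x) y) l
      = bracket c (bracket c x y) z l + bracket c (bracket c y z) x l + bracket c (bracket c z x) y l := rfl
  rw [hsum, e1, e2', e3']
  rw [← Finset.sum_add_distrib, ← Finset.sum_add_distrib]
  simp only [Pi.zero_apply]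
  rw [show (0:ℝ) = ∑ _i : Fin n, (0:ℝ) by simp]
  refine Finset.sum_congr rfl fun i _ => ?_
  rw [← Finset.sum_add_distrib, ← Finset.sum_add_distrib]
  rw [show (0:ℝ) = ∑ _j : Fin n, (0:ℝ) by simp]
  refine Finset.sum_congr rfl fun j _ => ?_
  rw [← Finset.sum_add_distrib, ← Finset.sum_add_distrib]
  rw [show (0:ℝ) = ∑ _k : Fin n, (0:ℝ) by simp]
  refine Finset.sum_congr rfl fun k _ => ?_
  rw [← Finset.sum_add_distrib, ← Finset.sum_add_distrib]
  rw [show (0:ℝ) = ∑ _m : Fin n, (0:ℝ) by simp]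
  refine Finset.sum_congr rfl fun m _ => ?_
  calc x i * y j * z k * (c i j m * c m k l) + x i * y j * z k * (c j k m * c m i l)
        + x i * y j * z k * (c k i m * c m j l)
      = x i * y j * z k * (c i j m * c m k l + c j k m * c m i l + c k i m * c m j l) := by ring
    _ = 0 := by rw [hpt i j k m l, mul_zero]

/-- Nilpotency from a strictly monotone weight function. -/
lemma nilpotent_of_weights (c : Fin n → Fin n → Fin n → ℝ) (w : Fin n → ℕ) (N : ℕ)
    (hw : ∀ i j k, c i j k ≠ 0 → w j < w k) (hN : ∀ k, w k < N) :
    ∀ (v : Fin N → Fin n → ℝ) (u : Fin n → ℝ), (List.ofFn v).foldr (bracket c) u = 0 := by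
  have key : ∀ (L : List (Fin n → ℝ)) (u : Fin n → ℝ) (k : Fin n),
      w k < L.length → L.foldr (bracket c) u k = 0 := by
    intro L
    induction L with
    | nil => intro u k hk; simp at hk
    | cons a L ih =>
      intro u k hk
      show bracket c a (L.foldr (bracket c) u) k = 0
      have hexp : bracket c a (L.foldr (bracket c) u) k
          = ∑ i, ∑ j, a i * (L.foldr (bracket c) u) j * c i j k := rfl
      rw [hexp]
      refine Finset.sum_eq_zero fun i _ => Finset.sum_eq_zero fun j _ => ?_
      by_cases hc : c i j k = 0
      · rw [hc, mul_zero]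
      · have hzero : L.foldr (bracket c) u j = 0 := by
          refine ih u j ?_
          have hj : w j < w k := hw i j k hc
          simp only [List.length_cons] at hk
          omega
        rw [hzero]; ring
  intro v u
  funext k
  have : ((List.ofFn v).foldr (bracket c) u) k = 0 := by
    refine key _ u k ?_
    simpa using hN k
  simpa using this


variable {n : ℕ}

lemma inv_diag (gv : Fin n → ℝ) (hg : ∀ i, gv i * gv i = 1) :
    (Matrix.diagonal gv)⁻¹ = Matrix.diagonal gv := by
  refine Matrix.inv_eq_right_inv ?_
  rw [Matrix.diagonal_mul_diagonal]
  have : (fun i => gv i * gv i) = fun _ => (1:ℝ) := funext hg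
  rw [this, Matrix.diagonal_one]

lemma contract (gv : Fin n → ℝ) (a : Fin n) (f : Fin n → ℝ) :
    (∑ m, Matrix.diagonal gv a m * f m) = gv a * f a := by
  simp [Matrix.diagonal_apply, ite_mul, zero_mul, Finset.sum_ite_eq]

lemma Ric_diag_entry (c : Fin n → Fin n → Fin n → ℝ) (gv : Fin n → ℝ)
    (hg : ∀ i, gv i * gv i = 1) (h k : Fin n) :
    Ric c (Matrix.diagonal gv) h k
      = (1/4 : ℝ) * (∑ i, ∑ l, gv i * gv l * gv h * (c i l k * c i l h))
        - (1/2 : ℝ) * (∑ j, ∑ i, gv k * gv j * gv i * (c h j i * c k j i)) := by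
  unfold Ric
  rw [Matrix.of_apply, inv_diag gv hg]
  set D := Matrix.diagonal gv with hD
  have hr1 : ∀ i m l p q : Fin n, D i m * D l p * D h q * c i l k * c m p q
      = D i m * (D l p * (D h q * (c i l k * c m p q))) := by intros; ring
  have hr2 : ∀ m j p i q : Fin n, D k m * D j p * D i q * c h j i * c m p q
      = D k m * (D j p * (c h j i * (D i q * c m p q))) := by intros; ring
  simp_rw [hr1, hr2, ← Finset.mul_sum, hD, contract gv, Finset.mul_sum]
  exact congrArg₂ (· - ·)
    (Finset.sum_congr rfl fun i _ => Finset.sum_congr rfl fun l _ => by ring)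
    (Finset.sum_congr rfl fun j _ => Finset.sum_congr rfl fun i _ => by ring)

end Constr

namespace Constr

theorem goodData {n : ℕ} (q : Fin n → Fin n → Fin n → ℤ) (ε : Fin n → ℤ) (w : Fin n → ℕ) (N : ℕ)
    (hpos : ∀ i j k, 0 ≤ q i j k)
    (hsupp : ∀ i j k, q i j k ≠ 0 → i < j)
    (hk : ∀ i j k, (q i j k ≠ 0 ∨ q j i k ≠ 0) → ∀ k', (q i j k' ≠ 0 ∨ q j i k' ≠ 0) → k = k')
    (hj : ∀ i j k, (q i j k ≠ 0 ∨ q j i k ≠ 0) → ∀ j', (q i j' k ≠ 0 ∨ q j' i k ≠ 0) → j = j')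
    (h6 : ∀ m k l, (q m k l ≠ 0 ∨ q k m l ≠ 0) → ∀ i j, (q i j m ≠ 0 ∨ q j i m ≠ 0) → k = i ∨ k = j)
    (hw : ∀ i j k, (q i j k ≠ 0 ∨ q j i k ≠ 0) → w j < w k)
    (hN : ∀ k, w k < N)
    (hε : ∀ i, ε i = 1 ∨ ε i = -1)
    (hE : ∀ h, ε h * (∑ i, ∑ l, ε i * ε l * (q i l h + q l i h))
        - 2 * (ε h * (∑ j, ∑ i, ε j * ε i * (q h j i + q j h i))) = 2) :
    ∃ c : Fin n → Fin n → Fin n → ℝ, IsNiceNilpotent c ∧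
      ∃ gv : Fin n → ℝ, (∀ i, gv i ≠ 0) ∧ EinsteinE c (Matrix.diagonal gv) := by
  set c : Fin n → Fin n → Fin n → ℝ := cOf q with hc
  have cnz : ∀ i j k, c i j k ≠ 0 ↔ (q i j k ≠ 0 ∨ q j i k ≠ 0) := fun i j k =>
    cOf_ne_iff hsupp hpos i j k
  have csq : ∀ i j k, c i j k * c i j k = ((q i j k + q j i k : ℤ) : ℝ) := fun i j k =>
    cOf_sq hsupp hpos i j k
  have cskew : ∀ i j k, c i j k = - c j i k := fun i j k => cOf_skew i j k
  have czero : ∀ i k, c i i k = 0 := by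
    intro i k
    have := cskew i i k
    linarith [this]
  refine ⟨c, ⟨cskew, ?_, ?_, ?_, ?_⟩, ?_⟩
  · -- jacobi
    refine jacobi_of_pointwise c ?_
    intro i j k m l
    by_cases hij : i = j
    · subst hij
      rw [czero, cskew k i m]
      ring
    by_cases hik : i = k
    · subst hik
      rw [czero, cskew j i m]
      ring
    by_cases hjk : j = k
    · subst hjk
      rw [czero, cskew j i m]
      ring
    · -- pairwise distinct: each product vanishes
      have t1 : c i j m * c m k l = 0 := by
        by_cases h1 : c i j m = 0
        · rw [h1, zero_mul]
        · by_cases h2 : c m k l = 0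
          · rw [h2, mul_zero]
          · rcases h6 m k l ((cnz m k l).1 h2) i j ((cnz i j m).1 h1) with h | h
            · exact absurd h.symm hik
            · exact absurd h.symm hjk
      have t2 : c j k m * c m i l = 0 := by
        by_cases h1 : c j k m = 0
        · rw [h1, zero_mul]
        · by_cases h2 : c m i l = 0
          · rw [h2, mul_zero]
          · rcases h6 m i l ((cnz m i l).1 h2) j k ((cnz j k m).1 h1) with h | h
            · exact absurd h hij
            · exact absurd h hik
      have t3 : c k i m * c m j l = 0 := by
        by_cases h1 : c k i m = 0
        · rw [h1, zero_mul]
        · by_cases h2 : c m j l = 0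
          · rw [h2, mul_zero]
          · rcases h6 m j l ((cnz m j l).1 h2) k i ((cnz k i m).1 h1) with h | h
            · exact absurd h hjk
            · exact absurd h.symm hij
      rw [t1, t2, t3]; ring
  · -- nilpotent
    exact ⟨N, nilpotent_of_weights c w N (fun i j k hcne => hw i j k ((cnz i j k).1 hcne)) hN⟩
  · -- nice_k
    intro i j k k' h1 h2
    exact hk i j k ((cnz i j k).1 h1) k' ((cnz i j k').1 h2)
  · -- nice_j
    intro i j j' k h1 h2
    exact hj i j k ((cnz i j k).1 h1) j' ((cnz i j' k).1 h2)
  · -- metric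
    refine ⟨fun i => ((ε i : ℤ) : ℝ), ?_, ?_⟩
    · intro i
      rcases hε i with h | h <;> simp [h]
    · set gv : Fin n → ℝ := fun i => ((ε i : ℤ) : ℝ) with hgv
      have hg : ∀ i, gv i * gv i = 1 := by
        intro i
        rcases hε i with h | h <;> simp [hgv, h]
      unfold EinsteinE
      ext h k
      rw [Ric_diag_entry c gv hg h k]
      by_cases hhk : h = k
      · subst hhk
        have e1 : (∑ i, ∑ l, gv i * gv l * gv h * (c i l h * c i l h))
            = ((ε h * (∑ i, ∑ l, ε i * ε l * (q i l h + q l i h)) : ℤ) : ℝ) := by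
          push_cast
          rw [Finset.mul_sum]
          refine Finset.sum_congr rfl fun i _ => ?_
          rw [Finset.mul_sum]
          refine Finset.sum_congr rfl fun l _ => ?_
          rw [csq i l h]
          push_cast
          ring
        have e2 : (∑ j, ∑ i, gv h * gv j * gv i * (c h j i * c h j i))
            = ((ε h * (∑ j, ∑ i, ε j * ε i * (q h j i + q j h i)) : ℤ) : ℝ) := by
          push_cast
          rw [Finset.mul_sum]
          refine Finset.sum_congr rfl fun j _ => ?_
          rw [Finset.mul_sum]
          refine Finset.sum_congr rfl fun i _ => ?_
          rw [csq h j i]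
          push_cast
          ring
        rw [e1, e2]
        have hq := hE h
        have : ((ε h * (∑ i, ∑ l, ε i * ε l * (q i l h + q l i h)) : ℤ) : ℝ)
            - 2 * ((ε h * (∑ j, ∑ i, ε j * ε i * (q h j i + q j h i)) : ℤ) : ℝ) = 2 := by
          rw [show ((ε h * (∑ i, ∑ l, ε i * ε l * (q i l h + q l i h)) : ℤ) : ℝ)
            - 2 * ((ε h * (∑ j, ∑ i, ε j * ε i * (q h j i + q j h i)) : ℤ) : ℝ)
            = ((ε h * (∑ i, ∑ l, ε i * ε l * (q i l h + q l i h))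
              - 2 * (ε h * (∑ j, ∑ i, ε j * ε i * (q h j i + q j h i))) : ℤ) : ℝ) by push_cast; ring]
          rw [hq]
          norm_num
        rw [Matrix.smul_apply, Matrix.one_apply_eq, smul_eq_mul, mul_one]
        linarith [this]
      · have z1 : ∀ i l : Fin n, c i l k * c i l h = 0 := by
          intro i l
          by_cases h1 : c i l k = 0
          · rw [h1, zero_mul]
          · by_cases h2 : c i l h = 0
            · rw [h2, mul_zero]
            · exact absurd (hk i l k ((cnz i l k).1 h1) h ((cnz i l h).1 h2)).symm hhk
        have z2 : ∀ j i : Fin n, c h j i * c k j i = 0 := by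
          intro j i
          by_cases h1 : c h j i = 0
          · rw [h1, zero_mul]
          · by_cases h2 : c k j i = 0
            · rw [h2, mul_zero]
            · refine absurd (hj j h i ?_ k ?_) hhk
              · rcases (cnz h j i).1 h1 with hx | hx
                · exact Or.inr hx
                · exact Or.inl hx
              · rcases (cnz k j i).1 h2 with hx | hx
                · exact Or.inr hx
                · exact Or.inl hx
        have s1 : (∑ i, ∑ l, gv i * gv l * gv h * (c i l k * c i l h)) = 0 := by
          refine Finset.sum_eq_zero fun i _ => Finset.sum_eq_zero fun l _ => ?_
          rw [z1 i l, mul_zero]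
        have s2 : (∑ j, ∑ i, gv k * gv j * gv i * (c h j i * c k j i)) = 0 := by
          refine Finset.sum_eq_zero fun j _ => Finset.sum_eq_zero fun i _ => ?_
          rw [z2 j i, mul_zero]
        rw [s1, s2, Matrix.smul_apply, Matrix.one_apply_ne hhk, smul_zero]
        ring

end Constr

namespace Constr

def Good (n : ℕ) : Prop :=
  ∃ (q : Fin n → Fin n → Fin n → ℤ) (ε : Fin n → ℤ) (w : Fin n → ℕ) (N : ℕ),
    (∀ i j k, 0 ≤ q i j k) ∧
    (∀ i j k, q i j k ≠ 0 → i < j) ∧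
    (∀ i j k, (q i j k ≠ 0 ∨ q j i k ≠ 0) → ∀ k', (q i j k' ≠ 0 ∨ q j i k' ≠ 0) → k = k') ∧
    (∀ i j k, (q i j k ≠ 0 ∨ q j i k ≠ 0) → ∀ j', (q i j' k ≠ 0 ∨ q j' i k ≠ 0) → j = j') ∧
    (∀ m k l, (q m k l ≠ 0 ∨ q k m l ≠ 0) → ∀ i j, (q i j m ≠ 0 ∨ q j i m ≠ 0) → k = i ∨ k = j) ∧
    (∀ i j k, (q i j k ≠ 0 ∨ q j i k ≠ 0) → w j < w k) ∧
    (∀ k, w k < N) ∧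
    (∀ i, ε i = 1 ∨ ε i = -1) ∧
    (∀ h, ε h * (∑ i, ∑ l, ε i * ε l * (q i l h + q l i h))
        - 2 * (ε h * (∑ j, ∑ i, ε j * ε i * (q h j i + q j h i))) = 2)

def mix2 {a b : ℕ} (f1 : Fin a → Fin a → Fin a → ℤ) (f2 : Fin b → Fin b → Fin b → ℤ) :
    Fin (a + b) → Fin (a + b) → Fin (a + b) → ℤ :=
  fun i j k =>
    Fin.addCases
      (fun i1 => Fin.addCases
        (fun j1 => Fin.addCases (fun k1 => f1 i1 j1 k1) (fun _ => 0) k)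
        (fun _ => 0) j)
      (fun i2 => Fin.addCases
        (fun _ => 0)
        (fun j2 => Fin.addCases (fun _ => 0) (fun k2 => f2 i2 j2 k2) k) j) i

theorem good_sum {a b : ℕ} (ha : Good a) (hb : Good b) : Good (a + b) := by
  obtain ⟨q1, e1, w1, N1, hpos1, hsupp1, hk1, hj1, h61, hw1, hN1, he1, hE1⟩ := ha
  obtain ⟨q2, e2, w2, N2, hpos2, hsupp2, hk2, hj2, h62, hw2, hN2, he2, hE2⟩ := hb
  refine ⟨mix2 q1 q2, Fin.addCases e1 e2, Fin.addCases w1 w2, N1 + N2,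
    ?_, ?_, ?_, ?_, ?_, ?_, ?_, ?_, ?_⟩
  · -- pos
    intro i j k
    induction i using Fin.addCases with
    | left i1 =>
      induction j using Fin.addCases with
      | left j1 =>
        induction k using Fin.addCases with
        | left k1 => simpa [mix2] using hpos1 i1 j1 k1
        | right k2 => simp [mix2]
      | right j2 => simp [mix2]
    | right i2 =>
      induction j using Fin.addCases with
      | left j1 => simp [mix2]
      | right j2 =>
        induction k using Fin.addCases with
        | left k1 => simp [mix2]
        | right k2 => simpa [mix2] using hpos2 i2 j2 k2
  · -- supp
    intro i j k
    induction i using Fin.addCases with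
    | left i1 =>
      induction j using Fin.addCases with
      | left j1 =>
        induction k using Fin.addCases with
        | left k1 =>
          intro hne
          have := hsupp1 i1 j1 k1 (by simpa [mix2] using hne)
          simp only [Fin.lt_def, Fin.coe_castAdd]
          exact this
        | right k2 => simp [mix2]
      | right j2 =>
        intro _
        simp only [Fin.lt_def, Fin.coe_castAdd, Fin.coe_natAdd]
        omega
    | right i2 =>
      induction j using Fin.addCases with
      | left j1 => simp [mix2]
      | right j2 =>
        induction k using Fin.addCases with
        | left k1 => simp [mix2]
        | right k2 =>
          intro hne
          have := hsupp2 i2 j2 k2 (by simpa [mix2] using hne)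
          simp only [Fin.lt_def, Fin.coe_natAdd]
          omega
  · -- hk
    intro i j k
    induction i using Fin.addCases with
    | left i1 =>
      induction j using Fin.addCases with
      | left j1 =>
        induction k using Fin.addCases with
        | left k1 =>
          intro hp k'
          induction k' using Fin.addCases with
          | left k1' =>
            intro hp'
            exact congrArg (Fin.castAdd b)
              (hk1 i1 j1 k1 (by simpa [mix2] using hp) k1' (by simpa [mix2] using hp'))
          | right k2' => simp [mix2]
        | right k2 => simp [mix2]
      | right j2 => simp [mix2]
    | right i2 =>
      induction j using Fin.addCases with
      | left j1 => simp [mix2]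
      | right j2 =>
        induction k using Fin.addCases with
        | left k1 => simp [mix2]
        | right k2 =>
          intro hp k'
          induction k' using Fin.addCases with
          | left k1' => simp [mix2]
          | right k2' =>
            intro hp'
            exact congrArg (Fin.natAdd a)
              (hk2 i2 j2 k2 (by simpa [mix2] using hp) k2' (by simpa [mix2] using hp'))
  · -- hj
    intro i j k
    induction i using Fin.addCases with
    | left i1 =>
      induction j using Fin.addCases with
      | left j1 =>
        induction k using Fin.addCases with
        | left k1 =>
          intro hp j'
          induction j' using Fin.addCases with
          | left j1' =>
            intro hp'
            exact congrArg (Fin.castAdd b)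
              (hj1 i1 j1 k1 (by simpa [mix2] using hp) j1' (by simpa [mix2] using hp'))
          | right j2' => simp [mix2]
        | right k2 => simp [mix2]
      | right j2 => simp [mix2]
    | right i2 =>
      induction j using Fin.addCases with
      | left j1 => simp [mix2]
      | right j2 =>
        induction k using Fin.addCases with
        | left k1 => simp [mix2]
        | right k2 =>
          intro hp j'
          induction j' using Fin.addCases with
          | left j1' => simp [mix2]
          | right j2' =>
            intro hp'
            exact congrArg (Fin.natAdd a)
              (hj2 i2 j2 k2 (by simpa [mix2] using hp) j2' (by simpa [mix2] using hp'))
  · -- h6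
    intro m k l
    induction m using Fin.addCases with
    | left m1 =>
      induction k using Fin.addCases with
      | left k1 =>
        induction l using Fin.addCases with
        | left l1 =>
          intro hp i j
          induction i using Fin.addCases with
          | left i1 =>
            induction j using Fin.addCases with
            | left j1 =>
              intro hp'
              exact (h61 m1 k1 l1 (by simpa [mix2] using hp) i1 j1
                (by simpa [mix2] using hp')).imp
                (congrArg (Fin.castAdd b)) (congrArg (Fin.castAdd b))
            | right j2 => simp [mix2]
          | right i2 =>
            induction j using Fin.addCases with
            | left j1 => simp [mix2]
            | right j2 => simp [mix2]
        | right l2 => simp [mix2]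
      | right k2 => simp [mix2]
    | right m2 =>
      induction k using Fin.addCases with
      | left k1 => simp [mix2]
      | right k2 =>
        induction l using Fin.addCases with
        | left l1 => simp [mix2]
        | right l2 =>
          intro hp i j
          induction i using Fin.addCases with
          | left i1 =>
            induction j using Fin.addCases with
            | left j1 => simp [mix2]
            | right j2 => simp [mix2]
          | right i2 =>
            induction j using Fin.addCases with
            | left j1 => simp [mix2]
            | right j2 =>
              intro hp'
              exact (h62 m2 k2 l2 (by simpa [mix2] using hp) i2 j2
                (by simpa [mix2] using hp')).imp
                (congrArg (Fin.natAdd a)) (congrArg (Fin.natAdd a))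
  · -- hw
    intro i j k
    induction i using Fin.addCases with
    | left i1 =>
      induction j using Fin.addCases with
      | left j1 =>
        induction k using Fin.addCases with
        | left k1 =>
          intro hp
          simpa [Fin.addCases_left] using hw1 i1 j1 k1 (by simpa [mix2] using hp)
        | right k2 => simp [mix2]
      | right j2 => simp [mix2]
    | right i2 =>
      induction j using Fin.addCases with
      | left j1 => simp [mix2]
      | right j2 =>
        induction k using Fin.addCases with
        | left k1 => simp [mix2]
        | right k2 =>
          intro hp
          simpa [Fin.addCases_right] using hw2 i2 j2 k2 (by simpa [mix2] using hp)
  · -- hN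
    intro k
    induction k using Fin.addCases with
    | left k1 =>
      have := hN1 k1
      simp only [Fin.addCases_left]
      omega
    | right k2 =>
      have := hN2 k2
      simp only [Fin.addCases_right]
      omega
  · -- he
    intro i
    induction i using Fin.addCases with
    | left i1 => simpa using he1 i1
    | right i2 => simpa using he2 i2
  · -- hE
    intro h
    induction h using Fin.addCases with
    | left h1 =>
      simp only [Fin.sum_univ_add, Fin.addCases_left, Fin.addCases_right, mix2,
        add_zero, zero_add, mul_zero, zero_mul, Finset.sum_const_zero]
      simpa using hE1 h1
    | right h2 =>
      simp only [Fin.sum_univ_add, Fin.addCases_left, Fin.addCases_right, mix2,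
        add_zero, zero_add, mul_zero, zero_mul, Finset.sum_const_zero]
      simpa using hE2 h2


def q8 : Fin 8 → Fin 8 → Fin 8 → ℤ := fun i j k =>
  match i.val, j.val, k.val with
  | 3, 5, 6 => 3
  | 0, 2, 1 => 5
  | 0, 1, 4 => 3
  | 3, 7, 5 => 5
  | 2, 3, 4 => 7
  | 1, 2, 6 => 3
  | 0, 7, 6 => 7
  | 5, 7, 4 => 3
  | _, _, _ => 0
def e8 : Fin 8 → ℤ := ![1, -1, 1, 1, 1, -1, 1, 1]
def w8 : Fin 8 → ℕ := ![1, 2, 1, 1, 3, 2, 3, 1]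
theorem good8 : Good 8 :=
  ⟨q8, e8, w8, 4, by decide, by decide, by decide, by decide, by decide,
    by decide, by decide, by decide, by decide⟩

def q9 : Fin 9 → Fin 9 → Fin 9 → ℤ := fun i j k =>
  match i.val, j.val, k.val with
  | 0, 8, 6 => 18
  | 5, 8, 7 => 2
  | 0, 4, 1 => 12
  | 4, 5, 6 => 17
  | 2, 8, 3 => 21
  | 2, 4, 7 => 20
  | 0, 5, 3 => 14
  | 1, 4, 3 => 8
  | 0, 1, 7 => 21
  | _, _, _ => 0
def e9 : Fin 9 → ℤ := ![-1, 1, 1, 1, 1, -1, 1, 1, -1]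
def w9 : Fin 9 → ℕ := ![1, 2, 1, 3, 1, 1, 2, 3, 1]
theorem good9 : Good 9 :=
  ⟨q9, e9, w9, 4, by decide, by decide, by decide, by decide, by decide,
    by decide, by decide, by decide, by decide⟩

def q10 : Fin 10 → Fin 10 → Fin 10 → ℤ := fun i j k =>
  match i.val, j.val, k.val with
  | 0, 1, 3 => 3
  | 1, 2, 9 => 12
  | 6, 8, 4 => 2
  | 4, 8, 9 => 3
  | 0, 5, 9 => 16
  | 5, 6, 3 => 8
  | 5, 8, 6 => 9
  | 0, 2, 1 => 14
  | 2, 7, 3 => 12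
  | 2, 8, 7 => 13
  | _, _, _ => 0
def e10 : Fin 10 → ℤ := ![1, 1, -1, -1, 1, 1, 1, 1, -1, 1]
def w10 : Fin 10 → ℕ := ![1, 2, 1, 3, 3, 1, 2, 2, 1, 4]
theorem good10 : Good 10 :=
  ⟨q10, e10, w10, 5, by decide, by decide, by decide, by decide, by decide,
    by decide, by decide, by decide, by decide⟩

def q11 : Fin 11 → Fin 11 → Fin 11 → ℤ := fun i j k =>
  match i.val, j.val, k.val with
  | 8, 10, 6 => 5
  | 3, 8, 0 => 7
  | 8, 9, 2 => 8
  | 1, 8, 5 => 6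
  | 9, 10, 5 => 9
  | 2, 8, 1 => 5
  | 3, 4, 5 => 2
  | 7, 10, 0 => 8
  | 2, 9, 6 => 4
  | 4, 8, 3 => 6
  | 4, 9, 0 => 2
  | 4, 10, 7 => 7
  | _, _, _ => 0
def e11 : Fin 11 → ℤ := ![1, 1, 1, -1, 1, 1, -1, -1, -1, 1, 1]
def w11 : Fin 11 → ℕ := ![3, 3, 2, 2, 1, 4, 3, 2, 1, 1, 1]
theorem good11 : Good 11 :=
  ⟨q11, e11, w11, 5, by decide, by decide, by decide, by decide, by decide,
    by decide, by decide, by decide, by decide⟩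

def q12 : Fin 12 → Fin 12 → Fin 12 → ℤ := fun i j k =>
  match i.val, j.val, k.val with
  | 0, 7, 1 => 8
  | 5, 11, 8 => 9
  | 8, 11, 1 => 4
  | 4, 9, 2 => 15
  | 6, 7, 3 => 16
  | 5, 8, 3 => 6
  | 2, 9, 1 => 9
  | 5, 9, 10 => 10
  | 7, 9, 0 => 21
  | 7, 11, 10 => 12
  | 0, 9, 3 => 14
  | 2, 4, 3 => 5
  | 4, 6, 10 => 21
  | 5, 6, 1 => 4
  | _, _, _ => 0
def e12 : Fin 12 → ℤ := ![-1, -1, 1, -1, -1, -1, 1, -1, -1, -1, 1, -1]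
def w12 : Fin 12 → ℕ := ![2, 3, 2, 3, 1, 1, 1, 1, 2, 1, 2, 1]
theorem good12 : Good 12 :=
  ⟨q12, e12, w12, 4, by decide, by decide, by decide, by decide, by decide,
    by decide, by decide, by decide, by decide⟩

def q13 : Fin 13 → Fin 13 → Fin 13 → ℤ := fun i j k =>
  match i.val, j.val, k.val with
  | 0, 2, 3 => 43
  | 5, 10, 11 => 12
  | 0, 1, 2 => 23
  | 5, 6, 4 => 36
  | 10, 11, 3 => 13
  | 7, 10, 9 => 56
  | 1, 2, 9 => 21
  | 7, 12, 3 => 29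
  | 5, 7, 12 => 28
  | 0, 6, 9 => 36
  | 0, 10, 4 => 32
  | 1, 8, 4 => 3
  | 5, 8, 9 => 2
  | 0, 5, 6 => 1
  | _, _, _ => 0
def e13 : Fin 13 → ℤ := ![1, 1, 1, 1, 1, 1, 1, 1, -1, -1, -1, 1, -1]
def w13 : Fin 13 → ℕ := ![1, 1, 2, 3, 3, 1, 2, 1, 1, 3, 1, 2, 2]
theorem good13 : Good 13 :=
  ⟨q13, e13, w13, 4, by decide, by decide, by decide, by decide, by decide,
    by decide, by decide, by decide, by decide⟩

def q14 : Fin 14 → Fin 14 → Fin 14 → ℤ := fun i j k =>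
  match i.val, j.val, k.val with
  | 0, 2, 11 => 15
  | 0, 5, 12 => 13
  | 6, 7, 13 => 11
  | 5, 10, 13 => 14
  | 4, 5, 8 => 3
  | 1, 2, 9 => 2
  | 5, 12, 11 => 12
  | 2, 4, 3 => 12
  | 2, 7, 6 => 6
  | 1, 10, 8 => 6
  | 1, 5, 3 => 7
  | 4, 10, 11 => 2
  | 4, 7, 9 => 10
  | 0, 12, 13 => 2
  | 0, 7, 3 => 6
  | 2, 6, 8 => 4
  | 0, 10, 9 => 7
  | _, _, _ => 0
def e14 : Fin 14 → ℤ := ![1, 1, 1, 1, -1, 1, -1, 1, -1, -1, 1, 1, -1, 1]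
def w14 : Fin 14 → ℕ := ![1, 1, 1, 2, 1, 1, 2, 1, 3, 2, 1, 3, 2, 3]
theorem good14 : Good 14 :=
  ⟨q14, e14, w14, 4, by decide, by decide, by decide, by decide, by decide,
    by decide, by decide, by decide, by decide⟩

def q15 : Fin 15 → Fin 15 → Fin 15 → ℤ := fun i j k =>
  match i.val, j.val, k.val with
  | 12, 14, 0 => 2
  | 1, 12, 13 => 6
  | 1, 2, 4 => 14
  | 6, 9, 8 => 10
  | 9, 12, 4 => 15
  | 3, 10, 13 => 7
  | 2, 14, 13 => 1
  | 1, 10, 3 => 6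
  | 5, 6, 13 => 15
  | 6, 7, 4 => 4
  | 1, 3, 11 => 14
  | 1, 6, 0 => 1
  | 7, 12, 8 => 9
  | 2, 6, 5 => 14
  | 6, 12, 11 => 15
  | 10, 14, 4 => 2
  | 7, 9, 13 => 4
  | _, _, _ => 0
def e15 : Fin 15 → ℤ := ![1, -1, 1, -1, -1, -1, 1, -1, -1, -1, -1, -1, -1, 1, -1]
def w15 : Fin 15 → ℕ := ![2, 1, 1, 2, 2, 2, 1, 1, 2, 1, 1, 3, 1, 3, 1]
theorem good15 : Good 15 :=
  ⟨q15, e15, w15, 4, by decide, by decide, by decide, by decide, by decide,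
    by decide, by decide, by decide, by decide⟩

theorem good_spec {n : ℕ} (h : Good n) :
    ∃ c : Fin n → Fin n → Fin n → ℝ, IsNiceNilpotent c ∧
      ∃ gv : Fin n → ℝ, (∀ i, gv i ≠ 0) ∧ EinsteinE c (Matrix.diagonal gv) := by
  obtain ⟨q, ε, w, N, h1, h2, h3, h4, h5, h6, h7, h8, h9⟩ := h
  exact goodData q ε w N h1 h2 h3 h4 h5 h6 h7 h8 h9

end Constr

/-- In every dimension `n ≥ 8` there is a nilpotent Lie algebra with a nice basis and a
diagonal metric satisfying (E) `ric = ½ id`; equivalently, a nilpotent Lie group with a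
left-invariant pseudo-Riemannian Einstein metric of nonzero scalar curvature. -/
theorem exists_einstein_nilpotent_in_all_dimensions :
    ∀ n : ℕ, 8 ≤ n → ∃ c : Fin n → Fin n → Fin n → ℝ,
      IsNiceNilpotent c ∧
      ∃ gv : Fin n → ℝ, (∀ i, gv i ≠ 0) ∧ EinsteinE c (Matrix.diagonal gv) := by
  have good : ∀ m : ℕ, 8 ≤ m → Constr.Good m := by
    intro m
    induction m using Nat.strong_induction_on with
    | _ m ih =>
      intro hm
      by_cases hlt : m < 16
      · interval_cases m
        · exact Constr.good8
        · exact Constr.good9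
        · exact Constr.good10
        · exact Constr.good11
        · exact Constr.good12
        · exact Constr.good13
        · exact Constr.good14
        · exact Constr.good15
      · have h1 : 8 ≤ m - 8 := by omega
        have h2 : m - 8 < m := by omega
        have := Constr.good_sum (ih (m - 8) h2 h1) Constr.good8
        have hcancel : m - 8 + 8 = m := by omega
        rwa [hcancel] at this
  intro n hn
  exact Constr.good_spec (good n hn)
end

section
/- Let 𝔤 be an n-dimensional real nilpotent Lie algebra with a nice basis e₁,…,eₙ whose mod-2 root matrix M_{Δ,2} is surjective. Suppose i₀ < j₀ are indices with [e_{i₀}, e_{j₀}] = 0 and such that the 2-form ω = e^{i₀} ∧ e^{j₀} is closed, i.e. ω([x,y],z) + ω([y,z],x) + ω([z,x],y) = 0 for all x,y,z ∈ 𝔤. Then the central extension 𝔥 = 𝔤 ⊕ ℝ with bracket [(x,s),(y,t)] = ([x,y], ω(x,y)) is a nilpotent Lie algebra, the basis e₁,…,eₙ,e_{n+1} = (0,1) is a nice basis of 𝔥, and the mod-2 root matrix of 𝔥 is surjective. -/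
open scoped BigOperators

/-- Structure constants of the one-bracket central extension `𝔥 = 𝔤 ⊕ ℝ` with
`[(x,s),(y,t)] = ([x,y], ω(x,y))`, `ω = e^{i₀} ∧ e^{j₀}`, in the extended basis
`e₁, …, eₙ, e_{n+1}`. -/
def extC {n : ℕ} (c : Fin n → Fin n → Fin n → ℝ) (i₀ j₀ : Fin n) :
    Fin (n+1) → Fin (n+1) → Fin (n+1) → ℝ := fun i j k =>
  if hi : (i : ℕ) < n then
    if hj : (j : ℕ) < n then
      if hk : (k : ℕ) < n then c ⟨(i : ℕ), hi⟩ ⟨(j : ℕ), hj⟩ ⟨(k : ℕ), hk⟩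
      else if (i : ℕ) = (i₀ : ℕ) ∧ (j : ℕ) = (j₀ : ℕ) then 1
      else if (i : ℕ) = (j₀ : ℕ) ∧ (j : ℕ) = (i₀ : ℕ) then -1
      else 0
    else 0
  else 0

section Aux

variable {n : ℕ} {c : Fin n → Fin n → Fin n → ℝ} {i₀ j₀ : Fin n}

lemma rowsum {m : ℕ} (i j k : Fin m) (s : Fin m → ZMod 2) :
    ∑ h, rootRow2 i j k h * s h = s k - s i - s j := by
  simp only [rootRow2, rootRow]
  push_cast
  simp [sub_mul, ite_mul, Finset.sum_sub_distrib, Finset.sum_ite_eq]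

lemma extC_castSucc (i j k : Fin n) :
    extC c i₀ j₀ i.castSucc j.castSucc k.castSucc = c i j k := by
  simp [extC, i.isLt, j.isLt, k.isLt]

lemma extC_last_i (j k : Fin (n+1)) : extC c i₀ j₀ (Fin.last n) j k = 0 := by
  simp [extC]

lemma extC_last_j (i k : Fin (n+1)) : extC c i₀ j₀ i (Fin.last n) k = 0 := by
  simp [extC]

lemma extC_last_k (hne : i₀ ≠ j₀) (i j : Fin n) :
    extC c i₀ j₀ i.castSucc j.castSucc (Fin.last n) =
      (if i = i₀ then 1 else 0) * (if j = j₀ then 1 else 0)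
        - (if i = j₀ then 1 else 0) * (if j = i₀ then 1 else 0) := by
  simp only [extC, Fin.coe_castSucc, i.isLt, j.isLt, dif_pos, Fin.val_last, lt_irrefl,
    dif_neg, not_false_iff, Fin.val_eq_val]
  by_cases h1 : i = i₀ <;> by_cases h2 : j = j₀ <;> by_cases h3 : i = j₀ <;> by_cases h4 : j = i₀ <;>
    simp_all


lemma bracket_extC (hne : i₀ ≠ j₀) (x y : Fin (n+1) → ℝ) :
    bracket (extC c i₀ j₀) x y = Fin.snoc
      (bracket c (x ∘ Fin.castSucc) (y ∘ Fin.castSucc))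
      (x i₀.castSucc * y j₀.castSucc - x j₀.castSucc * y i₀.castSucc) := by
  funext k
  refine Fin.lastCases ?_ (fun k => ?_) k
  · rw [Fin.snoc_last]
    unfold bracket
    rw [Fin.sum_univ_castSucc]
    simp only [extC_last_i, mul_zero, Finset.sum_const_zero, add_zero]
    rw [show (∑ i : Fin n, ∑ j : Fin (n+1),
        x i.castSucc * y j * extC c i₀ j₀ i.castSucc j (Fin.last n)) =
      ∑ i : Fin n, ∑ j : Fin n,
        x i.castSucc * y j.castSucc * extC c i₀ j₀ i.castSucc j.castSucc (Fin.last n) from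
      Finset.sum_congr rfl fun i _ => by
        rw [Fin.sum_univ_castSucc]; simp [extC_last_j]]
    simp only [extC_last_k hne]
    simp [mul_sub, mul_ite, ite_mul, Finset.sum_sub_distrib, Finset.sum_ite_eq',
      Finset.mul_sum, mul_comm]
  · rw [Fin.snoc_castSucc]
    unfold bracket
    rw [Fin.sum_univ_castSucc]
    simp only [extC_last_i, mul_zero, Finset.sum_const_zero, add_zero]
    refine Finset.sum_congr rfl fun i _ => ?_
    rw [Fin.sum_univ_castSucc]
    simp [extC_last_j, extC_castSucc, Function.comp]

lemma bracket_zero_right (x : Fin n → ℝ) : bracket c x 0 = 0 := by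
  funext k; simp [bracket]

lemma foldr_restrict (hne : i₀ ≠ j₀) (l : List (Fin (n+1) → ℝ)) (w : Fin (n+1) → ℝ) :
    (l.foldr (bracket (extC c i₀ j₀)) w) ∘ Fin.castSucc =
      (l.map (· ∘ Fin.castSucc)).foldr (bracket c) (w ∘ Fin.castSucc) := by
  induction l with
  | nil => rfl
  | cons a l ih =>
    simp only [List.foldr_cons, List.map_cons, bracket_extC hne, ← ih]
    funext i
    simp [Fin.snoc_castSucc]

lemma ext_nilpotent (hne : i₀ ≠ j₀) (N : ℕ)
    (hN : ∀ (v : Fin N → Fin n → ℝ) (w : Fin n → ℝ), (List.ofFn v).foldr (bracket c) w = 0) :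
    ∀ (v : Fin (N+1) → Fin (n+1) → ℝ) (w : Fin (n+1) → ℝ),
      (List.ofFn v).foldr (bracket (extC c i₀ j₀)) w = 0 := by
  intro v w
  rw [List.ofFn_succ, List.foldr_cons]
  set r := (List.ofFn fun i => v i.succ).foldr (bracket (extC c i₀ j₀)) w with hr
  have hres : r ∘ Fin.castSucc = 0 := by
    rw [hr, foldr_restrict hne, List.map_ofFn]
    exact hN _ _
  rw [bracket_extC hne, hres, bracket_zero_right]
  funext k
  refine Fin.lastCases ?_ (fun k => ?_) k
  · have h1 : r i₀.castSucc = 0 := congrFun hres i₀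
    have h2 : r j₀.castSucc = 0 := congrFun hres j₀
    simp [Fin.snoc_last, h1, h2]
  · simp [Fin.snoc_castSucc]

lemma snoc_comp (f : Fin n → ℝ) (a : ℝ) :
    (Fin.snoc f a : Fin (n+1) → ℝ) ∘ Fin.castSucc = f :=
  funext fun i => by simp [Fin.snoc_castSucc]

lemma ext_jacobi (hne : i₀ ≠ j₀)
    (hjac : ∀ x y z : Fin n → ℝ,
      bracket c (bracket c x y) z + bracket c (bracket c y z) x + bracket c (bracket c z x) y = 0)
    (hclosed : ∀ x y z : Fin n → ℝ,
      (bracket c x y i₀ * z j₀ - bracket c x y j₀ * z i₀) +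
      (bracket c y z i₀ * x j₀ - bracket c y z j₀ * x i₀) +
      (bracket c z x i₀ * y j₀ - bracket c z x j₀ * y i₀) = 0) :
    ∀ x y z : Fin (n+1) → ℝ,
      bracket (extC c i₀ j₀) (bracket (extC c i₀ j₀) x y) z
      + bracket (extC c i₀ j₀) (bracket (extC c i₀ j₀) y z) x
      + bracket (extC c i₀ j₀) (bracket (extC c i₀ j₀) z x) y = 0 := by
  intro x y z
  rw [bracket_extC hne x y, bracket_extC hne y z, bracket_extC hne z x,
    bracket_extC hne, bracket_extC hne, bracket_extC hne]
  simp only [snoc_comp, Fin.snoc_castSucc]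
  funext k
  refine Fin.lastCases ?_ (fun k => ?_) k
  · simp only [Pi.add_apply, Fin.snoc_last, Pi.zero_apply]
    have := hclosed (x ∘ Fin.castSucc) (y ∘ Fin.castSucc) (z ∘ Fin.castSucc)
    simp only [Function.comp_apply] at this ⊢
    linarith
  · simp only [Pi.add_apply, Fin.snoc_castSucc, Pi.zero_apply]
    have := congrFun (hjac (x ∘ Fin.castSucc) (y ∘ Fin.castSucc) (z ∘ Fin.castSucc)) k
    simpa using this

lemma extC_ne_bounds {i j k : Fin (n+1)} (h : extC c i₀ j₀ i j k ≠ 0) :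
    (i : ℕ) < n ∧ (j : ℕ) < n := by
  constructor <;> by_contra hh
  · exact h (by simp [extC, hh])
  · apply h; unfold extC; split_ifs <;> simp_all

lemma extC_last_ne (hne : i₀ ≠ j₀) {i j : Fin n}
    (h : extC c i₀ j₀ i.castSucc j.castSucc (Fin.last n) ≠ 0) :
    (i = i₀ ∧ j = j₀) ∨ (i = j₀ ∧ j = i₀) := by
  rw [extC_last_k hne] at h
  by_cases h1 : i = i₀ <;> by_cases h2 : j = j₀ <;> by_cases h3 : i = j₀ <;>
    by_cases h4 : j = i₀ <;> simp_all

lemma ext_skew (hsk : ∀ i j k, c i j k = - c j i k) (hne : i₀ ≠ j₀) :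
    ∀ i j k, extC c i₀ j₀ i j k = - extC c i₀ j₀ j i k := by
  intro i j k
  have hne' : (i₀ : ℕ) ≠ (j₀ : ℕ) := fun h => hne (Fin.ext h)
  unfold extC
  split_ifs <;> try exact hsk _ _ _
  all_goals try norm_num
  all_goals omega

lemma c_pair_zero (hsk : ∀ i j k, c i j k = - c j i k) (hz : ∀ k, c i₀ j₀ k = 0)
    {i j : Fin n} (h : (i = i₀ ∧ j = j₀) ∨ (i = j₀ ∧ j = i₀)) (k : Fin n) : c i j k = 0 := by
  rcases h with ⟨e1, e2⟩ | ⟨e1, e2⟩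
  · rw [e1, e2]; exact hz k
  · rw [e1, e2, hsk]; simp [hz k]

lemma ext_nice_k (hsk : ∀ i j k, c i j k = - c j i k) (hz : ∀ k, c i₀ j₀ k = 0)
    (hne : i₀ ≠ j₀) (hk' : ∀ i j k k', c i j k ≠ 0 → c i j k' ≠ 0 → k = k') :
    ∀ i j k k', extC c i₀ j₀ i j k ≠ 0 → extC c i₀ j₀ i j k' ≠ 0 → k = k' := by
  intro i j k k' h1 h2
  obtain ⟨hi, hj⟩ := extC_ne_bounds h1
  have hii : i = Fin.castSucc ⟨i, hi⟩ := Fin.ext rfl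
  have hjj : j = Fin.castSucc ⟨j, hj⟩ := Fin.ext rfl
  rw [hii, hjj] at h1 h2
  by_cases hkn : (k : ℕ) < n <;> by_cases hkn' : (k' : ℕ) < n
  · rw [show k = Fin.castSucc ⟨k, hkn⟩ from Fin.ext rfl, extC_castSucc] at h1
    rw [show k' = Fin.castSucc ⟨k', hkn'⟩ from Fin.ext rfl, extC_castSucc] at h2
    have h3 := hk' _ _ _ _ h1 h2
    simp only [Fin.mk.injEq] at h3
    exact Fin.ext h3
  · exfalso
    rw [show k' = Fin.last n from Fin.ext (by simpa using by omega)] at h2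
    rw [show k = Fin.castSucc ⟨k, hkn⟩ from Fin.ext rfl, extC_castSucc] at h1
    exact h1 (c_pair_zero hsk hz (extC_last_ne hne h2) _)
  · exfalso
    rw [show k = Fin.last n from Fin.ext (by simpa using by omega)] at h1
    rw [show k' = Fin.castSucc ⟨k', hkn'⟩ from Fin.ext rfl, extC_castSucc] at h2
    exact h2 (c_pair_zero hsk hz (extC_last_ne hne h1) _)
  · exact Fin.ext (by omega)

lemma ext_nice_j (hne : i₀ ≠ j₀)
    (hj' : ∀ i j j' k, c i j k ≠ 0 → c i j' k ≠ 0 → j = j') :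
    ∀ i j j' k, extC c i₀ j₀ i j k ≠ 0 → extC c i₀ j₀ i j' k ≠ 0 → j = j' := by
  intro i j j' k h1 h2
  obtain ⟨hi, hj⟩ := extC_ne_bounds h1
  obtain ⟨-, hj2⟩ := extC_ne_bounds h2
  have hii : i = Fin.castSucc ⟨i, hi⟩ := Fin.ext rfl
  have hjj : j = Fin.castSucc ⟨j, hj⟩ := Fin.ext rfl
  have hjj' : j' = Fin.castSucc ⟨j', hj2⟩ := Fin.ext rfl
  rw [hii, hjj] at h1
  rw [hii, hjj'] at h2
  by_cases hkn : (k : ℕ) < n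
  · rw [show k = Fin.castSucc ⟨k, hkn⟩ from Fin.ext rfl, extC_castSucc] at h1 h2
    have h3 := hj' _ _ _ _ h1 h2
    simp only [Fin.mk.injEq] at h3
    exact Fin.ext h3
  · rw [show k = Fin.last n from Fin.ext (by simpa using by omega)] at h1 h2
    rcases extC_last_ne hne h1 with ⟨e1, e2⟩ | ⟨e1, e2⟩ <;>
      rcases extC_last_ne hne h2 with ⟨f1, f2⟩ | ⟨f1, f2⟩
    · have h3 := e2.trans f2.symm; simp only [Fin.mk.injEq] at h3; exact Fin.ext h3
    · exact absurd (e1.symm.trans f1) hne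
    · exact absurd (f1.symm.trans e1) hne
    · have h3 := e2.trans f2.symm; simp only [Fin.mk.injEq] at h3; exact Fin.ext h3


end Aux

/-- One-bracket central extensions of nice nilpotent Lie algebras of surjective type:
if `[e_{i₀}, e_{j₀}] = 0` and the 2-form `ω = e^{i₀} ∧ e^{j₀}` is closed, the central
extension by `ω` is nilpotent, the extended basis is nice, and the new mod 2 root
matrix is again surjective. -/
theorem one_bracket_extension_surjective_type
    (n : ℕ) (c : Fin n → Fin n → Fin n → ℝ) (hc : IsNiceNilpotent c)
    (hsurj : SurjectiveType c)
    (i₀ j₀ : Fin n) (hlt : i₀ < j₀)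
    (hzero : ∀ k, c i₀ j₀ k = 0)
    (hclosed : ∀ x y z : Fin n → ℝ,
      (bracket c x y i₀ * z j₀ - bracket c x y j₀ * z i₀) +
      (bracket c y z i₀ * x j₀ - bracket c y z j₀ * x i₀) +
      (bracket c z x i₀ * y j₀ - bracket c z x j₀ * y i₀) = 0) :
    IsNiceNilpotent (extC c i₀ j₀) ∧ SurjectiveType (extC c i₀ j₀) := by
  have hne : i₀ ≠ j₀ := ne_of_lt hlt
  constructor
  · refine ⟨ext_skew hc.skew hne, ext_jacobi hne hc.jacobi hclosed, ?_,
      ext_nice_k hc.skew hzero hne hc.nice_k, ext_nice_j hne hc.nice_j⟩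
    obtain ⟨N, hN⟩ := hc.nilpotent
    exact ⟨N + 1, ext_nilpotent hne N hN⟩
  · intro y
    obtain ⟨s₀, hs₀⟩ := hsurj (fun i j k => y i.castSucc j.castSucc k.castSucc)
    refine ⟨Fin.snoc s₀ (y i₀.castSucc j₀.castSucc (Fin.last n) + s₀ i₀ + s₀ j₀), ?_⟩
    intro i j k hij hne'
    rw [rowsum]
    obtain ⟨hi, hj⟩ := extC_ne_bounds hne'
    have hii : i = Fin.castSucc ⟨i, hi⟩ := Fin.ext rfl
    have hjj : j = Fin.castSucc ⟨j, hj⟩ := Fin.ext rfl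
    rw [hii, hjj] at hne' ⊢
    by_cases hk : (k : ℕ) < n
    · rw [show k = Fin.castSucc ⟨k, hk⟩ from Fin.ext rfl] at hne' ⊢
      rw [extC_castSucc] at hne'
      have hlt' : (⟨i, hi⟩ : Fin n) < ⟨j, hj⟩ := Fin.mk_lt_mk.mpr hij
      have := hs₀ ⟨i, hi⟩ ⟨j, hj⟩ ⟨k, hk⟩ hlt' hne'
      rw [rowsum] at this
      rw [Fin.snoc_castSucc, Fin.snoc_castSucc, Fin.snoc_castSucc]
      exact this
    · rw [show k = Fin.last n from Fin.ext (by simpa using by omega)] at hne' ⊢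
      rcases extC_last_ne hne hne' with ⟨e1, e2⟩ | ⟨e1, e2⟩
      · rw [e1, e2]
        simp only [Fin.snoc_last, Fin.snoc_castSucc]
        ring
      · exfalso
        have h1 : (i : ℕ) = (j₀ : ℕ) := congrArg Fin.val e1
        have h2 : (j : ℕ) = (i₀ : ℕ) := congrArg Fin.val e2
        have : (i : ℕ) < (j : ℕ) := hij
        have : (i₀ : ℕ) < (j₀ : ℕ) := hlt
        omega
end

section
/- Let M be an m×n matrix with integer entries whose reduction modulo 2 is surjective as a linear map (ℤ/2)ⁿ → (ℤ/2)^m. Then the multiplicative map F : (ℝ*)ⁿ → (ℝ*)^m defined by F(g)_I = ∏_{j=1}^{n} g_j^{M_{Ij}} (integer powers of nonzero reals) is surjective. -/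
open scoped BigOperators

private lemma exp_zpow_aux (x : ℝ) (k : ℤ) : Real.exp x ^ k = Real.exp (k * x) := by
  rw [← Real.rpow_intCast, Real.rpow_def_of_pos (Real.exp_pos x), Real.log_exp, mul_comm]

private lemma zpow_sum_aux {ι : Type*} (s : Finset ι) (f : ι → ℤ) (x : ℝ) (hx : x ≠ 0) :
    x ^ (∑ i ∈ s, f i) = ∏ i ∈ s, x ^ f i := by
  induction s using Finset.cons_induction with
  | empty => simp
  | cons a s ha ih => rw [Finset.sum_cons, Finset.prod_cons, zpow_add₀ hx, ih]

/-- If the mod 2 reduction of an integer matrix `M` is surjective, then the multiplicative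
map `F : (ℝ*)ⁿ → (ℝ*)^m`, `F(g)_I = ∏ⱼ gⱼ ^ M_{Ij}`, is surjective. -/
theorem multiplicative_map_surjective_of_mod_two_surjective
    (m n : ℕ) (M : Matrix (Fin m) (Fin n) ℤ)
    (h2 : Function.Surjective fun s : Fin n → ZMod 2 =>
      (M.map ((↑) : ℤ → ZMod 2)).mulVec s) :
    ∀ y : Fin m → ℝ, (∀ I, y I ≠ 0) →
      ∃ g : Fin n → ℝ, (∀ j, g j ≠ 0) ∧ ∀ I, (∏ j, g j ^ M I j) = y I := by
  intro y hy
  choose s hs using fun K : Fin m => h2 (Pi.single K 1)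
  set u : Fin m → Fin n → ℤ := fun K j => ((s K j).val : ℤ) with hu
  have hucast : ∀ K j, ((u K j : ZMod 2)) = s K j := by
    intro K j
    rw [hu]
    push_cast
    exact ZMod.natCast_rightInverse (s K j)
  set A : Matrix (Fin m) (Fin m) ℤ := Matrix.of (fun K I => ∑ j, M I j * u K j) with hA
  have hAmod : ∀ K I, ((A K I : ZMod 2)) = if I = K then 1 else 0 := by
    intro K I
    have h := congrFun (hs K) I
    simp only [Matrix.mulVec, dotProduct, Matrix.map_apply] at h
    rw [hA]
    simp only [Matrix.of_apply]
    push_cast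
    simp only [hucast]
    rw [h, Pi.single_apply]
  have hodd : ∀ I, Odd (A I I) := by
    intro I
    have h1 : ((A I I : ZMod 2)) = 1 := by rw [hAmod]; simp
    have hnd : ¬ (2:ℤ) ∣ A I I := by
      intro hd
      have h0 : ((A I I : ZMod 2)) = 0 :=
        (ZMod.intCast_zmod_eq_zero_iff_dvd _ 2).mpr (by exact_mod_cast hd)
      rw [h1] at h0
      exact one_ne_zero h0
    rw [Int.odd_iff]
    omega
  have heven : ∀ K I, I ≠ K → Even (A K I) := by
    intro K I hne
    have h0 : ((A K I : ZMod 2)) = 0 := by rw [hAmod]; simp [hne]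
    have hd : (2:ℤ) ∣ A K I := by
      have := (ZMod.intCast_zmod_eq_zero_iff_dvd (A K I) 2).mp h0
      exact_mod_cast this
    rw [Int.even_iff]
    omega
  have hdet1 : ((A.det : ZMod 2)) = 1 := by
    have hmap : (Int.castRingHom (ZMod 2)).mapMatrix A = 1 := by
      ext K I
      simp only [RingHom.mapMatrix_apply, Matrix.map_apply, Int.coe_castRingHom]
      rw [hAmod K I, Matrix.one_apply]
      by_cases h : K = I <;> simp [h, eq_comm]
    calc ((A.det : ZMod 2)) = (Int.castRingHom (ZMod 2)) A.det := rfl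
      _ = ((Int.castRingHom (ZMod 2)).mapMatrix A).det := RingHom.map_det _ _
      _ = 1 := by rw [hmap, Matrix.det_one]
  have hdetA : A.det ≠ 0 := by
    intro h0
    rw [h0] at hdet1
    simp at hdet1
  set B : Matrix (Fin m) (Fin m) ℝ := (A.transpose).map ((↑) : ℤ → ℝ) with hB
  have hBdet : IsUnit B.det := by
    have hBA : B.det = (A.det : ℝ) := by
      calc B.det = ((Int.castRingHom ℝ).mapMatrix A.transpose).det := rfl
        _ = (Int.castRingHom ℝ) A.transpose.det := (RingHom.map_det _ _).symm
        _ = (A.det : ℝ) := by rw [Matrix.det_transpose]; rfl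
    rw [hBA]
    exact isUnit_iff_ne_zero.mpr (by exact_mod_cast hdetA)
  set L : Fin m → ℝ := fun I => Real.log |y I| with hL
  set t : Fin m → ℝ := B⁻¹.mulVec L with ht
  have hBt : B.mulVec t = L := by
    rw [ht, Matrix.mulVec_mulVec, Matrix.mul_nonsing_inv B hBdet, Matrix.one_mulVec]
  set ε : Fin m → ℝ := fun K => if y K < 0 then -1 else 1 with hε
  have hε1 : ∀ K, ε K ≠ 0 := by
    intro K
    rw [hε]
    dsimp only
    split <;> norm_num
  set x : Fin m → ℝ := fun K => ε K * Real.exp (t K) with hx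
  have hx0 : ∀ K, x K ≠ 0 := fun K => mul_ne_zero (hε1 K) (Real.exp_pos _).ne'
  refine ⟨fun j => ∏ K, x K ^ u K j, ?_, ?_⟩
  · intro j
    exact Finset.prod_ne_zero_iff.mpr fun K _ => zpow_ne_zero _ (hx0 K)
  · intro I
    have hεpow : ∀ K, ε K ^ A K I = if K = I then ε I else 1 := by
      intro K
      by_cases hKI : K = I
      · subst hKI
        rw [if_pos rfl, hε]
        dsimp only
        split
        · exact (hodd K).neg_one_zpow
        · exact one_zpow _
      · rw [if_neg hKI]
        have hev := heven K I (fun h => hKI h.symm)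
        rw [hε]
        dsimp only
        split
        · exact hev.neg_one_zpow
        · exact one_zpow _
    have hexp : ∑ K, (A K I : ℝ) * t K = Real.log |y I| := by
      have := congrFun hBt I
      simp only [Matrix.mulVec, dotProduct, hB, Matrix.map_apply,
        Matrix.transpose_apply, hL] at this
      exact this
    calc (∏ j, (∏ K, x K ^ u K j) ^ M I j)
        = ∏ j, ∏ K, x K ^ (u K j * M I j) := by
          refine Finset.prod_congr rfl fun j _ => ?_
          rw [← Finset.prod_zpow]
          exact Finset.prod_congr rfl fun K _ => (zpow_mul _ _ _).symm
      _ = ∏ K, ∏ j, x K ^ (u K j * M I j) := Finset.prod_comm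
      _ = ∏ K, x K ^ (A K I) := by
          refine Finset.prod_congr rfl fun K _ => ?_
          rw [← zpow_sum_aux _ _ _ (hx0 K)]
          congr 1
          rw [hA]
          simp only [Matrix.of_apply]
          exact Finset.sum_congr rfl fun j _ => mul_comm _ _
      _ = ∏ K, (ε K ^ A K I * Real.exp (t K) ^ A K I) := by
          refine Finset.prod_congr rfl fun K _ => ?_
          rw [hx]
          exact mul_zpow _ _ _
      _ = (∏ K, ε K ^ A K I) * ∏ K, Real.exp (t K) ^ A K I := Finset.prod_mul_distrib
      _ = ε I * |y I| := by
          congr 1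
          · rw [Finset.prod_congr rfl fun K _ => hεpow K]
            simp
          · calc (∏ K, Real.exp (t K) ^ A K I)
                = ∏ K, Real.exp ((A K I : ℝ) * t K) :=
                  Finset.prod_congr rfl fun K _ => exp_zpow_aux _ _
              _ = Real.exp (∑ K, (A K I : ℝ) * t K) := (Real.exp_sum _ _).symm
              _ = |y I| := by rw [hexp, Real.exp_log (abs_pos.mpr (hy I))]
      _ = y I := by
          rw [hε]
          dsimp only
          rcases lt_or_gt_of_ne (hy I) with h | h
          · rw [if_pos h, abs_of_neg h]; ring
          · rw [if_neg (not_lt.mpr h.le), abs_of_pos h, one_mul]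
end

section
/- Let M be an m×n matrix with integer entries and let g, h ∈ (ℝ*)ⁿ satisfy ∏_{j=1}^{n} g_j^{M_{Ij}} = ∏_{j=1}^{n} h_j^{M_{Ij}} for every row index I. Then there exist ε ∈ {±1}ⁿ whose associated vector s ∈ (ℤ/2)ⁿ (s_j = 0 if ε_j = 1, s_j = 1 if ε_j = −1) lies in the kernel of M modulo 2, and t ∈ ℝⁿ with M t = 0 (over ℝ), such that h_i = ε_i e^{t_i} g_i for all i. In particular, on a nice nilpotent Lie algebra any two σ-diagonal metrics determining the same vector X in the characterization of Einstein metrics lie in the same orbit under the group G_σ × H of sign changes and diagonal automorphisms. -/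
open scoped BigOperators

lemma neg_one_zpow_sum {n : ℕ} (f : Fin n → ℤ) :
    (∏ j, (-1 : ℝ) ^ f j) = (-1 : ℝ) ^ (∑ j, f j) := by
  induction n with
  | zero => simp
  | succ k ih =>
    rw [Fin.prod_univ_succ, Fin.sum_univ_succ, ih fun j => f j.succ,
      zpow_add₀ (by norm_num : (-1 : ℝ) ≠ 0)]

lemma exp_zpow (t : ℝ) (k : ℤ) : Real.exp t ^ k = Real.exp (k * t) := by
  rw [mul_comm, Real.exp_mul, Real.rpow_intCast]

/-- If `g, h ∈ (ℝ*)ⁿ` have the same image under the multiplicative map determined by an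
integer matrix `M`, then `h_i = ε_i e^{t_i} g_i` for a sign vector `ε` whose associated
mod 2 vector lies in the kernel of `M` mod 2 and a real vector `t` with `M t = 0`. -/
theorem same_image_iff_sign_and_exp
    (m n : ℕ) (M : Matrix (Fin m) (Fin n) ℤ)
    (g h : Fin n → ℝ) (hg : ∀ j, g j ≠ 0) (hh : ∀ j, h j ≠ 0)
    (heq : ∀ I, (∏ j, g j ^ M I j) = ∏ j, h j ^ M I j) :
    ∃ (ε : Fin n → ℝ) (s : Fin n → ZMod 2) (t : Fin n → ℝ),
      (∀ j, (ε j = 1 ∧ s j = 0) ∨ (ε j = -1 ∧ s j = 1)) ∧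
      (∀ I, (∑ j, (M I j : ZMod 2) * s j) = 0) ∧
      (∀ I, (∑ j, (M I j : ℝ) * t j) = 0) ∧
      (∀ i, h i = ε i * Real.exp (t i) * g i) := by
  set r : Fin n → ℝ := fun j => h j / g j with hr_def
  have hr : ∀ j, r j ≠ 0 := fun j => div_ne_zero (hh j) (hg j)
  have hgr : ∀ j, h j = g j * r j := fun j => by
    rw [hr_def, mul_comm, div_mul_cancel₀ _ (hg j)]
  -- the product of r^M is 1
  have hprod : ∀ I, (∏ j, r j ^ M I j) = 1 := by
    intro I
    have h1 : (∏ j, h j ^ M I j) = (∏ j, g j ^ M I j) * ∏ j, r j ^ M I j := by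
      rw [← Finset.prod_mul_distrib]
      exact Finset.prod_congr rfl fun j _ => by rw [← mul_zpow, ← hgr j]
    have h2 : (∏ j, g j ^ M I j) ≠ 0 :=
      Finset.prod_ne_zero_iff.mpr fun j _ => zpow_ne_zero _ (hg j)
    have := (heq I).trans h1
    nth_rewrite 1 [← mul_one (∏ j, g j ^ M I j)] at this
    exact (mul_left_cancel₀ h2 this).symm
  set t : Fin n → ℝ := fun j => Real.log |r j| with ht_def
  have habs : ∀ j, |r j| = Real.exp (t j) := fun j =>
    (Real.exp_log (abs_pos.mpr (hr j))).symm
  -- the product of |r|^M is 1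
  have habsprod : ∀ I, (∏ j, |r j| ^ M I j) = 1 := by
    intro I
    have : |∏ j, r j ^ M I j| = ∏ j, |r j| ^ M I j := by
      rw [Finset.abs_prod]
      exact Finset.prod_congr rfl fun j _ => map_zpow₀ (absHom : ℝ →*₀ ℝ) _ _
    rw [← this, hprod I, abs_one]
  -- t is in the kernel
  have hker_t : ∀ I, (∑ j, (M I j : ℝ) * t j) = 0 := by
    intro I
    have : Real.exp (∑ j, (M I j : ℝ) * t j) = Real.exp 0 := by
      rw [Real.exp_sum, Real.exp_zero]
      rw [← habsprod I]
      exact Finset.prod_congr rfl fun j _ => by rw [habs j, exp_zpow]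
    exact Real.exp_injective this
  set sInt : Fin n → ℤ := fun j => if 0 < r j then 0 else 1 with hs_def
  set ε : Fin n → ℝ := fun j => (-1 : ℝ) ^ sInt j with hε_def
  have hεval : ∀ j, ε j = if 0 < r j then 1 else -1 := by
    intro j
    simp only [hε_def, hs_def]
    split <;> simp
  have hrε : ∀ j, r j = ε j * |r j| := by
    intro j
    rw [hεval j]
    rcases (hr j).lt_or_gt with hlt | hlt
    · rw [if_neg (not_lt.mpr hlt.le), abs_of_neg hlt]; ring
    · rw [if_pos hlt, abs_of_pos hlt, one_mul]
  -- product of signs is 1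
  have hsignprod : ∀ I, (∏ j, ε j ^ M I j) = 1 := by
    intro I
    have h1 : (∏ j, r j ^ M I j) = (∏ j, ε j ^ M I j) * ∏ j, |r j| ^ M I j := by
      rw [← Finset.prod_mul_distrib]
      exact Finset.prod_congr rfl fun j _ => by rw [← mul_zpow, ← hrε j]
    rw [hprod I, habsprod I, mul_one] at h1
    exact h1.symm
  -- parity
  have hker_s : ∀ I, Even (∑ j, M I j * sInt j) := by
    intro I
    have h1 : (∏ j, ε j ^ M I j) = (-1 : ℝ) ^ (∑ j, M I j * sInt j) := by
      rw [← neg_one_zpow_sum]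
      refine Finset.prod_congr rfl fun j _ => ?_
      rw [hε_def]
      simp only
      rw [← zpow_mul, mul_comm]
    rw [hsignprod I] at h1
    rcases Int.even_or_odd (∑ j, M I j * sInt j) with he | ho
    · exact he
    · exfalso
      rw [ho.neg_one_zpow] at h1
      norm_num at h1
  refine ⟨ε, fun j => ((sInt j : ℤ) : ZMod 2), t, ?_, ?_, hker_t, ?_⟩
  · intro j
    rw [hεval j]
    simp only [hs_def]
    split <;> simp
  · intro I
    have h2 : ((∑ j, M I j * sInt j : ℤ) : ZMod 2) = 0 := by
      obtain ⟨k, hk⟩ := hker_s I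
      rw [hk]
      push_cast
      rw [← two_mul]
      simp
      left
      decide
    rw [← h2]
    push_cast
    rfl
  · intro i
    rw [hgr i, hrε i, habs i]
    ring
end

section
/- Let M be an m×n real matrix each of whose rows sums to −1 (as is the case for the root matrix of a nice nilpotent Lie algebra, whose rows are −eⁱ−eʲ+eᵏ with i, j, k distinct). If X ∈ ℝ^m satisfies Mᵀ X = (1,…,1) ∈ ℝⁿ, then ∑_{I} x_I = −n; in particular, X cannot have all entries positive. Consequently, no nonabelian nice nilpotent Lie algebra admits a positive-definite diagonal metric satisfying condition (E). -/
open scoped BigOperators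

/-- If every row of `M` sums to `−1` and `Mᵀ X = (1,…,1)`, then `∑ x_I = −n`, so `X`
cannot have all entries positive; consequently no nonabelian nice nilpotent Lie algebra
admits a positive-definite diagonal metric satisfying (E) `ric = ½ id`. -/
theorem no_positive_solution_and_no_riemannian_einstein
    (m n : ℕ) (M : Matrix (Fin m) (Fin n) ℝ)
    (hrow : ∀ I, (∑ j, M I j) = -1)
    (X : Fin m → ℝ) (hX : ∀ j, (∑ I, M I j * X I) = 1) :
    ((∑ I, X I) = -(n : ℝ) ∧ (0 < n → ¬ ∀ I, 0 < X I)) ∧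
    (∀ (n' : ℕ) (c : Fin n' → Fin n' → Fin n' → ℝ), IsNiceNilpotent c →
      (∃ i j k : Fin n', c i j k ≠ 0) →
      ¬ ∃ gv : Fin n' → ℝ, (∀ i, 0 < gv i) ∧ EinsteinE c (Matrix.diagonal gv)) := by
  constructor
  · -- linear algebra part
    have h1 : ∑ I, (∑ j, M I j) * X I = (n : ℝ) := by
      calc ∑ I, (∑ j, M I j) * X I = ∑ I, ∑ j, M I j * X I := by
            simp_rw [Finset.sum_mul]
        _ = ∑ j, ∑ I, M I j * X I := Finset.sum_comm
        _ = ∑ _j : Fin n, (1 : ℝ) := by simp [hX]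
        _ = n := by simp
    simp_rw [hrow, neg_one_mul, Finset.sum_neg_distrib] at h1
    have hsum : (∑ I, X I) = -(n : ℝ) := by linarith
    refine ⟨hsum, fun hn hpos => ?_⟩
    have h2 : (0 : ℝ) ≤ ∑ I, X I := Finset.sum_nonneg fun I _ => (hpos I).le
    have h3 : (0 : ℝ) < n := by exact_mod_cast hn
    linarith
  · -- Lie algebra part
    rintro n' c _hnice ⟨i0, j0, k0, hc0⟩ ⟨gv, hgv, hE⟩
    have hn' : 0 < n' := i0.pos
    have hgv0 : ∀ i, gv i ≠ 0 := fun i => (hgv i).ne'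
    have hinv : (Matrix.diagonal gv)⁻¹ = Matrix.diagonal (fun i => (gv i)⁻¹) := by
      apply Matrix.inv_eq_right_inv
      rw [Matrix.diagonal_mul_diagonal]
      have : (fun i => gv i * (gv i)⁻¹) = fun _ => (1 : ℝ) := by
        funext i; exact mul_inv_cancel₀ (hgv0 i)
      rw [this, Matrix.diagonal_one]
    -- diagonal entries of Ric
    have hdiag : ∀ k, Ric c (Matrix.diagonal gv) k k =
        (1/4 : ℝ) * (∑ i, ∑ l, (gv i)⁻¹ * (gv l)⁻¹ * gv k * c i l k * c i l k)
      - (1/2 : ℝ) * (∑ j, ∑ i, (gv k)⁻¹ * (gv j)⁻¹ * gv i * c k j i * c k j i) := by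
      intro k
      simp only [Ric, hinv, Matrix.of_apply, Matrix.diagonal_apply]
      simp [Finset.sum_ite_eq, Finset.mul_sum, ite_mul, mul_ite]
    have hE' : ∀ k, Ric c (Matrix.diagonal gv) k k = 1/2 := by
      intro k
      have := congrFun (congrFun hE k) k
      simpa [Matrix.one_apply] using this
    set S : ℝ := ∑ a, ∑ b, ∑ d, (gv a)⁻¹ * (gv b)⁻¹ * gv d * c a b d * c a b d with hS
    have hfirst : (∑ k, ∑ i, ∑ l, (gv i)⁻¹ * (gv l)⁻¹ * gv k * c i l k * c i l k) = S := by
      rw [hS, Finset.sum_comm]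
      refine Finset.sum_congr rfl fun a _ => Finset.sum_comm
    have hsecond : (∑ k, ∑ j, ∑ i, (gv k)⁻¹ * (gv j)⁻¹ * gv i * c k j i * c k j i) = S := rfl
    have htr : (∑ k, Ric c (Matrix.diagonal gv) k k) = (1/4 : ℝ) * S - (1/2 : ℝ) * S := by
      simp_rw [hdiag]
      rw [Finset.sum_sub_distrib, ← Finset.mul_sum, ← Finset.mul_sum, hfirst, hsecond]
    have htr' : (∑ k, Ric c (Matrix.diagonal gv) k k) = (n' : ℝ) / 2 := by
      simp [hE']
      ring
    have hSpos : 0 ≤ S := by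
      refine Finset.sum_nonneg fun a _ => Finset.sum_nonneg fun b _ =>
        Finset.sum_nonneg fun d _ => ?_
      have h1 : 0 ≤ (gv a)⁻¹ * (gv b)⁻¹ * gv d :=
        mul_nonneg (mul_nonneg (inv_nonneg.mpr (hgv a).le) (inv_nonneg.mpr (hgv b).le)) (hgv d).le
      nlinarith [sq_nonneg (c a b d)]
    have hn'' : (0 : ℝ) < n' := by exact_mod_cast hn'
    rw [htr] at htr'
    linarith
end
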